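/- arXiv:1704.02237 — 11 statements merged into one kernel-verified Lean document; each statement's English description precedes it below -/
import Mathlib

section
/- Let k ≥ 1 and let F be a finite simple graph with at most k vertices. If a finite simple graph G has the k-extension property, then G contains F as an induced subgraph. -/
/-- A graph `G` has the `k`-extension property if for every two disjoint finite sets
`X`, `Y` of vertices with `|X ∪ Y| < k` there is a vertex `z ∉ X ∪ Y` adjacent to
every vertex of `X` and to no vertex of `Y`. -/
def HasExtensionProperty {V : Type} (G : SimpleGraph V) (k : ℕ) : Prop :=
  ∀ X Y : Finset V, Disjoint X Y → X.card + Y.card < k →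
    ∃ z : V, z ∉ X ∧ z ∉ Y ∧ (∀ x ∈ X, G.Adj z x) ∧ (∀ y ∈ Y, ¬ G.Adj z y)

theorem extension_property_forces_induced_subgraph
    {VF VG : Type} [Fintype VF] [Fintype VG]
    (k : ℕ) (hk : 1 ≤ k)
    (F : SimpleGraph VF) (G : SimpleGraph VG)
    (hF : Fintype.card VF ≤ k)
    (hG : HasExtensionProperty G k) :
    Nonempty (F ↪g G) := by
  classical
  -- get a default vertex of VG
  obtain ⟨z0, -, -, -, -⟩ := hG ∅ ∅ (by simp) (by simp; omega)
  have key : ∀ S : Finset VF, S.card ≤ k →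
      ∃ f : VF → VG, Set.InjOn f S ∧
        ∀ a ∈ S, ∀ b ∈ S, (G.Adj (f a) (f b) ↔ F.Adj a b) := by
    intro S
    induction S using Finset.induction with
    | empty =>
      intro _
      exact ⟨fun _ => z0, by simp [Set.InjOn], by simp⟩
    | @insert a S ha ih =>
      intro hcard
      rw [Finset.card_insert_of_notMem ha] at hcard
      obtain ⟨f, hinj, hadj⟩ := ih (by omega)
      set X : Finset VG := (S.filter (fun b => F.Adj a b)).image f with hX
      set Y : Finset VG := (S.filter (fun b => ¬ F.Adj a b)).image f with hY
      have hdisj : Disjoint X Y := by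
        rw [Finset.disjoint_left]
        rintro v hvX hvY
        simp only [hX, hY, Finset.mem_image, Finset.mem_filter] at hvX hvY
        obtain ⟨x, ⟨hxS, hxA⟩, hxv⟩ := hvX
        obtain ⟨y, ⟨hyS, hyA⟩, hyv⟩ := hvY
        have := hinj hxS hyS (hxv.trans hyv.symm)
        exact hyA (this ▸ hxA)
      have hcardXY : X.card + Y.card < k := by
        have h1 : X.card ≤ (S.filter (fun b => F.Adj a b)).card := Finset.card_image_le
        have h2 : Y.card ≤ (S.filter (fun b => ¬ F.Adj a b)).card := Finset.card_image_le
        have h3 := Finset.card_filter_add_card_filter_not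
          (s := S) (p := fun b => F.Adj a b)
        omega
      obtain ⟨z, hzX, hzY, hzadj, hznadj⟩ := hG X Y hdisj hcardXY
      have hzne : ∀ b ∈ S, z ≠ f b := by
        intro b hb hzb
        by_cases hab : F.Adj a b
        · exact hzX (hzb ▸ Finset.mem_image_of_mem f (Finset.mem_filter.2 ⟨hb, hab⟩))
        · exact hzY (hzb ▸ Finset.mem_image_of_mem f (Finset.mem_filter.2 ⟨hb, hab⟩))
      refine ⟨Function.update f a z, ?_, ?_⟩
      · intro x hx y hy hxy
        simp only [Finset.coe_insert, Set.mem_insert_iff, Finset.mem_coe] at hx hy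
        rcases hx with rfl | hx
        · rcases hy with rfl | hy
          · rfl
          · rw [Function.update_self, Function.update_of_ne (by rintro rfl; exact ha hy)] at hxy
            exact absurd hxy (hzne y hy)
        · rcases hy with rfl | hy
          · rw [Function.update_self, Function.update_of_ne (by rintro rfl; exact ha hx)] at hxy
            exact absurd hxy.symm (hzne x hx)
          · rw [Function.update_of_ne (by rintro rfl; exact ha hx),
              Function.update_of_ne (by rintro rfl; exact ha hy)] at hxy
            exact hinj hx hy hxy
      · intro x hx y hy
        simp only [Finset.mem_insert] at hx hy
        have hGz : ∀ b ∈ S, (G.Adj z (f b) ↔ F.Adj a b) := by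
          intro b hb
          by_cases hab : F.Adj a b
          · exact iff_of_true (hzadj _ (Finset.mem_image_of_mem f
              (Finset.mem_filter.2 ⟨hb, hab⟩))) hab
          · exact iff_of_false (hznadj _ (Finset.mem_image_of_mem f
              (Finset.mem_filter.2 ⟨hb, hab⟩))) hab
        rcases hx with rfl | hx
        · rcases hy with rfl | hy
          · simp
          · rw [Function.update_self, Function.update_of_ne (by rintro rfl; exact ha hy)]
            exact hGz y hy
        · rcases hy with rfl | hy
          · rw [Function.update_self, Function.update_of_ne (by rintro rfl; exact ha hx)]
            rw [G.adj_comm, F.adj_comm]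
            exact hGz x hx
          · rw [Function.update_of_ne (by rintro rfl; exact ha hx),
              Function.update_of_ne (by rintro rfl; exact ha hy)]
            exact hadj x hx y hy
  obtain ⟨f, hinj, hadj⟩ := key Finset.univ (by simpa [Finset.card_univ] using hF)
  exact ⟨⟨⟨f, fun x y h => hinj (by simp) (by simp) h⟩,
    fun {x y} => hadj x (by simp) y (by simp)⟩⟩
end

section
/- For all positive integers k and ℓ, there exists a finite simple graph G that has the k-extension property and contains every finite simple graph on ℓ vertices as an induced subgraph. -/
namespace ECProof

open Finset
open scoped Classical

set_option maxHeartbeats 1600000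

/-- The graph on `Fin n` determined by an adjacency function on ordered pairs. -/
def gr (n : ℕ) (f : Fin n → Fin n → Bool) : SimpleGraph (Fin n) where
  Adj i j := i ≠ j ∧ f (min i j) (max i j) = true
  symm := by
    refine ⟨?_⟩; rintro i j ⟨h1, h2⟩
    exact ⟨h1.symm, by rwa [min_comm, max_comm]⟩
  loopless := by refine ⟨?_⟩; rintro i ⟨h, -⟩; exact h rfl

lemma minmax_inj {α : Type*} [LinearOrder α] {W : Finset α} {a b c d : α}
    (ha : a ∉ W) (hb : b ∈ W) (hc : c ∉ W) (hd : d ∈ W)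
    (h1 : min a b = min c d) (h2 : max a b = max c d) : a = c ∧ b = d := by
  rcases le_total a b with h | h <;> rcases le_total c d with h' | h'
  · rw [min_eq_left h, min_eq_left h'] at h1
    rw [max_eq_right h, max_eq_right h'] at h2
    exact ⟨h1, h2⟩
  · rw [min_eq_left h, min_eq_right h'] at h1
    exact absurd (h1 ▸ hd) ha
  · rw [min_eq_right h, min_eq_left h'] at h1
    exact absurd (h1.symm ▸ hb) hc
  · rw [min_eq_right h, min_eq_right h'] at h1
    rw [max_eq_left h, max_eq_left h'] at h2
    exact ⟨h2, h1⟩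

/-- The set of adjacency functions whose graph has no witness for the pair `(X, Y)`. -/
noncomputable def bad (n : ℕ) (X Y : Finset (Fin n)) : Finset (Fin n → Fin n → Bool) :=
  univ.filter fun f => ¬ ∃ z : Fin n, z ∉ X ∧ z ∉ Y ∧
    (∀ x ∈ X, (gr n f).Adj z x) ∧ (∀ y ∈ Y, ¬ (gr n f).Adj z y)

lemma card_bad_le (n : ℕ) (X Y : Finset (Fin n)) (hd : Disjoint X Y) :
    (bad n X Y).card ≤ (2 ^ (X ∪ Y).card - 1) ^ (n - (X ∪ Y).card)
      * 2 ^ (n * n - (X ∪ Y).card * (n - (X ∪ Y).card)) := by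
  set W : Finset (Fin n) := X ∪ Y with hW
  set T : Finset (Fin n) := Wᶜ with hT
  set Rng : Finset (Fin n × Fin n) :=
    (T ×ˢ W).image (fun zw => (min zw.1 zw.2, max zw.1 zw.2)) with hRngdef
  have hmemW : ∀ {z : Fin n}, z ∈ T → z ∉ W := fun hz => Finset.mem_compl.mp hz
  have hRngcard : Rng.card = T.card * W.card := by
    rw [hRngdef, Finset.card_image_of_injOn, Finset.card_product]
    rintro ⟨z, w⟩ hzw ⟨z', w'⟩ hzw' heq
    simp only [Finset.mem_coe, Finset.mem_product] at hzw hzw'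
    simp only [Prod.mk.injEq] at heq
    obtain ⟨h1, h2⟩ := minmax_inj (hmemW hzw.1) hzw.2 (hmemW hzw'.1) hzw'.2 heq.1 heq.2
    exact Prod.ext h1 h2
  set p : {w // w ∈ W} → Bool := fun w => decide (w.1 ∈ X) with hp
  have key : ∀ f ∈ bad n X Y, ∀ z : {z // z ∈ T},
      (fun w : {w // w ∈ W} => f (min z.1 w.1) (max z.1 w.1)) ≠ p := by
    intro f hf z heq
    simp only [bad, Finset.mem_filter, Finset.mem_univ, true_and] at hf
    have hzX : z.1 ∉ X := fun h => hmemW z.2 (Finset.mem_union_left _ h)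
    have hzY : z.1 ∉ Y := fun h => hmemW z.2 (Finset.mem_union_right _ h)
    refine hf ⟨z.1, hzX, hzY, ?_, ?_⟩
    · intro x hx
      have hxW : x ∈ W := Finset.mem_union_left _ hx
      refine ⟨fun h => hmemW z.2 (h ▸ hxW), ?_⟩
      have := congrFun heq ⟨x, hxW⟩
      simpa [hp, hx] using this
    · intro y hy hadj
      have hyW : y ∈ W := Finset.mem_union_right _ hy
      have hval := congrFun heq ⟨y, hyW⟩
      have hyX : y ∉ X := fun h => (Finset.disjoint_left.mp hd h) hy
      simp only [hp, decide_eq_false hyX] at hval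
      have hadj2 : f (min (z.1 : Fin n) y) (max (z.1 : Fin n) y) = true := hadj.2
      rw [hval] at hadj2
      exact Bool.false_ne_true hadj2
  let Ψ : {f // f ∈ bad n X Y} →
      {h : {z // z ∈ T} → {w // w ∈ W} → Bool // ∀ z, h z ≠ p} ×
        ({c : Fin n × Fin n // c ∉ Rng} → Bool) := fun ⟨f, hf⟩ =>
    (⟨fun z w => f (min z.1 w.1) (max z.1 w.1), key f hf⟩, fun c => f c.1.1 c.1.2)
  have hΨ : Function.Injective Ψ := by
    rintro ⟨f, hf⟩ ⟨g, hg⟩ h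
    have h1 := congrArg Prod.fst h
    have h2 := congrArg Prod.snd h
    simp only [Ψ] at h1 h2
    apply Subtype.ext
    funext a b
    by_cases hc : (a, b) ∈ Rng
    · rw [hRngdef] at hc
      obtain ⟨⟨z, w⟩, hzw, he⟩ := Finset.mem_image.mp hc
      simp only [Finset.mem_product] at hzw
      have he1 : min z w = a := congrArg Prod.fst he
      have he2 : max z w = b := congrArg Prod.snd he
      have := congrFun (congrFun (congrArg Subtype.val h1) ⟨z, hzw.1⟩) ⟨w, hzw.2⟩
      simpa [he1, he2] using this
    · exact congrFun h2 ⟨(a, b), hc⟩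
  have hcard := Fintype.card_le_of_injective Ψ hΨ
  rw [Fintype.card_coe (bad n X Y), Fintype.card_prod] at hcard
  have hWT : W.card ≤ n := by simpa using Finset.card_le_univ W
  have hTcard : T.card = n - W.card := by simp [hT, Finset.card_compl]
  have hq : Fintype.card {q : {w // w ∈ W} → Bool // q ≠ p} = 2 ^ W.card - 1 := by
    rw [Fintype.card_of_subtype (Finset.univ.erase p) (by intro x; simp),
      Finset.card_erase_of_mem (Finset.mem_univ _), Finset.card_univ, Fintype.card_fun,
      Fintype.card_bool, Fintype.card_coe]
  have hcardA : Fintype.card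
      {h : {z // z ∈ T} → {w // w ∈ W} → Bool // ∀ z, h z ≠ p}
      = (2 ^ W.card - 1) ^ (n - W.card) := by
    rw [Fintype.card_congr
      (Equiv.subtypePiEquivPi (p := fun (_ : {z // z ∈ T}) (q : {w // w ∈ W} → Bool) => q ≠ p)),
      Fintype.card_fun, hq, Fintype.card_coe, hTcard]
  have hcardB : Fintype.card ({c : Fin n × Fin n // c ∉ Rng} → Bool)
      = 2 ^ (n * n - W.card * (n - W.card)) := by
    rw [Fintype.card_fun, Fintype.card_bool,
      Fintype.card_of_subtype Rngᶜ (by intro x; simp), Finset.card_compl, hRngcard,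
      hTcard, Nat.mul_comm]
    congr 2
    simp
  rw [hcardA, hcardB] at hcard
  exact hcard

/-- All pairs of disjoint sets of total size less than `k`. -/
noncomputable def pairs (n k : ℕ) : Finset (Finset (Fin n) × Finset (Fin n)) :=
  univ.filter fun XY => Disjoint XY.1 XY.2 ∧ XY.1.card + XY.2.card < k

lemma union_bound (n k : ℕ) (hn : ∀ f, ¬ HasExtensionProperty (gr n f) k) :
    2 ^ (n * n) ≤ ∑ XY ∈ pairs n k, (bad n XY.1 XY.2).card := by
  have hsub : (univ : Finset (Fin n → Fin n → Bool)) ⊆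
      (pairs n k).biUnion (fun XY => bad n XY.1 XY.2) := by
    intro f _
    have hf := hn f
    simp only [HasExtensionProperty, not_forall] at hf
    obtain ⟨X, Y, hd, hc, hno⟩ := hf
    refine Finset.mem_biUnion.mpr ⟨(X, Y), ?_, ?_⟩
    · simp [pairs, hd, hc]
    · simp only [bad, Finset.mem_filter, Finset.mem_univ, true_and]
      exact hno
  have h1 : (univ : Finset (Fin n → Fin n → Bool)).card = 2 ^ (n * n) := by
    rw [Finset.card_univ, Fintype.card_fun, Fintype.card_fun, Fintype.card_bool,
      Fintype.card_fin, ← pow_mul]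
  calc 2 ^ (n * n) = (univ : Finset (Fin n → Fin n → Bool)).card := h1.symm
    _ ≤ ((pairs n k).biUnion (fun XY => bad n XY.1 XY.2)).card := Finset.card_le_card hsub
    _ ≤ ∑ XY ∈ pairs n k, (bad n XY.1 XY.2).card := Finset.card_biUnion_le

lemma card_pairs_le (n k : ℕ) : (pairs n k).card ≤ (k * (n + 1) ^ k) ^ 2 := by
  set B : Finset (Finset (Fin n)) :=
    (range k).biUnion (fun j => Finset.powersetCard j (univ : Finset (Fin n))) with hB
  have hsub : pairs n k ⊆ B ×ˢ B := by
    rintro ⟨X, Y⟩ hXY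
    simp only [pairs, Finset.mem_filter, Finset.mem_univ, true_and] at hXY
    have hX : X.card < k := lt_of_le_of_lt (Nat.le_add_right _ _) hXY.2
    have hY : Y.card < k := lt_of_le_of_lt (Nat.le_add_left _ _) hXY.2
    refine Finset.mem_product.mpr ⟨?_, ?_⟩
    · exact Finset.mem_biUnion.mpr ⟨X.card, Finset.mem_range.mpr hX,
        Finset.mem_powersetCard.mpr ⟨Finset.subset_univ _, rfl⟩⟩
    · exact Finset.mem_biUnion.mpr ⟨Y.card, Finset.mem_range.mpr hY,
        Finset.mem_powersetCard.mpr ⟨Finset.subset_univ _, rfl⟩⟩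
  have hBcard : B.card ≤ k * (n + 1) ^ k := by
    calc B.card ≤ ∑ j ∈ range k, (Finset.powersetCard j (univ : Finset (Fin n))).card :=
          Finset.card_biUnion_le
      _ ≤ ∑ _j ∈ range k, (n + 1) ^ k := by
          refine Finset.sum_le_sum fun j hj => ?_
          rw [Finset.card_powersetCard, Finset.card_univ, Fintype.card_fin]
          calc n.choose j ≤ n ^ j := Nat.choose_le_pow n j
            _ ≤ (n + 1) ^ j := Nat.pow_le_pow_left (Nat.le_succ n) j
            _ ≤ (n + 1) ^ k := Nat.pow_le_pow_right (Nat.succ_pos n)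
                (le_of_lt (Finset.mem_range.mp hj))
      _ = k * (n + 1) ^ k := by rw [Finset.sum_const, Finset.card_range, smul_eq_mul]
  calc (pairs n k).card ≤ (B ×ˢ B).card := Finset.card_le_card hsub
    _ = B.card * B.card := Finset.card_product _ _
    _ ≤ (k * (n + 1) ^ k) * (k * (n + 1) ^ k) := Nat.mul_le_mul hBcard hBcard
    _ = (k * (n + 1) ^ k) ^ 2 := (sq _).symm

lemma term_bound {k n s : ℕ} (hk : 0 < k) (hs : s < k) (hsn : s ≤ n) (hkn : k ≤ n) :
    (((2 ^ s - 1) ^ (n - s) * 2 ^ (n * n - s * (n - s)) : ℕ) : ℝ) ≤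
      (1 - (2 : ℝ)⁻¹ ^ (k - 1)) ^ (n - k + 1) * 2 ^ (n * n) := by
  set a : ℝ := 1 - (2 : ℝ)⁻¹ ^ (k - 1) with ha
  have hhalf : (0:ℝ) ≤ 2⁻¹ := by norm_num
  have hhalf1 : (2:ℝ)⁻¹ ≤ 1 := by norm_num
  have ha0 : 0 ≤ a := by
    have h := pow_le_one₀ hhalf hhalf1 (n := k - 1)
    rw [ha]; linarith
  have hst : s * (n - s) ≤ n * n := Nat.mul_le_mul hsn (Nat.sub_le n s)
  have hcast : (((2 ^ s - 1) ^ (n - s) * 2 ^ (n * n - s * (n - s)) : ℕ) : ℝ)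
      = ((2:ℝ) ^ s - 1) ^ (n - s) * 2 ^ (n * n - s * (n - s)) := by
    have h1 : (1:ℕ) ≤ 2 ^ s := Nat.one_le_two_pow
    push_cast [h1]
    ring
  rw [hcast]
  have hsplit : (2:ℝ) ^ (n * n) = 2 ^ (s * (n - s)) * 2 ^ (n * n - s * (n - s)) := by
    rw [← pow_add, Nat.add_sub_cancel' hst]
  rw [hsplit, ← mul_assoc]
  refine mul_le_mul_of_nonneg_right ?_ (by positivity)
  rcases Nat.eq_zero_or_pos s with hs0 | hs1
  · subst hs0
    have hn0 : n ≠ 0 := by omega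
    simp only [pow_zero, Nat.sub_zero]
    rw [show ((1:ℝ) - 1) = 0 by norm_num, zero_pow hn0]
    positivity
  · have h2 : (2:ℝ) ^ s - 1 = 2 ^ s * (1 - 2⁻¹ ^ s) := by
      rw [mul_sub, mul_one, ← mul_pow]
      norm_num
    have hb0 : (0:ℝ) ≤ 1 - 2⁻¹ ^ s := by
      have : (2:ℝ)⁻¹ ^ s ≤ 1 := pow_le_one₀ hhalf hhalf1
      linarith
    have hb1 : (1:ℝ) - 2⁻¹ ^ s ≤ 1 := by
      have : (0:ℝ) < 2⁻¹ ^ s := by positivity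
      linarith
    have hba : (1:ℝ) - 2⁻¹ ^ s ≤ a := by
      have : (2:ℝ)⁻¹ ^ (k - 1) ≤ 2⁻¹ ^ s :=
        pow_le_pow_of_le_one hhalf hhalf1 (by omega)
      rw [ha]; linarith
    have hexp : n - k + 1 ≤ n - s := by omega
    rw [h2, mul_pow, pow_mul, mul_comm (((2:ℝ)^s)^(n-s)) _]
    refine mul_le_mul_of_nonneg_right ?_ (by positivity)
    calc ((1:ℝ) - 2⁻¹ ^ s) ^ (n - s) ≤ (1 - 2⁻¹ ^ s) ^ (n - k + 1) :=
          pow_le_pow_of_le_one hb0 hb1 hexp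
      _ ≤ a ^ (n - k + 1) := pow_le_pow_left₀ hb0 hba _

lemma exists_ec (k : ℕ) (hk : 0 < k) :
    ∃ n f, HasExtensionProperty (gr n f) k := by
  set a : ℝ := 1 - (2 : ℝ)⁻¹ ^ (k - 1) with ha
  have hp1 : (2:ℝ)⁻¹ ^ (k - 1) ≤ 1 := pow_le_one₀ (by norm_num) (by norm_num)
  have hp0 : (0:ℝ) < 2⁻¹ ^ (k - 1) := by positivity
  have ha0 : 0 ≤ a := by rw [ha]; linarith
  have ha1 : a < 1 := by rw [ha]; linarith
  have hnorm : ‖a‖ < 1 := by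
    rw [Real.norm_eq_abs, abs_lt]
    exact ⟨by linarith, ha1⟩
  have htend := (summable_pow_mul_geometric_of_norm_lt_one (k := 2 * k) hnorm).tendsto_atTop_zero
  have hC : Filter.Tendsto
      (fun j : ℕ => ((k:ℝ)^2 * ((k:ℝ)+1)^(2*k)) * ((j:ℝ)^(2*k) * a^j))
      Filter.atTop (nhds 0) := by
    simpa using htend.const_mul ((k:ℝ)^2 * ((k:ℝ)+1)^(2*k))
  obtain ⟨j, hj1, hjlt⟩ := ((Filter.eventually_ge_atTop 1).and
    (hC.eventually_lt_const one_pos)).exists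
  set n := j - 1 + k with hn
  have hjn : n - k + 1 = j := by omega
  have hn1 : (n:ℕ) + 1 = j + k := by omega
  have hkn : k ≤ n := by omega
  refine ⟨n, ?_⟩
  by_contra hno
  have hub := union_bound n k (fun f hf => hno ⟨f, hf⟩)
  have hsum_le : ∑ XY ∈ pairs n k, ((bad n XY.1 XY.2).card : ℝ)
      ≤ ∑ _XY ∈ pairs n k, (a ^ (n - k + 1) * 2 ^ (n*n)) := by
    refine Finset.sum_le_sum ?_
    rintro ⟨X, Y⟩ hXY
    simp only [pairs, Finset.mem_filter, Finset.mem_univ, true_and] at hXY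
    obtain ⟨hd, hcard⟩ := hXY
    have hs : (X ∪ Y).card = X.card + Y.card := Finset.card_union_of_disjoint hd
    have hsk : (X ∪ Y).card < k := by rw [hs]; exact hcard
    have hsn : (X ∪ Y).card ≤ n := by simpa using Finset.card_le_univ (X ∪ Y)
    calc ((bad n X Y).card : ℝ)
        ≤ (((2 ^ (X ∪ Y).card - 1) ^ (n - (X ∪ Y).card)
            * 2 ^ (n*n - (X ∪ Y).card * (n - (X ∪ Y).card)) : ℕ) : ℝ) := by
          exact_mod_cast card_bad_le n X Y hd
      _ ≤ a ^ (n - k + 1) * 2 ^ (n*n) := term_bound hk hsk hsn hkn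
  have hreal : ((2:ℝ))^(n*n) ≤ ((pairs n k).card : ℝ) * (a ^ (n - k + 1) * 2 ^ (n*n)) := by
    calc ((2:ℝ))^(n*n) = ((2^(n*n) : ℕ) : ℝ) := by push_cast; ring
      _ ≤ ((∑ XY ∈ pairs n k, (bad n XY.1 XY.2).card : ℕ) : ℝ) := by exact_mod_cast hub
      _ = ∑ XY ∈ pairs n k, ((bad n XY.1 XY.2).card : ℝ) := by push_cast; ring
      _ ≤ ∑ _XY ∈ pairs n k, (a ^ (n - k + 1) * 2 ^ (n*n)) := hsum_le
      _ = ((pairs n k).card : ℝ) * (a ^ (n-k+1) * 2^(n*n)) := by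
          rw [Finset.sum_const, nsmul_eq_mul]
  have hkey : ((pairs n k).card : ℝ) * a ^ (n - k + 1) < 1 := by
    have hjreal : ((n:ℝ) + 1) = (j:ℝ) + (k:ℝ) := by exact_mod_cast hn1
    have hjk : ((n:ℝ) + 1) ≤ ((k:ℝ) + 1) * (j:ℝ) := by
      have : (1:ℝ) ≤ (j:ℝ) := by exact_mod_cast hj1
      rw [hjreal]; nlinarith [Nat.cast_nonneg (α := ℝ) k]
    have h1 : ((n:ℝ)+1)^(2*k) ≤ ((k:ℝ)+1)^(2*k) * (j:ℝ)^(2*k) := by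
      rw [← mul_pow]
      exact pow_le_pow_left₀ (by positivity) hjk _
    calc ((pairs n k).card : ℝ) * a ^ (n-k+1)
        ≤ (((k * (n+1)^k)^2 : ℕ) : ℝ) * a^(n-k+1) :=
          mul_le_mul_of_nonneg_right (by exact_mod_cast card_pairs_le n k)
            (pow_nonneg ha0 _)
      _ = (k:ℝ)^2 * (((n:ℝ)+1)^(2*k)) * a^j := by
          push_cast
          rw [hjn, mul_pow, ← pow_mul, mul_comm k 2]
      _ ≤ (k:ℝ)^2 * (((k:ℝ)+1)^(2*k) * (j:ℝ)^(2*k)) * a^j := by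
          refine mul_le_mul_of_nonneg_right ?_ (pow_nonneg ha0 _)
          exact mul_le_mul_of_nonneg_left h1 (by positivity)
      _ = ((k:ℝ)^2 * ((k:ℝ)+1)^(2*k)) * ((j:ℝ)^(2*k) * a^j) := by ring
      _ < 1 := hjlt
  have hlt : ((pairs n k).card : ℝ) * (a^(n-k+1) * 2^(n*n)) < 2^(n*n) := by
    have h2pos : (0:ℝ) < 2^(n*n) := by positivity
    calc ((pairs n k).card : ℝ) * (a^(n-k+1) * 2^(n*n))
        = (((pairs n k).card : ℝ) * a^(n-k+1)) * 2^(n*n) := by ring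
      _ < 1 * 2^(n*n) := mul_lt_mul_of_pos_right hkey h2pos
      _ = 2^(n*n) := one_mul _
  linarith

lemma embed_of_ext {n ℓ : ℕ} (G : SimpleGraph (Fin n)) (h : HasExtensionProperty G ℓ)
    (F : SimpleGraph (Fin ℓ)) : Nonempty (F ↪g G) := by
  have key : ∀ m : ℕ, ∀ hm : m ≤ ℓ, ∃ φ : Fin m → Fin n, Function.Injective φ ∧
      ∀ i j : Fin m, G.Adj (φ i) (φ j) ↔ F.Adj (Fin.castLE hm i) (Fin.castLE hm j) := by
    intro m
    induction m with
    | zero => exact fun hm => ⟨Fin.elim0, fun i => i.elim0, fun i => i.elim0⟩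
    | succ m ih =>
      intro hm
      have hm' : m ≤ ℓ := Nat.le_of_succ_le hm
      obtain ⟨φ, hinj, hiff⟩ := ih hm'
      set v : Fin ℓ := Fin.castLE hm (Fin.last m) with hv
      set A : Finset (Fin m) := univ.filter (fun j => F.Adj v (Fin.castLE hm' j)) with hA
      set X : Finset (Fin n) := A.image φ with hX
      set Y : Finset (Fin n) := Aᶜ.image φ with hY
      have hdisj : Disjoint X Y := by
        rw [hX, hY, Finset.disjoint_image hinj]
        exact disjoint_compl_right
      have hcards : X.card + Y.card < ℓ := by
        rw [hX, hY, Finset.card_image_of_injective _ hinj,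
          Finset.card_image_of_injective _ hinj]
        have h1 : A.card + Aᶜ.card = m := by
          rw [Finset.card_add_card_compl, Fintype.card_fin]
        omega
      obtain ⟨z, hzX, hzY, hadj, hnadj⟩ := h X Y hdisj hcards
      have hmemX : ∀ j : Fin m, F.Adj v (Fin.castLE hm' j) → φ j ∈ X := fun j hj =>
        Finset.mem_image.mpr ⟨j, Finset.mem_filter.mpr ⟨Finset.mem_univ _, hj⟩, rfl⟩
      have hmemY : ∀ j : Fin m, ¬ F.Adj v (Fin.castLE hm' j) → φ j ∈ Y := fun j hj =>
        Finset.mem_image.mpr ⟨j, Finset.mem_compl.mpr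
          (fun hc => hj (Finset.mem_filter.mp hc).2), rfl⟩
      have hzne : ∀ j : Fin m, z ≠ φ j := by
        intro j heq
        by_cases hj : F.Adj v (Fin.castLE hm' j)
        · exact hzX (heq ▸ hmemX j hj)
        · exact hzY (heq ▸ hmemY j hj)
      have hcast : ∀ j : Fin m, Fin.castLE hm j.castSucc = Fin.castLE hm' j := fun j => rfl
      have hGadj : ∀ j : Fin m, G.Adj z (φ j) ↔ F.Adj v (Fin.castLE hm' j) := by
        intro j
        by_cases hj : F.Adj v (Fin.castLE hm' j)
        · exact iff_of_true (hadj _ (hmemX j hj)) hj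
        · exact iff_of_false (hnadj _ (hmemY j hj)) hj
      refine ⟨Fin.snoc φ z, ?_, ?_⟩
      · intro i1 i2 heq
        rcases Fin.eq_castSucc_or_eq_last i1 with ⟨j1, rfl⟩ | rfl <;>
          rcases Fin.eq_castSucc_or_eq_last i2 with ⟨j2, rfl⟩ | rfl
        · rw [Fin.snoc_castSucc, Fin.snoc_castSucc] at heq
          exact congrArg Fin.castSucc (hinj heq)
        · rw [Fin.snoc_castSucc, Fin.snoc_last] at heq
          exact absurd heq.symm (hzne j1)
        · rw [Fin.snoc_castSucc, Fin.snoc_last] at heq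
          exact absurd heq (hzne j2)
        · rfl
      · intro i1 i2
        rcases Fin.eq_castSucc_or_eq_last i1 with ⟨j1, rfl⟩ | rfl <;>
          rcases Fin.eq_castSucc_or_eq_last i2 with ⟨j2, rfl⟩ | rfl
        · rw [Fin.snoc_castSucc, Fin.snoc_castSucc, hcast, hcast]
          exact hiff j1 j2
        · rw [Fin.snoc_castSucc, Fin.snoc_last, hcast]
          rw [G.adj_comm, F.adj_comm]
          exact hGadj j1
        · rw [Fin.snoc_castSucc, Fin.snoc_last, hcast]
          exact hGadj j2
        · rw [Fin.snoc_last]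
          simp only [SimpleGraph.irrefl]
  obtain ⟨φ, hinj, hiff⟩ := key ℓ le_rfl
  refine ⟨⟨⟨φ, hinj⟩, ?_⟩⟩
  intro a b
  have ha : Fin.castLE (le_refl ℓ) a = a := rfl
  have hb : Fin.castLE (le_refl ℓ) b = b := rfl
  rw [Function.Embedding.coeFn_mk]
  rw [hiff a b, ha, hb]

end ECProof

theorem exists_graph_with_extension_property_containing_all_small_graphs
    (k ℓ : ℕ) (hk : 0 < k) (hℓ : 0 < ℓ) :
    ∃ (n : ℕ) (G : SimpleGraph (Fin n)),
      HasExtensionProperty G k ∧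
      ∀ F : SimpleGraph (Fin ℓ), Nonempty (F ↪g G) := by
  have hK : 0 < max k ℓ := lt_of_lt_of_le hk (le_max_left k ℓ)
  obtain ⟨n, f, hf⟩ := ECProof.exists_ec (max k ℓ) hK
  refine ⟨n, ECProof.gr n f, ?_, ?_⟩
  · exact fun X Y hd hc => hf X Y hd (lt_of_lt_of_le hc (le_max_left k ℓ))
  · intro F
    exact ECProof.embed_of_ext _
      (fun X Y hd hc => hf X Y hd (lt_of_lt_of_le hc (le_max_right k ℓ))) F
end

section
/- For every finite simple graph F with chromatic number χ(F) ≥ 2, there exists a finite simple graph H that has the (χ(F)−1)-extension property and contains no induced copy of F. (Equivalently, the extension index of F is at least χ(F).) -/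
open Finset

namespace ExtAux

/-- The `k`-partite graph determined by a boolean labelling of pairs. -/
def pg (k m : ℕ) (ω : Sym2 (Fin k × Fin m) → Bool) : SimpleGraph (Fin k × Fin m) where
  Adj a b := a.1 ≠ b.1 ∧ ω s(a, b) = true
  symm := by
    constructor
    rintro a b ⟨h1, h2⟩
    exact ⟨h1.symm, by rwa [Sym2.eq_swap]⟩
  loopless := by constructor; rintro a ⟨h1, _⟩; exact h1 rfl

open Classical in
noncomputable def badSet (k m : ℕ) (S T : Finset (Fin k × Fin m)) :
    Finset (Sym2 (Fin k × Fin m) → Bool) :=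
  univ.filter (fun ω =>
    ¬ ∃ z, z ∉ S ∧ z ∉ T ∧ (∀ x ∈ S, (pg k m ω).Adj z x) ∧ (∀ y ∈ T, ¬ (pg k m ω).Adj z y))

lemma numeric (k : ℕ) (hk : 1 ≤ k) :
    ∃ m : ℕ, 1 ≤ m ∧
      (2 * (k * m) + 1) ^ (k - 1) * (2 ^ (k - 1) - 1) ^ m < 2 ^ ((k - 1) * m) := by
  set d := k - 1 with hd
  have hb : (0:ℝ) < 2 ^ d := by positivity
  have hb1 : (1:ℝ) ≤ 2 ^ d := one_le_pow₀ (by norm_num)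
  set r : ℝ := (2 ^ d - 1) / 2 ^ d with hr
  have hr0 : 0 ≤ r := div_nonneg (by linarith) hb.le
  have hr1 : r < 1 := by rw [div_lt_one hb]; linarith
  have htend : Filter.Tendsto
      (fun n : ℕ => ((3 * k : ℝ) ^ d) * ((n : ℝ) ^ d * r ^ n)) Filter.atTop (nhds 0) := by
    simpa using (tendsto_pow_const_mul_const_pow_of_lt_one d hr0 hr1).const_mul
      ((3 * (k:ℝ)) ^ d)
  have hev : ∀ᶠ n : ℕ in Filter.atTop,
      ((3 * k : ℝ) ^ d) * ((n : ℝ) ^ d * r ^ n) < 1 :=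
    htend.eventually (gt_mem_nhds one_pos)
  obtain ⟨m, hlt, hm⟩ := (hev.and (Filter.eventually_ge_atTop 1)).exists
  refine ⟨m, hm, ?_⟩
  have hm1 : (1:ℝ) ≤ (m:ℝ) := by exact_mod_cast hm
  have hk1 : (1:ℝ) ≤ (k:ℝ) := by exact_mod_cast hk
  have hkm : (1:ℝ) ≤ (k:ℝ) * m := by nlinarith
  rw [← Nat.cast_lt (α := ℝ)]
  have hcast : ((2 ^ d - 1 : ℕ) : ℝ) = 2 ^ d - 1 := by
    have h1 : (1:ℕ) ≤ 2 ^ d := Nat.one_le_two_pow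
    push_cast [h1]
    ring
  push_cast [hcast]
  have h1 : ((2 : ℝ) * ((k:ℝ) * m) + 1) ^ d ≤ (3 * k) ^ d * (m:ℝ) ^ d := by
    rw [← mul_pow]
    apply pow_le_pow_left₀ (by positivity)
    nlinarith
  have h2 : ((2:ℝ) ^ d - 1) ^ m = r ^ m * (2 ^ d) ^ m := by
    rw [← mul_pow, div_mul_cancel₀ _ hb.ne']
  calc ((2:ℝ) * ((k:ℝ) * m) + 1) ^ d * (2 ^ d - 1) ^ m
      ≤ (3 * (k:ℝ)) ^ d * (m:ℝ) ^ d * ((2 ^ d - 1) ^ m) := by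
        apply mul_le_mul_of_nonneg_right h1
        apply pow_nonneg (by linarith)
    _ = ((3 * (k:ℝ)) ^ d * ((m : ℝ) ^ d * r ^ m)) * (2 ^ d) ^ m := by
        rw [h2]; ring
    _ < 1 * (2 ^ d) ^ m := by
        apply mul_lt_mul_of_pos_right hlt (by positivity)
    _ = (2:ℝ) ^ (d * m) := by rw [one_mul, ← pow_mul]

lemma nat_arith (q d m cardJ : ℕ) (hqd : q ≤ d) (hJ : d * m ≤ cardJ) :
    (2 ^ q - 1) ^ m * 2 ^ (cardJ - m * q) ≤ (2 ^ d - 1) ^ m * 2 ^ (cardJ - d * m) := by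
  have h1 : (2 ^ q - 1) * 2 ^ (d - q) ≤ 2 ^ d - 1 := by
    have e : (2 ^ q - 1) * 2 ^ (d - q) = 2 ^ d - 2 ^ (d - q) := by
      rw [Nat.sub_mul, one_mul, ← pow_add]
      congr 2
      omega
    rw [e]
    have h2 : (1:ℕ) ≤ 2 ^ (d - q) := Nat.one_le_two_pow
    have h3 : 2 ^ (d - q) ≤ 2 ^ d := Nat.pow_le_pow_right (by norm_num) (by omega)
    omega
  have e1 : (d - q) * m = d * m - q * m := Nat.sub_mul d q m
  have e2 : q * m ≤ d * m := Nat.mul_le_mul_right m hqd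
  have e3 : m * q = q * m := Nat.mul_comm m q
  have gen : ∀ A B C : ℕ, B ≤ A → A ≤ C → C - B = (A - B) + (C - A) := by
    intros; omega
  calc (2 ^ q - 1) ^ m * 2 ^ (cardJ - m * q)
      = (2 ^ q - 1) ^ m * (2 ^ ((d - q) * m) * 2 ^ (cardJ - d * m)) := by
        rw [← pow_add]
        rw [e1, e3]
        exact congrArg ((2 ^ q - 1) ^ m * 2 ^ ·) (gen (d * m) (q * m) cardJ e2 hJ)
    _ = ((2 ^ q - 1) * 2 ^ (d - q)) ^ m * 2 ^ (cardJ - d * m) := by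
        rw [mul_pow, ← pow_mul]
        ring
    _ ≤ (2 ^ d - 1) ^ m * 2 ^ (cardJ - d * m) :=
        Nat.mul_le_mul_right _ (Nat.pow_le_pow_left h1 m)

lemma cardJ_ge (k m : ℕ) : (k - 1) * m ≤ Fintype.card (Sym2 (Fin k × Fin m)) := by
  have hinj : Function.Injective (fun v : Fin k × Fin m => s(v, v)) := by
    intro a b h
    rw [Sym2.eq_iff] at h
    tauto
  have h := Fintype.card_le_of_injective _ hinj
  simp only [Fintype.card_prod, Fintype.card_fin] at h
  calc (k - 1) * m ≤ k * m := Nat.mul_le_mul_right m (Nat.sub_le k 1)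
    _ ≤ _ := h

lemma badSet_card_le (k m : ℕ) (hk : 1 ≤ k) (S T : Finset (Fin k × Fin m))
    (hd : Disjoint S T) (hq : S.card + T.card ≤ k - 1) :
    (badSet k m S T).card ≤
      (2 ^ (k - 1) - 1) ^ m * 2 ^ (Fintype.card (Sym2 (Fin k × Fin m)) - (k - 1) * m) := by
  classical
  set U : Finset (Fin k × Fin m) := S ∪ T with hU
  have hUcard : U.card = S.card + T.card := card_union_of_disjoint hd
  obtain ⟨i, hi⟩ : ∃ i : Fin k, ∀ v ∈ U, v.1 ≠ i := by
    by_contra hcon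
    push_neg at hcon
    have hsub : (univ : Finset (Fin k)) ⊆ U.image Prod.fst := by
      intro i _
      obtain ⟨v, hv, hvi⟩ := hcon i
      exact mem_image.mpr ⟨v, hv, hvi⟩
    have h1 := card_le_card hsub
    have h2 := card_image_le (s := U) (f := Prod.fst)
    simp only [card_univ, Fintype.card_fin] at h1
    omega
  set q := U.card with hqdef
  let φ : Fin m × {v // v ∈ U} → Sym2 (Fin k × Fin m) :=
    fun p => s(((i, p.1) : Fin k × Fin m), (p.2 : Fin k × Fin m))
  have hφ : Function.Injective φ := by
    rintro ⟨t, u⟩ ⟨t', u'⟩ h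
    simp only [φ, Sym2.eq_iff] at h
    rcases h with ⟨h1, h2⟩ | ⟨h1, h2⟩
    · have ht : t = t' := by
        have := congrArg Prod.snd h1; simpa using this
      subst ht
      have : u = u' := Subtype.ext h2
      rw [this]
    · exfalso
      exact hi (u' : Fin k × Fin m) u'.2 (by rw [← h1])
  set E : Finset (Sym2 (Fin k × Fin m)) := Finset.image φ univ with hE
  have hEcard : E.card = m * q := by
    rw [hE, card_image_of_injective _ hφ, card_univ, Fintype.card_prod,
      Fintype.card_fin, Fintype.card_coe]
  let good : {v // v ∈ U} → Bool := fun u => decide ((u : Fin k × Fin m) ∈ S)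
  have key : ∀ ω ∈ badSet k m S T, ∀ t : Fin m,
      (fun u : {v // v ∈ U} => ω (φ (t, u))) ≠ good := by
    intro ω hω t heq
    have hωbad := (mem_filter.mp hω).2
    apply hωbad
    refine ⟨(i, t), ?_, ?_, ?_, ?_⟩
    · intro hmem; exact hi (i, t) (mem_union_left _ hmem) rfl
    · intro hmem; exact hi (i, t) (mem_union_right _ hmem) rfl
    · intro x hx
      refine ⟨(hi x (mem_union_left _ hx)).symm, ?_⟩
      have h2 : ω s(((i, t) : Fin k × Fin m), x) = decide (x ∈ S) :=
        congrFun heq ⟨x, mem_union_left _ hx⟩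
      simpa [hx] using h2
    · rintro y hy ⟨-, hadj⟩
      have h2 : ω s(((i, t) : Fin k × Fin m), y) = decide (y ∈ S) :=
        congrFun heq ⟨y, mem_union_right _ hy⟩
      have hyS : y ∉ S := disjoint_right.mp hd hy
      rw [hadj] at h2
      simp [hyS] at h2
  have hν : Fintype.card {ν : {v // v ∈ U} → Bool // ν ≠ good} = 2 ^ q - 1 := by
    have h1 : Fintype.card {ν : {v // v ∈ U} → Bool // ν = good} = 1 :=
      Fintype.card_subtype_eq good
    have h2 := Fintype.card_subtype_compl (fun ν : {v // v ∈ U} → Bool => ν = good)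
    rw [h1] at h2
    have h3 : Fintype.card ({v // v ∈ U} → Bool) = 2 ^ q := by
      rw [Fintype.card_fun, Fintype.card_bool, Fintype.card_coe]
    rw [h3] at h2
    convert h2 using 2
  have hcompl : Fintype.card {j : Sym2 (Fin k × Fin m) // j ∉ E} =
      Fintype.card (Sym2 (Fin k × Fin m)) - m * q := by
    have h2 := Fintype.card_subtype_compl (fun j : Sym2 (Fin k × Fin m) => j ∈ E)
    have h3 : Fintype.card {j : Sym2 (Fin k × Fin m) // j ∈ E} = E.card :=
      Fintype.card_coe E
    rw [h3, hEcard] at h2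
    convert h2 using 2
  have hcardle : (badSet k m S T).card ≤
      Fintype.card ((Fin m → {ν : {v // v ∈ U} → Bool // ν ≠ good}) ×
        ({j : Sym2 (Fin k × Fin m) // j ∉ E} → Bool)) := by
    rw [← Fintype.card_coe (badSet k m S T)]
    apply Fintype.card_le_of_injective
      (fun ωh => (fun t => ⟨fun u => ωh.1 (φ (t, u)), key ωh.1 ωh.2 t⟩,
                  fun j => ωh.1 j.1))
    rintro ⟨ω, hω⟩ ⟨ω', hω'⟩ hpair
    have h1 := congrArg Prod.fst hpair
    have h2 := congrArg Prod.snd hpair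
    simp only at h1 h2
    apply Subtype.ext
    funext j
    by_cases hj : j ∈ E
    · obtain ⟨p, -, rfl⟩ := mem_image.mp hj
      have h3 := congrFun h1 p.1
      have h4 := congrArg Subtype.val h3
      exact congrFun h4 p.2
    · exact congrFun h2 ⟨j, hj⟩
  have hP : Fintype.card ((Fin m → {ν : {v // v ∈ U} → Bool // ν ≠ good}) ×
      ({j : Sym2 (Fin k × Fin m) // j ∉ E} → Bool)) =
      (2 ^ q - 1) ^ m * 2 ^ (Fintype.card (Sym2 (Fin k × Fin m)) - m * q) := by
    rw [Fintype.card_prod, Fintype.card_fun, Fintype.card_fun, hν, hcompl,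
      Fintype.card_fin, Fintype.card_bool]
  have hqk : q ≤ k - 1 := by omega
  calc (badSet k m S T).card
      ≤ (2 ^ q - 1) ^ m * 2 ^ (Fintype.card (Sym2 (Fin k × Fin m)) - m * q) := by
        rw [← hP]; exact hcardle
    _ ≤ _ := nat_arith q (k-1) m _ hqk (cardJ_ge k m)

open Classical in
noncomputable def decX (k m : ℕ) (σ : Fin (k-1) → Option ((Fin k × Fin m) × Bool)) :
    Finset (Fin k × Fin m) :=
  univ.filter (fun v => ∃ j, σ j = some (v, true))

open Classical in
noncomputable def decY (k m : ℕ) (σ : Fin (k-1) → Option ((Fin k × Fin m) × Bool)) :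
    Finset (Fin k × Fin m) :=
  (univ.filter (fun v => ∃ j, σ j = some (v, false))) \ decX k m σ

lemma dec_disjoint (k m : ℕ) (σ : Fin (k-1) → Option ((Fin k × Fin m) × Bool)) :
    Disjoint (decX k m σ) (decY k m σ) :=
  disjoint_sdiff

lemma dec_card (k m : ℕ) (σ : Fin (k-1) → Option ((Fin k × Fin m) × Bool)) :
    (decX k m σ).card + (decY k m σ).card ≤ k - 1 := by
  classical
  rw [← card_union_of_disjoint (dec_disjoint k m σ)]
  have hsub : decX k m σ ∪ decY k m σ ⊆
      univ.biUnion (fun j => ((σ j).elim ∅ (fun p => {p.1}))) := by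
    intro v hv
    have hex : ∃ j b, σ j = some (v, b) := by
      rcases mem_union.mp hv with hv | hv
      · obtain ⟨j, hj⟩ := (mem_filter.mp hv).2
        exact ⟨j, true, hj⟩
      · obtain ⟨j, hj⟩ := (mem_filter.mp (mem_sdiff.mp hv).1).2
        exact ⟨j, false, hj⟩
    obtain ⟨j, b, hj⟩ := hex
    exact mem_biUnion.mpr ⟨j, mem_univ _, by rw [hj]; simp⟩
  calc (decX k m σ ∪ decY k m σ).card
      ≤ (univ.biUnion (fun j => ((σ j).elim ∅ (fun p => {p.1})))).card := card_le_card hsub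
    _ ≤ ∑ j, ((σ j).elim ∅ (fun p : (Fin k × Fin m) × Bool => ({p.1} : Finset _))).card :=
        card_biUnion_le
    _ ≤ ∑ _j : Fin (k-1), 1 := sum_le_sum (fun j _ => by cases σ j <;> simp)
    _ = k - 1 := by simp

lemma encode (k m : ℕ) (X Y : Finset (Fin k × Fin m)) (hd : Disjoint X Y)
    (hq : X.card + Y.card ≤ k - 1) :
    ∃ σ : Fin (k-1) → Option ((Fin k × Fin m) × Bool),
      decX k m σ = X ∧ decY k m σ = Y := by
  classical
  set L : List ((Fin k × Fin m) × Bool) :=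
    X.toList.map (fun v => (v, true)) ++ Y.toList.map (fun v => (v, false)) with hL
  have hlen : L.length = X.card + Y.card := by
    simp [hL, Finset.length_toList]
  refine ⟨fun j => L[(j : ℕ)]?, ?_, ?_⟩
  · ext v
    simp only [decX, mem_filter, mem_univ, true_and]
    constructor
    · rintro ⟨j, hj⟩
      obtain ⟨h, he⟩ := List.getElem?_eq_some_iff.mp hj
      have hmem : (v, true) ∈ L := he ▸ List.getElem_mem h
      rw [hL] at hmem
      rcases List.mem_append.mp hmem with hm | hm
      · obtain ⟨x, hx, hxe⟩ := List.mem_map.mp hm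
        cases hxe
        exact Finset.mem_toList.mp hx
      · obtain ⟨y, hy, hye⟩ := List.mem_map.mp hm
        simp at hye
    · intro hv
      have hmem : (v, true) ∈ L := by
        rw [hL]
        exact List.mem_append_left _ (List.mem_map.mpr ⟨v, Finset.mem_toList.mpr hv, rfl⟩)
      obtain ⟨n, hn, he⟩ := List.getElem_of_mem hmem
      have hn' : n < k - 1 := lt_of_lt_of_le hn (by omega)
      exact ⟨⟨n, hn'⟩, by rw [List.getElem?_eq_getElem hn, he]⟩
  · ext v
    simp only [decY, decX, mem_sdiff, mem_filter, mem_univ, true_and]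
    have hmemY : (∃ j : Fin (k-1), L[(j:ℕ)]? = some (v, false)) ↔ v ∈ Y := by
      constructor
      · rintro ⟨j, hj⟩
        obtain ⟨h, he⟩ := List.getElem?_eq_some_iff.mp hj
        have hmem : (v, false) ∈ L := he ▸ List.getElem_mem h
        rw [hL] at hmem
        rcases List.mem_append.mp hmem with hm | hm
        · obtain ⟨x, hx, hxe⟩ := List.mem_map.mp hm
          simp at hxe
        · obtain ⟨y, hy, hye⟩ := List.mem_map.mp hm
          cases hye
          exact Finset.mem_toList.mp hy
      · intro hv
        have hmem : (v, false) ∈ L := by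
          rw [hL]
          exact List.mem_append_right _ (List.mem_map.mpr ⟨v, Finset.mem_toList.mpr hv, rfl⟩)
        obtain ⟨n, hn, he⟩ := List.getElem_of_mem hmem
        have hn' : n < k - 1 := lt_of_lt_of_le hn (by omega)
        exact ⟨⟨n, hn'⟩, by rw [List.getElem?_eq_getElem hn, he]⟩
    have hmemX : (∃ j : Fin (k-1), L[(j:ℕ)]? = some (v, true)) ↔ v ∈ X := by
      constructor
      · rintro ⟨j, hj⟩
        obtain ⟨h, he⟩ := List.getElem?_eq_some_iff.mp hj
        have hmem : (v, true) ∈ L := he ▸ List.getElem_mem h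
        rw [hL] at hmem
        rcases List.mem_append.mp hmem with hm | hm
        · obtain ⟨x, hx, hxe⟩ := List.mem_map.mp hm
          cases hxe
          exact Finset.mem_toList.mp hx
        · obtain ⟨y, hy, hye⟩ := List.mem_map.mp hm
          simp at hye
      · intro hv
        have hmem : (v, true) ∈ L := by
          rw [hL]
          exact List.mem_append_left _ (List.mem_map.mpr ⟨v, Finset.mem_toList.mpr hv, rfl⟩)
        obtain ⟨n, hn, he⟩ := List.getElem_of_mem hmem
        have hn' : n < k - 1 := lt_of_lt_of_le hn (by omega)
        exact ⟨⟨n, hn'⟩, by rw [List.getElem?_eq_getElem hn, he]⟩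
    rw [hmemY, hmemX]
    constructor
    · rintro ⟨h1, -⟩; exact h1
    · intro h; exact ⟨h, fun hX => (disjoint_right.mp hd h) hX⟩

lemma exists_good (k : ℕ) (hk : 1 ≤ k) :
    ∃ (m : ℕ) (G : SimpleGraph (Fin k × Fin m)),
      (∀ a b, G.Adj a b → a.1 ≠ b.1) ∧ HasExtensionProperty G k := by
  classical
  obtain ⟨m, hm, hnum⟩ := numeric k hk
  suffices h : ∃ ω, HasExtensionProperty (pg k m ω) k by
    obtain ⟨ω, hω⟩ := h
    exact ⟨m, pg k m ω, fun a b hab => hab.1, hω⟩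
  by_contra hno
  push_neg at hno
  have hsub : (univ : Finset (Sym2 (Fin k × Fin m) → Bool)) ⊆
      univ.biUnion (fun σ : Fin (k-1) → Option ((Fin k × Fin m) × Bool) =>
        badSet k m (decX k m σ) (decY k m σ)) := by
    intro ω _
    have hω := hno ω
    unfold HasExtensionProperty at hω
    push_neg at hω
    obtain ⟨X, Y, hdisj, hcard, hfail⟩ := hω
    obtain ⟨σ, hX, hY⟩ := encode k m X Y hdisj (by omega)
    refine mem_biUnion.mpr ⟨σ, mem_univ _, ?_⟩
    rw [hX, hY]
    refine mem_filter.mpr ⟨mem_univ _, ?_⟩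
    rintro ⟨z, hz1, hz2, hz3, hz4⟩
    obtain ⟨y, hy, hy2⟩ := hfail z hz1 hz2 hz3
    exact hz4 y hy hy2
  set J := Fintype.card (Sym2 (Fin k × Fin m)) with hJdef
  set a := (k - 1) * m with ha
  have hJge : a ≤ J := cardJ_ge k m
  have hbound : ∀ σ : Fin (k-1) → Option ((Fin k × Fin m) × Bool),
      (badSet k m (decX k m σ) (decY k m σ)).card ≤
        (2 ^ (k-1) - 1) ^ m * 2 ^ (J - a) := fun σ =>
    badSet_card_le k m hk _ _ (dec_disjoint k m σ) (dec_card k m σ)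
  have h1 := card_le_card hsub
  have h2 := card_biUnion_le (s := (univ : Finset (Fin (k-1) → Option ((Fin k × Fin m) × Bool))))
      (t := fun σ => badSet k m (decX k m σ) (decY k m σ))
  have h3 : ∑ σ : Fin (k-1) → Option ((Fin k × Fin m) × Bool),
      (badSet k m (decX k m σ) (decY k m σ)).card ≤
      (2 * (k * m) + 1) ^ (k - 1) * ((2 ^ (k-1) - 1) ^ m * 2 ^ (J - a)) := by
    have := Finset.sum_le_card_nsmul univ
      (fun σ => (badSet k m (decX k m σ) (decY k m σ)).card)
      ((2 ^ (k-1) - 1) ^ m * 2 ^ (J - a)) (fun σ _ => hbound σ)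
    rw [smul_eq_mul] at this
    have hcard : (univ : Finset (Fin (k-1) → Option ((Fin k × Fin m) × Bool))).card =
        (2 * (k * m) + 1) ^ (k - 1) := by
      rw [card_univ, Fintype.card_fun, Fintype.card_option, Fintype.card_prod,
        Fintype.card_prod, Fintype.card_fin, Fintype.card_fin, Fintype.card_bool,
        Fintype.card_fin]
      congr 1
      ring
    rw [hcard] at this
    exact this
  have hΩ : (univ : Finset (Sym2 (Fin k × Fin m) → Bool)).card = 2 ^ J := by
    rw [card_univ, Fintype.card_fun, Fintype.card_bool]
  have hfinal : (2:ℕ) ^ J < 2 ^ J := by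
    calc (2:ℕ) ^ J = (univ : Finset (Sym2 (Fin k × Fin m) → Bool)).card := hΩ.symm
      _ ≤ _ := h1
      _ ≤ _ := h2
      _ ≤ (2 * (k * m) + 1) ^ (k - 1) * ((2 ^ (k-1) - 1) ^ m * 2 ^ (J - a)) := h3
      _ = ((2 * (k * m) + 1) ^ (k - 1) * (2 ^ (k-1) - 1) ^ m) * 2 ^ (J - a) := by ring
      _ < 2 ^ a * 2 ^ (J - a) := by
          exact mul_lt_mul_of_pos_right hnum (by positivity)
      _ = 2 ^ J := by rw [← pow_add]; congr 1; omega
  exact absurd hfinal (lt_irrefl _)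

lemma transfer {α β : Type} (e : α ≃ β) (G : SimpleGraph β) (k : ℕ)
    (h : HasExtensionProperty G k) : HasExtensionProperty (G.comap e) k := by
  classical
  intro X Y hdisj hcard
  have hXY : Disjoint (X.image e) (Y.image e) := by
    rw [Finset.disjoint_image e.injective]
    exact hdisj
  have hc : (X.image e).card + (Y.image e).card < k := by
    rw [Finset.card_image_of_injective _ e.injective,
      Finset.card_image_of_injective _ e.injective]
    exact hcard
  obtain ⟨z, hz1, hz2, hz3, hz4⟩ := h (X.image e) (Y.image e) hXY hc
  refine ⟨e.symm z, ?_, ?_, ?_, ?_⟩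
  · intro hmem
    exact hz1 (by simpa using Finset.mem_image_of_mem e hmem)
  · intro hmem
    exact hz2 (by simpa using Finset.mem_image_of_mem e hmem)
  · intro x hx
    have := hz3 (e x) (Finset.mem_image_of_mem e hx)
    simpa [SimpleGraph.comap] using this
  · intro y hy hadj
    have := hz4 (e y) (Finset.mem_image_of_mem e hy)
    apply this
    simpa [SimpleGraph.comap] using hadj

end ExtAux

/-- The extension index of `F` is at least its chromatic number: there is a graph `H`
with the `(χ(F) - 1)`-extension property containing no induced copy of `F`. -/
theorem extension_index_ge_chromatic_number
    {V : Type} [Fintype V] (F : SimpleGraph V)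
    (c : ℕ) (hc : F.chromaticNumber = c) (h2 : 2 ≤ c) :
    ∃ (n : ℕ) (H : SimpleGraph (Fin n)),
      HasExtensionProperty H (c - 1) ∧ IsEmpty (F ↪g H) := by
  have hk : 1 ≤ c - 1 := by omega
  obtain ⟨m, G, hpart, hext⟩ := ExtAux.exists_good (c - 1) hk
  let e : Fin ((c-1) * m) ≃ Fin (c-1) × Fin m := finProdFinEquiv.symm
  refine ⟨(c-1) * m, G.comap e, ExtAux.transfer e G (c-1) hext, ?_⟩
  constructor
  intro f
  have hcol : F.Colorable (c - 1) := by
    refine ⟨SimpleGraph.Coloring.mk (fun v => (e (f v)).1) ?_⟩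
    intro a b hab heq
    have hadj : (G.comap e).Adj (f a) (f b) := f.map_rel_iff.mpr hab
    exact hpart _ _ hadj heq
  have hle := hcol.chromaticNumber_le
  rw [hc] at hle
  have : c ≤ c - 1 := by exact_mod_cast hle
  omega
end

section
/- For every integer k ≥ 2, there exists a finite simple graph H with chromatic number at most k that has the k-extension property. -/
open Finset

namespace ExtCount

open scoped Classical

variable (k r : ℕ)

abbrev Vert := Fin k × Fin r
abbrev Dat := Vert k r → Bool × Bool
abbrev Wit := Fin k × Finset (Vert k r) × Finset (Vert k r)

variable {k r}

def adjP (dz dv : Dat k r) (z v : Vert k r) : Bool :=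
  ((dz v).1 != (dv z).2) || ((dv z).1 != (dz v).2)

def adjB (ω : Vert k r → Dat k r) (u v : Vert k r) : Bool := adjP (ω u) (ω v) u v

lemma adjB_comm (ω : Vert k r → Dat k r) (u v : Vert k r) : adjB ω u v = adjB ω v u :=
  Bool.or_comm _ _

def Gr (ω : Vert k r → Dat k r) : SimpleGraph (Vert k r) where
  Adj u v := u.1 ≠ v.1 ∧ adjB ω u v = true
  symm := by
    refine ⟨fun u v h => ?_⟩
    exact ⟨Ne.symm h.1, by rw [adjB_comm]; exact h.2⟩
  loopless := by refine ⟨fun u h => ?_⟩; exact h.1 rfl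

def Dset (w : Wit k r) : Finset (Vert k r) := w.2.1 ∪ w.2.2.filter (fun v => v.1 ≠ w.1)

def bfun (w : Wit k r) (v : Vert k r) : Bool := decide (v ∈ w.2.1)

def SP (w : Wit k r) (u : Vert k r) : Prop := u.1 = w.1 ∧ u ∉ w.2.1 ∪ w.2.2

def GoodD (w : Wit k r) (G : Vert k r → Dat k r) (z : Vert k r) (d : Dat k r) : Prop :=
  ∀ v ∈ Dset w, adjP d (G v) z v = bfun w v

def BadW (w : Wit k r) (ω : Vert k r → Dat k r) : Prop :=
  ∀ z : Vert k r, SP w z → ¬ GoodD w ω z (ω z)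

def Wset : Finset (Wit k r) := univ.filter (fun w => w.2.1.card + w.2.2.card + 1 ≤ k)

lemma exists_badwit (hk : 2 ≤ k) (ω : Vert k r → Dat k r)
    (h : ¬ HasExtensionProperty (Gr ω) k) :
    ∃ w ∈ (Wset : Finset (Wit k r)), BadW w ω := by
  unfold HasExtensionProperty at h
  push_neg at h
  obtain ⟨X, Y, hdisj, hcard, hno⟩ := h
  have himg : (X.image Prod.fst) ≠ univ := by
    intro hXu
    have h2 : (X.image Prod.fst).card ≤ X.card := card_image_le
    rw [hXu, card_univ, Fintype.card_fin] at h2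
    omega
  have hex : ∃ i, i ∉ X.image Prod.fst := by
    by_contra hcon
    push_neg at hcon
    exact himg (Finset.eq_univ_iff_forall.mpr hcon)
  obtain ⟨i, hi⟩ := hex
  refine ⟨(i, X, Y), ?_, ?_⟩
  · rw [Wset, mem_filter]
    refine ⟨mem_univ _, ?_⟩
    show X.card + Y.card + 1 ≤ k
    omega
  · rintro z ⟨hz1, hz2⟩ hgood
    have hzX : z ∉ X := fun hmem => hz2 (mem_union_left _ hmem)
    have hzY : z ∉ Y := fun hmem => hz2 (mem_union_right _ hmem)
    have hadjX : ∀ x ∈ X, (Gr ω).Adj z x := by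
      intro x hx
      refine ⟨?_, ?_⟩
      · rw [hz1]
        intro hh
        exact hi (mem_image.mpr ⟨x, hx, hh.symm⟩)
      · have hb := hgood x (mem_union_left _ hx)
        have : bfun (i, X, Y) x = true := by simp [bfun, hx]
        rw [this] at hb
        exact hb
    obtain ⟨y, hy, hadj⟩ := hno z hzX hzY hadjX
    by_cases hyi : y.1 = i
    · exact hadj.1 (by rw [hz1, hyi])
    · have hyD : y ∈ Dset (i, X, Y) := by
        refine mem_union_right _ (mem_filter.mpr ⟨hy, ?_⟩)
        exact hyi
      have hb := hgood y hyD
      have hyX : y ∉ X := fun hh => (Finset.disjoint_left.mp hdisj hh) hy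
      have : bfun (i, X, Y) y = false := by simp [bfun, hyX]
      rw [this] at hb
      have h2 := hadj.2
      rw [show adjB ω z y = adjP (ω z) (ω y) z y from rfl, hb] at h2
      exact Bool.false_ne_true h2

lemma card_badD (w : Wit k r) (hD : (Dset w).card ≤ k - 1) (G : Vert k r → Dat k r)
    (z : Vert k r) :
    (univ.filter (fun d : Dat k r => ¬ GoodD w G z d)).card ≤
      4 ^ (k*r) - 4 ^ (k*r - (k-1)) := by
  classical
  have hNV : Fintype.card (Vert k r) = k * r := by
    simp [Fintype.card_prod]
  have hDat : Fintype.card (Dat k r) = 4 ^ (k*r) := by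
    rw [Fintype.card_fun, hNV]
    norm_num
  set tgt1 : Vert k r → Bool := fun v => if bfun w v then !((G v) z).2 else ((G v) z).2 with htgt1
  set tgt2 : Vert k r → Bool := fun v => ((G v) z).1 with htgt2
  set p : Vert k r → Bool × Bool → Prop :=
    fun v x => v ∈ Dset w → (x.1 = tgt1 v ∧ (bfun w v = false → x.2 = tgt2 v)) with hp
  have hsub : (univ.filter (fun d : Dat k r => ∀ v, p v (d v))) ⊆
      univ.filter (fun d => GoodD w G z d) := by
    intro d hd
    rw [mem_filter] at hd ⊢
    refine ⟨mem_univ _, ?_⟩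
    intro v hv
    obtain ⟨h1, h2⟩ := hd.2 v hv
    unfold adjP
    cases hb : bfun w v with
    | true =>
      rw [h1, htgt1]
      simp [hb]
    | false =>
      rw [h1, h2 hb, htgt1, htgt2]
      simp [hb]
  have hcyl : (univ.filter (fun d : Dat k r => ∀ v, p v (d v))).card =
      ∏ v : Vert k r, Fintype.card {x : Bool × Bool // p v x} := by
    rw [← Fintype.card_subtype]
    rw [Fintype.card_congr (Equiv.subtypePiEquivPi (p := p))]
    rw [Fintype.card_pi]
  have hge : ∀ v : Vert k r, (if v ∈ Dset w then 1 else 4) ≤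
      Fintype.card {x : Bool × Bool // p v x} := by
    intro v
    by_cases hv : v ∈ Dset w
    · rw [if_pos hv]
      refine Fintype.card_pos_iff.mpr ⟨⟨(tgt1 v, tgt2 v), ?_⟩⟩
      intro _
      exact ⟨rfl, fun _ => rfl⟩
    · rw [if_neg hv]
      have hall : ∀ x : Bool × Bool, p v x := fun x hx => absurd hx hv
      rw [Fintype.card_congr (Equiv.subtypeUnivEquiv hall)]
      simp
  have hprodif : (4:ℕ) ^ (k*r - (k-1)) ≤ ∏ v : Vert k r, (if v ∈ Dset w then 1 else 4) := by
    rw [Finset.prod_ite, Finset.prod_const_one, Finset.prod_const, one_mul]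
    have hmemf : (univ.filter (fun v : Vert k r => v ∈ Dset w)) = Dset w := by
      ext v; simp
    have hcard : (univ.filter (fun v : Vert k r => ¬ v ∈ Dset w)).card
        = k*r - (Dset w).card := by
      rw [Finset.filter_not, hmemf, card_sdiff_of_subset (subset_univ _), card_univ, hNV]
    rw [hcard]
    exact Nat.pow_le_pow_right (by norm_num) (Nat.sub_le_sub_left hD (k*r))
  have hgood : 4 ^ (k*r - (k-1)) ≤ (univ.filter (fun d : Dat k r => GoodD w G z d)).card := by
    calc (4:ℕ) ^ (k*r - (k-1)) ≤ ∏ v : Vert k r, (if v ∈ Dset w then 1 else 4) := hprodif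
      _ ≤ ∏ v : Vert k r, Fintype.card {x : Bool × Bool // p v x} :=
          Finset.prod_le_prod' (fun v _ => hge v)
      _ = (univ.filter (fun d : Dat k r => ∀ v, p v (d v))).card := hcyl.symm
      _ ≤ _ := card_le_card hsub
  have htot : (univ.filter (fun d : Dat k r => GoodD w G z d)).card
      + (univ.filter (fun d : Dat k r => ¬ GoodD w G z d)).card = 4 ^ (k*r) := by
    rw [← card_univ (α := Dat k r), ← hDat] at *
    exact Finset.card_filter_add_card_filter_not (fun d => GoodD w G z d)
  have heq : (univ.filter (fun d : Dat k r => ¬ GoodD w G z d)).card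
      = 4 ^ (k*r) - (univ.filter (fun d : Dat k r => GoodD w G z d)).card :=
    Nat.eq_sub_of_add_eq (by rwa [add_comm] at htot)
  rw [heq]
  exact Nat.sub_le_sub_left hgood _

lemma not_SP_of_mem_Dset (w : Wit k r) : ∀ v ∈ Dset w, ¬ SP w v := by
  intro v hv hSP
  rcases mem_union.mp hv with hx | hy
  · exact hSP.2 (mem_union_left _ hx)
  · exact hSP.2 (mem_union_right _ (mem_filter.mp hy).1)

lemma card_badW (w : Wit k r) (hD : (Dset w).card ≤ k - 1) :
    (univ.filter (fun ω : Vert k r → Dat k r => BadW w ω)).card ≤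
      (4 ^ (k*r)) ^ (k*r - Fintype.card {u : Vert k r // SP w u}) *
        (4 ^ (k*r) - 4 ^ (k*r - (k-1))) ^ (Fintype.card {u : Vert k r // SP w u}) := by
  classical
  have hNV : Fintype.card (Vert k r) = k * r := by simp [Fintype.card_prod]
  have hDat : Fintype.card (Dat k r) = 4 ^ (k*r) := by
    rw [Fintype.card_fun, hNV]; norm_num
  set bD := 4 ^ (k*r) - 4 ^ (k*r - (k-1)) with hbD
  let E := Equiv.piEquivPiSubtypeProd (SP w) (fun _ : Vert k r => Dat k r)
  let Glift : ((∀ _u : {x : Vert k r // ¬ SP w x}, Dat k r)) → Vert k r → Dat k r :=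
    fun g v => if h : SP w v then (fun _ => (false, false)) else g ⟨v, h⟩
  let B' : Finset ((∀ _u : {x : Vert k r // SP w x}, Dat k r) ×
      (∀ _u : {x : Vert k r // ¬ SP w x}, Dat k r)) :=
    univ.filter (fun hg => ∀ zz : {x : Vert k r // SP w x},
      ¬ GoodD w (Glift hg.2) zz.1 (hg.1 zz))
  have himg : (univ.filter (fun ω => BadW w ω)).image E ⊆ B' := by
    intro x hx
    rw [mem_image] at hx
    obtain ⟨ω, hω, rfl⟩ := hx
    rw [mem_filter] at hω
    rw [mem_filter]
    refine ⟨mem_univ _, ?_⟩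
    intro zz hgood
    apply hω.2 zz.1 zz.2
    intro v hv
    have hvS : ¬ SP w v := not_SP_of_mem_Dset w v hv
    have hGl : Glift (E ω).2 v = ω v := by
      simp only [Glift, dif_neg hvS]
      rfl
    rw [← hGl]
    exact hgood v hv
  have hcard1 : (univ.filter (fun ω => BadW w ω)).card ≤ B'.card := by
    rw [← Finset.card_image_of_injective (univ.filter (fun ω => BadW w ω)) E.injective]
    exact card_le_card himg
  -- fiberwise over second component
  have hfib : B'.card = ∑ g ∈ (univ : Finset (∀ _u : {x : Vert k r // ¬ SP w x}, Dat k r)),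
      (B'.filter (fun hg => hg.2 = g)).card :=
    Finset.card_eq_sum_card_fiberwise (fun x _ => mem_univ x.2)
  have hfiber : ∀ g, (B'.filter (fun hg => hg.2 = g)).card ≤
      bD ^ (Fintype.card {u : Vert k r // SP w u}) := by
    intro g
    have hsub2 : (B'.filter (fun hg => hg.2 = g)).card ≤
        (univ.filter (fun h : (∀ _u : {x : Vert k r // SP w x}, Dat k r) =>
          ∀ zz, ¬ GoodD w (Glift g) zz.1 (h zz))).card := by
      apply Finset.card_le_card_of_injOn Prod.fst
      · intro x hx
        rw [mem_coe, mem_filter] at hx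
        obtain ⟨hx1, hx2⟩ := hx
        rw [mem_filter] at hx1
        rw [mem_coe, mem_filter]
        refine ⟨mem_univ _, ?_⟩
        intro zz
        rw [← hx2]
        exact hx1.2 zz
      · intro x hx y hy hxy
        rw [mem_coe, mem_filter] at hx hy
        exact Prod.ext hxy (hx.2.trans hy.2.symm)
    have hprod : (univ.filter (fun h : (∀ _u : {x : Vert k r // SP w x}, Dat k r) =>
          ∀ zz, ¬ GoodD w (Glift g) zz.1 (h zz))).card =
        ∏ zz : {x : Vert k r // SP w x},
          (univ.filter (fun d : Dat k r => ¬ GoodD w (Glift g) zz.1 d)).card := by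
      rw [← Fintype.card_subtype]
      have e : {x : (∀ _u : {x : Vert k r // SP w x}, Dat k r) //
            ∀ zz, ¬ GoodD w (Glift g) zz.1 (x zz)} ≃
          ∀ zz : {x : Vert k r // SP w x}, {d : Dat k r // ¬ GoodD w (Glift g) zz.1 d} :=
        Equiv.subtypePiEquivPi (p := fun (zz : {x : Vert k r // SP w x}) (d : Dat k r) => ¬ GoodD w (Glift g) zz.1 d)
      rw [Fintype.card_congr e, Fintype.card_pi]
      exact Finset.prod_congr rfl (fun zz _ => Fintype.card_subtype _)
    calc (B'.filter (fun hg => hg.2 = g)).card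
        ≤ _ := hsub2
      _ = _ := hprod
      _ ≤ ∏ _zz : {x : Vert k r // SP w x}, bD :=
          Finset.prod_le_prod' (fun zz _ => card_badD w hD (Glift g) zz.1)
      _ = bD ^ (Fintype.card {u : Vert k r // SP w u}) := by
          rw [Finset.prod_const, card_univ]
  have hsum : B'.card ≤ (4 ^ (k*r)) ^ (k*r - Fintype.card {u : Vert k r // SP w u}) *
      bD ^ (Fintype.card {u : Vert k r // SP w u}) := by
    rw [hfib]
    calc ∑ g ∈ (univ : Finset (∀ _u : {x : Vert k r // ¬ SP w x}, Dat k r)),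
        (B'.filter (fun hg => hg.2 = g)).card
        ≤ ∑ _g ∈ (univ : Finset (∀ _u : {x : Vert k r // ¬ SP w x}, Dat k r)),
          bD ^ (Fintype.card {u : Vert k r // SP w u}) :=
          Finset.sum_le_sum (fun g _ => hfiber g)
      _ = (Fintype.card (∀ _u : {x : Vert k r // ¬ SP w x}, Dat k r)) *
          bD ^ (Fintype.card {u : Vert k r // SP w u}) := by
          rw [Finset.sum_const, card_univ, smul_eq_mul]
      _ = (4 ^ (k*r)) ^ (k*r - Fintype.card {u : Vert k r // SP w u}) *
          bD ^ (Fintype.card {u : Vert k r // SP w u}) := by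
          rw [Fintype.card_fun, hDat, Fintype.card_subtype_compl, hNV]
  exact le_trans hcard1 hsum

lemma card_SP (w : Wit k r) (hw : w ∈ (Wset : Finset (Wit k r))) :
    r - (k-1) ≤ Fintype.card {u : Vert k r // SP w u} := by
  classical
  rw [Fintype.card_subtype]
  have h1 : (univ.filter (fun u : Vert k r => u.1 = w.1)) \ (w.2.1 ∪ w.2.2) ⊆
      univ.filter (SP w) := by
    intro u hu
    rw [mem_sdiff, mem_filter] at hu
    exact mem_filter.mpr ⟨mem_univ _, hu.1.2, hu.2⟩
  refine le_trans ?_ (card_le_card h1)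
  refine le_trans ?_ (Finset.le_card_sdiff _ _)
  have hfil : (univ.filter (fun u : Vert k r => u.1 = w.1)).card = r := by
    have : (univ.filter (fun u : Vert k r => u.1 = w.1)) =
        univ.image (fun p : Fin r => (w.1, p)) := by
      ext u
      simp only [mem_filter, mem_univ, true_and, mem_image]
      constructor
      · intro h; exact ⟨u.2, by rw [← h]⟩
      · rintro ⟨p, rfl⟩; rfl
    rw [this, Finset.card_image_of_injective _ (fun a b hab => by
      simpa using congrArg Prod.snd hab), card_univ, Fintype.card_fin]
  have hU : (w.2.1 ∪ w.2.2).card ≤ k-1 := by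
    rw [Wset, mem_filter] at hw
    have := hw.2
    have h2 := card_union_le w.2.1 w.2.2
    omega
  rw [hfil]
  omega

lemma Dset_card_le (w : Wit k r) (hw : w ∈ (Wset : Finset (Wit k r))) :
    (Dset w).card ≤ k - 1 := by
  rw [Wset, mem_filter] at hw
  have h1 := card_union_le w.2.1 (w.2.2.filter (fun v => v.1 ≠ w.1))
  have h2 : (w.2.2.filter (fun v => v.1 ≠ w.1)).card ≤ w.2.2.card :=
    card_le_card (filter_subset _ _)
  have := hw.2
  rw [Dset]
  omega

lemma relax_bound (a b s s₀ N' : ℕ) (hb : b ≤ a) (h1 : s₀ ≤ s) (h2 : s ≤ N') :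
    a ^ (N' - s) * b ^ s ≤ a ^ (N' - s₀) * b ^ s₀ := by
  have hbs : b ^ s = b ^ (s - s₀) * b ^ s₀ := by
    rw [← pow_add]
    congr 1
    omega
  rw [hbs, ← mul_assoc]
  have h3 : a ^ (N' - s) * b ^ (s - s₀) ≤ a ^ (N' - s) * a ^ (s - s₀) :=
    Nat.mul_le_mul_left _ (Nat.pow_le_pow_left hb _)
  refine le_trans (Nat.mul_le_mul_right _ h3) (le_of_eq ?_)
  rw [← pow_add]
  congr 2
  omega

lemma card_bad_all (hk : 2 ≤ k) :
    (univ.filter (fun ω : Vert k r → Dat k r => ¬ HasExtensionProperty (Gr ω) k)).card ≤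
      (Wset : Finset (Wit k r)).card *
        ((4^(k*r))^(k*r - (r - (k-1))) * (4^(k*r) - 4^(k*r-(k-1)))^(r-(k-1))) := by
  classical
  have hsub : (univ.filter (fun ω : Vert k r → Dat k r => ¬ HasExtensionProperty (Gr ω) k)) ⊆
      (Wset : Finset (Wit k r)).biUnion (fun w => univ.filter (fun ω => BadW w ω)) := by
    intro ω hω
    rw [mem_filter] at hω
    obtain ⟨w, hw, hbad⟩ := exists_badwit hk ω hω.2
    exact mem_biUnion.mpr ⟨w, hw, mem_filter.mpr ⟨mem_univ _, hbad⟩⟩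
  refine le_trans (card_le_card hsub) (le_trans (Finset.card_biUnion_le) ?_)
  calc ∑ w ∈ (Wset : Finset (Wit k r)), (univ.filter (fun ω => BadW w ω)).card
      ≤ ∑ _w ∈ (Wset : Finset (Wit k r)),
        ((4^(k*r))^(k*r - (r - (k-1))) * (4^(k*r) - 4^(k*r-(k-1)))^(r-(k-1))) := by
        refine Finset.sum_le_sum (fun w hw => ?_)
        refine le_trans (card_badW w (Dset_card_le w hw)) ?_
        refine relax_bound _ _ _ _ _ (Nat.sub_le _ _) (card_SP w hw) ?_
        have : Fintype.card {u : Vert k r // SP w u} ≤ Fintype.card (Vert k r) :=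
          Fintype.card_subtype_le _
        simpa [Fintype.card_prod] using this
    _ = _ := by rw [Finset.sum_const, smul_eq_mul]

lemma card_Wset_le :
    (Wset : Finset (Wit k r)).card ≤ k * ((k * (k*r+1)^(k-1)) * (k * (k*r+1)^(k-1))) := by
  classical
  have hNV : Fintype.card (Vert k r) = k * r := by simp [Fintype.card_prod]
  set small : Finset (Finset (Vert k r)) :=
    univ.powerset.filter (fun s => s.card + 1 ≤ k) with hsmall
  have hsmallcard : small.card ≤ k * (k*r+1)^(k-1) := by
    have hsub : small ⊆ (Finset.range k).biUnion
        (fun j => Finset.powersetCard j (univ : Finset (Vert k r))) := by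
      intro s hs
      rw [hsmall, mem_filter] at hs
      refine mem_biUnion.mpr ⟨s.card, Finset.mem_range.mpr (by omega), ?_⟩
      exact Finset.mem_powersetCard.mpr ⟨subset_univ _, rfl⟩
    refine le_trans (card_le_card hsub) (le_trans Finset.card_biUnion_le ?_)
    calc ∑ j ∈ Finset.range k, (Finset.powersetCard j (univ : Finset (Vert k r))).card
        ≤ ∑ _j ∈ Finset.range k, (k*r+1)^(k-1) := by
          refine Finset.sum_le_sum (fun j hj => ?_)
          rw [Finset.card_powersetCard, card_univ, hNV]
          calc (k*r).choose j ≤ (k*r) ^ j := Nat.choose_le_pow _ _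
            _ ≤ (k*r+1) ^ j := Nat.pow_le_pow_left (by omega) _
            _ ≤ (k*r+1) ^ (k-1) := Nat.pow_le_pow_right (by omega)
                (by rw [Finset.mem_range] at hj; omega)
      _ = _ := by rw [Finset.sum_const, smul_eq_mul, Finset.card_range]
  have hsub2 : (Wset : Finset (Wit k r)) ⊆ univ ×ˢ (small ×ˢ small) := by
    intro w hw
    rw [Wset, mem_filter] at hw
    rw [Finset.mem_product, Finset.mem_product]
    refine ⟨mem_univ _, ?_, ?_⟩ <;>
      · rw [hsmall, mem_filter]
        refine ⟨Finset.mem_powerset.mpr (subset_univ _), by omega⟩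
  refine le_trans (card_le_card hsub2) ?_
  rw [Finset.card_product, Finset.card_product, card_univ, Fintype.card_fin]
  exact Nat.mul_le_mul_left _ (Nat.mul_le_mul hsmallcard hsmallcard)

lemma two_mul_pow_le (q : ℕ) (hq : 1 ≤ q) : 2 * q ^ q ≤ (q+1) ^ q := by
  have hbin : (q+1)^q = ∑ j ∈ Finset.range (q+1), q ^ j * 1 ^ (q - j) * (q.choose j) :=
    add_pow q 1 q
  rw [hbin]
  have hpair : ({q-1, q} : Finset ℕ) ⊆ Finset.range (q+1) := by
    intro x hx
    rw [Finset.mem_insert, Finset.mem_singleton] at hx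
    rw [Finset.mem_range]
    omega
  refine le_trans ?_ (Finset.sum_le_sum_of_subset hpair)
  rw [Finset.sum_pair (by omega : q - 1 ≠ q)]
  have hch : q.choose (q-1) = q := by
    have h1 : q.choose (q - 1) = q.choose (q - (q-1)) := (Nat.choose_symm (by omega)).symm
    have h2 : q - (q - 1) = 1 := by omega
    rw [h1, h2, Nat.choose_one_right]
  have hterm1 : q ^ (q-1) * 1 ^ (q - (q-1)) * (q.choose (q-1)) = q ^ q := by
    rw [hch, one_pow, mul_one]
    rw [← pow_succ]
    congr 1
    omega
  have hterm2 : q ^ q * 1 ^ (q - q) * (q.choose q) = q ^ q := by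
    rw [Nat.choose_self, one_pow, mul_one, mul_one]
  rw [hterm1, hterm2]
  omega

lemma pow_geom_aux (q m : ℕ) (hq : 1 ≤ q) : 2 ^ m * q ^ (q * m) ≤ (q+1) ^ (q * m) := by
  rw [pow_mul, pow_mul, ← mul_pow]
  exact Nat.pow_le_pow_left (two_mul_pow_le q hq) m

lemma arith_aux (a b : ℕ) : ∃ m, 0 < m ∧ a * m ^ b < 2 ^ m := by
  set t := a + b + 4 with ht
  refine ⟨2 ^ (t^2), Nat.pow_pos (by norm_num), ?_⟩
  have hexp : a + t^2 * b < 2 ^ (t^2) := by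
    have h1 : a ≤ t^3 := by
      calc a ≤ t := by omega
        _ ≤ t^3 := Nat.le_self_pow (by norm_num) t
    have hb2 : t^2 * b ≤ t^3 := by
      calc t^2 * b ≤ t^2 * t := Nat.mul_le_mul_left _ (by omega)
        _ = t^3 := by ring
    have h3 : 2 * t^3 ≤ t^4 := by
      calc 2 * t^3 ≤ t * t^3 := Nat.mul_le_mul_right _ (by omega)
        _ = t^4 := by ring
    have h4 : t^4 < 2^(t*4) := by
      calc t^4 < (2^t)^4 := Nat.pow_lt_pow_left (@Nat.lt_two_pow_self t) (by norm_num)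
        _ = 2^(t*4) := by rw [← pow_mul]
    have h6 : 2^(t*4) ≤ 2^(t^2) := by
      refine Nat.pow_le_pow_right (by norm_num) ?_
      calc t*4 ≤ t*t := Nat.mul_le_mul_left _ (by omega)
        _ = t^2 := by ring
    omega
  have hmbpos : 0 < ((2:ℕ)^(t^2))^b := Nat.pow_pos (Nat.pow_pos (by norm_num))
  calc a * (2^(t^2))^b < 2^a * (2^(t^2))^b := (Nat.mul_lt_mul_right hmbpos).mpr (@Nat.lt_two_pow_self a)
    _ = 2^(a + t^2*b) := by rw [← pow_mul, ← pow_add]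
    _ ≤ 2^(2^(t^2)) := Nat.pow_le_pow_right (by norm_num) (le_of_lt hexp)

lemma final_ineq (k : ℕ) (hk : 2 ≤ k) :
    ∃ r : ℕ, 0 < r ∧
      (Wset : Finset (Wit k r)).card *
        ((4^(k*r))^(k*r - (r - (k-1))) * (4^(k*r) - 4^(k*r-(k-1)))^(r-(k-1))) <
      (4^(k*r))^(k*r) := by
  classical
  set K := k - 1 with hK
  obtain ⟨m, hm, harith⟩ := arith_aux (k^3 * 2^(8*k*K)) (2*K)
  set q := 4^K - 1 with hq
  have hq4 : 4 ≤ 4^K := by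
    calc (4:ℕ) = 4^1 := (pow_one 4).symm
      _ ≤ 4^K := Nat.pow_le_pow_right (by norm_num) (by omega)
  have hq1 : 1 ≤ q := by omega
  have hqm1 : 1 ≤ q * m := Nat.mul_le_mul hq1 hm
  refine ⟨K + q * m, by omega, ?_⟩
  set r := K + q * m with hr
  set N := k * r with hN
  have hrr : 1 ≤ r := by omega
  have hs₀ : r - K = q * m := by omega
  have hKN : K ≤ N := by
    calc K ≤ k := by omega
      _ = k * 1 := (mul_one k).symm
      _ ≤ k * r := Nat.mul_le_mul_left k hrr
  have hs₀N : q * m ≤ N := by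
    calc q * m ≤ r := by omega
      _ = 1 * r := (one_mul r).symm
      _ ≤ k * r := Nat.mul_le_mul_right r (by omega)
  -- bound on the number of witnesses
  have hkA : k < 2^k := @Nat.lt_two_pow_self k
  have hN1 : N + 1 ≤ 2^(4*k) * m := by
    have h1 : k*K + 1 ≤ 2^k * 2^k := by
      have : k*K ≤ k*k := Nat.mul_le_mul_left k (by omega)
      have h2 : k*k < 2^k * 2^k := Nat.mul_lt_mul_of_lt_of_le hkA (le_of_lt hkA) (by positivity)
      omega
    have h2 : q ≤ 2^k * 2^k := by
      have : (4:ℕ)^K ≤ 4^k := Nat.pow_le_pow_right (by norm_num) (by omega)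
      have h4 : (4:ℕ)^k = 2^k * 2^k := by
        rw [← pow_add]
        rw [show (4:ℕ) = 2^2 from rfl, ← pow_mul]
        congr 1
        omega
      omega
    have hNsplit : N = k*K + k*(q*m) := by rw [hN, hr]; ring
    have h3 : k*(q*m) ≤ (2^k*(2^k*2^k))*m := by
      calc k*(q*m) = (k*q)*m := by ring
        _ ≤ (2^k*(2^k*2^k))*m :=
            Nat.mul_le_mul_right m (Nat.mul_le_mul (le_of_lt hkA) h2)
    have h5 : (2:ℕ)^k*2^k + 2^k*(2^k*2^k) ≤ 2^(4*k) := by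
      have e1 : (2:ℕ)^k*2^k = 2^(2*k) := by rw [← pow_add]; congr 1; omega
      have e2 : (2:ℕ)^k*(2^k*2^k) = 2^(3*k) := by rw [← pow_add, ← pow_add]; congr 1; omega
      have e3 : (2:ℕ)^(2*k) + 2^(3*k) ≤ 2^(3*k) + 2^(3*k) := by
        have := Nat.pow_le_pow_right (show 1 ≤ 2 by norm_num) (show 2*k ≤ 3*k by omega)
        omega
      have e4 : (2:ℕ)^(3*k) + 2^(3*k) = 2^(3*k+1) := by rw [pow_succ]; omega
      have e5 : (2:ℕ)^(3*k+1) ≤ 2^(4*k) := Nat.pow_le_pow_right (by norm_num) (by omega)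
      omega
    have hm1 : (2:ℕ)^k*2^k ≤ (2^k*2^k) * m := Nat.le_mul_of_pos_right _ hm
    calc N + 1 = (k*K + 1) + k*(q*m) := by omega
      _ ≤ 2^k*2^k * m + (2^k*(2^k*2^k))*m := by
          have := le_trans h1 hm1
          omega
      _ = (2^k*2^k + 2^k*(2^k*2^k)) * m := by ring
      _ ≤ 2^(4*k) * m := Nat.mul_le_mul_right m h5
  have hW : (Wset : Finset (Wit k r)).card < 2^m := by
    refine lt_of_le_of_lt (le_trans card_Wset_le ?_) harith
    calc k * ((k * (N+1)^K) * (k * (N+1)^K)) = k^3 * ((N+1)^K * (N+1)^K) := by ring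
      _ = k^3 * (N+1)^(2*K) := by rw [← pow_add, two_mul]
      _ ≤ k^3 * (2^(4*k) * m)^(2*K) := by
          exact Nat.mul_le_mul_left _ (Nat.pow_le_pow_left hN1 _)
      _ = k^3 * ((2^(4*k))^(2*K) * m^(2*K)) := by rw [mul_pow]
      _ = (k^3 * 2^(8*k*K)) * m^(2*K) := by
          rw [← pow_mul]
          have : 4*k*(2*K) = 8*k*K := by ring
          rw [this]
          ring
  -- now the main chain
  have hbDsplit : (4:ℕ)^(N-K) * q + 4^(N-K) = 4^N := by
    have h1 : (4:ℕ)^(N-K) * q + 4^(N-K) = 4^(N-K) * (q + 1) := by ring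
    have h2 : q + 1 = 4^K := by omega
    rw [h1, h2, ← pow_add]
    congr 1
    omega
  have hbD : (4:ℕ)^N - 4^(N-K) = 4^(N-K) * q := by omega
  have hcore : (Wset : Finset (Wit k r)).card * ((4^(N-K)) * q) ^ (q*m) <
      ((4:ℕ)^N) ^ (q*m) := by
    have h4N : (4:ℕ)^N = 4^(N-K) * (q+1) := by
      have h2 : q + 1 = 4^K := by omega
      rw [h2, ← pow_add]
      congr 1
      omega
    rw [h4N, mul_pow, mul_pow]
    have hstep : (Wset : Finset (Wit k r)).card * q ^ (q*m) < (q+1) ^ (q*m) := by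
      calc (Wset : Finset (Wit k r)).card * q ^ (q*m) < 2^m * q^(q*m) := by
            refine (Nat.mul_lt_mul_right ?_).mpr hW
            exact Nat.pow_pos (by omega)
        _ ≤ (q+1)^(q*m) := pow_geom_aux q m hq1
    calc (Wset : Finset (Wit k r)).card * ((4^(N-K))^(q*m) * q^(q*m))
        = (4^(N-K))^(q*m) * ((Wset : Finset (Wit k r)).card * q^(q*m)) := by ring
      _ < (4^(N-K))^(q*m) * (q+1)^(q*m) := by
          refine (Nat.mul_lt_mul_left ?_).mpr hstep
          exact Nat.pow_pos (Nat.pow_pos (by norm_num))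
  -- assemble
  have hsplitN : ((4:ℕ)^N)^N = ((4:ℕ)^N)^(N - (q*m)) * ((4:ℕ)^N)^(q*m) := by
    rw [← pow_add]
    congr 1
    omega
  rw [hs₀, hbD, hsplitN]
  calc (Wset : Finset (Wit k r)).card * ((4^N)^(N - q*m) * (4^(N-K) * q)^(q*m))
      = (4^N)^(N - q*m) * ((Wset : Finset (Wit k r)).card * (4^(N-K) * q)^(q*m)) := by ring
    _ < (4^N)^(N - q*m) * ((4:ℕ)^N)^(q*m) := by
        refine (Nat.mul_lt_mul_left ?_).mpr hcore
        exact Nat.pow_pos (Nat.pow_pos (by norm_num))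

lemma exists_good_omega (k : ℕ) (hk : 2 ≤ k) :
    ∃ r : ℕ, 0 < r ∧ ∃ ω : Vert k r → Dat k r, HasExtensionProperty (Gr ω) k := by
  classical
  obtain ⟨r, hr, hineq⟩ := final_ineq k hk
  refine ⟨r, hr, ?_⟩
  by_contra hcon
  push_neg at hcon
  have hall : (univ.filter (fun ω : Vert k r → Dat k r => ¬ HasExtensionProperty (Gr ω) k))
      = univ := by
    ext ω
    simp only [mem_filter, mem_univ, true_and, iff_true]
    exact hcon ω
  have hcard := card_bad_all (k := k) (r := r) hk
  rw [hall, card_univ] at hcard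
  have hcardΩ : Fintype.card (Vert k r → Dat k r) = (4^(k*r))^(k*r) := by
    have hNV : Fintype.card (Vert k r) = k * r := by simp [Fintype.card_prod]
    have hDat : Fintype.card (Dat k r) = 4 ^ (k*r) := by
      rw [Fintype.card_fun, hNV]; norm_num
    rw [Fintype.card_fun, hNV, hDat]
  rw [hcardΩ] at hcard
  exact absurd (lt_of_le_of_lt hcard hineq) (lt_irrefl _)

end ExtCount

theorem exists_small_chromatic_graph_with_extension_property
    (k : ℕ) (hk : 2 ≤ k) :
    ∃ (n : ℕ) (H : SimpleGraph (Fin n)),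
      H.chromaticNumber ≤ k ∧ HasExtensionProperty H k := by
  classical
  obtain ⟨r, hr, ω, hω⟩ := ExtCount.exists_good_omega k hk
  let e : Fin (k*r) ≃ ExtCount.Vert k r := finProdFinEquiv.symm
  refine ⟨k*r, (ExtCount.Gr ω).comap e, ?_, ?_⟩
  · -- chromatic number
    have hcol : ((ExtCount.Gr ω).comap e).Colorable k := by
      refine ⟨SimpleGraph.Coloring.mk (fun a => (e a).1) ?_⟩
      intro a b hab
      exact hab.1
    exact hcol.chromaticNumber_le
  · -- extension property
    intro X Y hdisj hcard
    have hinj : Function.Injective (⇑e) := e.injective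
    have hdisj' : Disjoint (X.image e) (Y.image e) := Finset.disjoint_image hinj |>.mpr hdisj
    have hcard' : (X.image e).card + (Y.image e).card < k := by
      rw [Finset.card_image_of_injective _ hinj, Finset.card_image_of_injective _ hinj]
      exact hcard
    obtain ⟨z, hz1, hz2, hz3, hz4⟩ := hω (X.image e) (Y.image e) hdisj' hcard'
    refine ⟨e.symm z, ?_, ?_, ?_, ?_⟩
    · intro hmem
      exact hz1 (by simpa using Finset.mem_image_of_mem e hmem)
    · intro hmem
      exact hz2 (by simpa using Finset.mem_image_of_mem e hmem)
    · intro x hx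
      have := hz3 (e x) (Finset.mem_image_of_mem e hx)
      simpa [SimpleGraph.comap] using this
    · intro y hy hadj
      have := hz4 (e y) (Finset.mem_image_of_mem e hy)
      apply this
      simpa [SimpleGraph.comap] using hadj
end

section
/- For every integer ℓ ≥ 2, there exists a finite simple graph H that contains no clique on ℓ vertices (i.e., H is K_ℓ-free) and has the (ℓ−1)-extension property. (Together with the fact that every graph with the ℓ-extension property contains K_ℓ, this shows that the extension index of the complete graph K_ℓ equals ℓ.) -/
open Finset

namespace ExtTest

abbrev V (k N : ℕ) := Fin k × Fin N

def gr (k N : ℕ) (f : Sym2 (V k N) → Bool) : SimpleGraph (V k N) where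
  Adj u v := u.1 ≠ v.1 ∧ f s(u, v)
  symm := ⟨fun u v h => ⟨Ne.symm h.1, by rw [Sym2.eq_swap]; exact h.2⟩⟩
  loopless := ⟨fun u h => h.1 rfl⟩

lemma gr_cliqueFree (k N : ℕ) (f : Sym2 (V k N) → Bool) : (gr k N f).CliqueFree (k + 1) := by
  have hcol : (gr k N f).Colorable k := by
    exact ⟨SimpleGraph.Coloring.mk Prod.fst (fun {u v} (h : u.1 ≠ v.1 ∧ _) => h.1)⟩
  exact hcol.cliqueFree (Nat.lt_succ_self k)


lemma bad_card_le (k N m : ℕ) (c : Fin k) (w : Fin m → V k N)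
    (hw : Function.Injective w) (hc : ∀ t, (w t).1 ≠ c) (ε : Fin m → Bool) :
    (Finset.univ.filter
      (fun f : Sym2 (V k N) → Bool => ∀ i : Fin N, ∃ t, f s(((c, i) : V k N), w t) ≠ ε t)).card
      * 2 ^ (N * m)
    ≤ (2 ^ m - 1) ^ N * 2 ^ (Fintype.card (Sym2 (V k N))) := by
  set S := Fintype.card (Sym2 (V k N)) with hS
  set key : Fin N × Fin m → Sym2 (V k N) := fun p => s(((c, p.1) : V k N), w p.2) with hkeydef
  have hkey : Function.Injective key := by
    rintro ⟨i, t⟩ ⟨j, s⟩ h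
    simp only [hkeydef, Sym2.eq, Sym2.rel_iff', Prod.mk.injEq, Prod.swap_prod_mk] at h
    rcases h with ⟨⟨h1, h2⟩, h3⟩ | ⟨h1, h2⟩
    · exact Prod.ext h2 (hw h3)
    · exact absurd (congrArg Prod.fst h1).symm (hc s)
  have hNmS : N * m ≤ S := by
    have := Fintype.card_le_of_injective key hkey
    simpa [hS] using this
  have hcard : (Finset.univ.filter
      (fun f : Sym2 (V k N) → Bool => ∀ i : Fin N, ∃ t, f s(((c, i) : V k N), w t) ≠ ε t)).card
      ≤ (2 ^ m - 1) ^ N * 2 ^ (S - N * m) := by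
    rw [← Fintype.card_subtype]
    have hinj : Function.Injective
        (fun fp : {f : Sym2 (V k N) → Bool //
            ∀ i : Fin N, ∃ t, f s(((c, i) : V k N), w t) ≠ ε t} =>
          ((⟨fun i t => fp.1 (key (i, t)), by
              intro i heq
              obtain ⟨t, hne⟩ := fp.2 i
              exact hne (by simpa [hkeydef] using congrFun heq t)⟩ :
            {h : Fin N → Fin m → Bool // ∀ i, h i ≠ ε}),
           (fun x : {x : Sym2 (V k N) // x ∉ Set.range key} => fp.1 x.1))) := by
      rintro ⟨f, hf⟩ ⟨g, hg⟩ h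
      rw [Prod.mk.injEq, Subtype.mk.injEq] at h
      obtain ⟨h1, h2⟩ := h
      ext x
      by_cases hx : x ∈ Set.range key
      · obtain ⟨⟨i, t⟩, rfl⟩ := hx
        exact congrFun (congrFun h1 i) t
      · exact congrFun h2 ⟨x, hx⟩
    have hle := Fintype.card_le_of_injective _ hinj
    refine hle.trans (le_of_eq ?_)
    rw [Fintype.card_prod]
    have e1 : Fintype.card {h : Fin N → Fin m → Bool // ∀ i, h i ≠ ε}
        = (2 ^ m - 1) ^ N := by
      rw [Fintype.card_congr (Equiv.subtypePiEquivPi (p := fun _ x => x ≠ ε)),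
        Fintype.card_pi]
      have h2 : Fintype.card {x : Fin m → Bool // x ≠ ε} = 2 ^ m - 1 := by
        have h3 := Fintype.card_subtype_compl (fun x : Fin m → Bool => x = ε)
        simp only [Fintype.card_subtype_eq, Fintype.card_fun, Fintype.card_fin,
          Fintype.card_bool] at h3
        convert h3 using 2
      simp only [h2, Finset.prod_const, Finset.card_univ, Fintype.card_fin]
    have e2 : Fintype.card ({x : Sym2 (V k N) // x ∉ Set.range key} → Bool)
        = 2 ^ (S - N * m) := by
      rw [Fintype.card_fun, Fintype.card_bool]
      congr 1
      have h3 := Fintype.card_subtype_compl (fun x : Sym2 (V k N) => x ∈ Set.range key)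
      have h4 : Fintype.card {x : Sym2 (V k N) // x ∈ Set.range key}
          = N * m := by
        have h5 : Fintype.card {x : Sym2 (V k N) // x ∈ Set.range key}
            = Fintype.card (Set.range key) := rfl
        rw [h5, Set.card_range_of_injective hkey]
        simp
      rw [h4] at h3
      convert h3 using 2
    rw [e1, e2]
  calc (Finset.univ.filter
      (fun f : Sym2 (V k N) → Bool => ∀ i : Fin N, ∃ t, f s(((c, i) : V k N), w t) ≠ ε t)).card
      * 2 ^ (N * m)
      ≤ ((2 ^ m - 1) ^ N * 2 ^ (S - N * m)) * 2 ^ (N * m) := Nat.mul_le_mul_right _ hcard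
    _ = (2 ^ m - 1) ^ N * 2 ^ S := by
        rw [mul_assoc, ← pow_add, Nat.sub_add_cancel hNmS]

lemma exists_good (k N m : ℕ)
    (hcount : Fintype.card (Fin k × (Fin m → V k N) × (Fin m → Bool)) * (2 ^ m - 1) ^ N
      < 2 ^ (N * m)) :
    ∃ f : Sym2 (V k N) → Bool,
      ∀ (c : Fin k) (w : Fin m → V k N), Function.Injective w →
        (∀ t, (w t).1 ≠ c) → ∀ ε : Fin m → Bool,
        ∃ i : Fin N, ∀ t, f s(((c, i) : V k N), w t) = ε t := by
  by_contra hbad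
  push_neg at hbad
  set S := Fintype.card (Sym2 (V k N)) with hS
  set T : Finset (Fin k × (Fin m → V k N) × (Fin m → Bool)) :=
    Finset.univ.filter (fun τ => Function.Injective τ.2.1 ∧ ∀ t, (τ.2.1 t).1 ≠ τ.1) with hT
  set Bad : (Fin k × (Fin m → V k N) × (Fin m → Bool)) → Finset (Sym2 (V k N) → Bool) :=
    fun τ => Finset.univ.filter
      (fun f => ∀ i : Fin N, ∃ t, f s(((τ.1, i) : V k N), τ.2.1 t) ≠ τ.2.2 t) with hBadDef
  have hsub : (Finset.univ : Finset (Sym2 (V k N) → Bool)) ⊆ T.biUnion Bad := by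
    intro f _
    obtain ⟨c, w, hw, hc, ε, hfail⟩ := hbad f
    refine Finset.mem_biUnion.2 ⟨(c, w, ε), ?_, ?_⟩
    · simp only [hT, Finset.mem_filter, Finset.mem_univ, true_and]
      exact ⟨hw, hc⟩
    · simp only [hBadDef, Finset.mem_filter, Finset.mem_univ, true_and]
      exact hfail
  have hcard1 : 2 ^ S ≤ (T.biUnion Bad).card := by
    have := Finset.card_le_card hsub
    simpa [hS, Fintype.card_fun] using this
  have hcard2 : (T.biUnion Bad).card * 2 ^ (N * m)
      ≤ T.card * ((2 ^ m - 1) ^ N * 2 ^ S) := by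
    calc (T.biUnion Bad).card * 2 ^ (N * m)
        ≤ (∑ τ ∈ T, (Bad τ).card) * 2 ^ (N * m) :=
          Nat.mul_le_mul_right _ (Finset.card_biUnion_le)
      _ = ∑ τ ∈ T, ((Bad τ).card * 2 ^ (N * m)) := by rw [Finset.sum_mul]
      _ ≤ ∑ _τ ∈ T, ((2 ^ m - 1) ^ N * 2 ^ S) := by
          refine Finset.sum_le_sum ?_
          rintro ⟨c, w, ε⟩ hτ
          simp only [hT, Finset.mem_filter, Finset.mem_univ, true_and] at hτ
          exact bad_card_le k N m c w hτ.1 hτ.2 ε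
      _ = T.card * ((2 ^ m - 1) ^ N * 2 ^ S) := by rw [Finset.sum_const, smul_eq_mul]
  have hTcard : T.card ≤ Fintype.card (Fin k × (Fin m → V k N) × (Fin m → Bool)) := by
    rw [← Finset.card_univ]
    exact Finset.card_le_card (Finset.subset_univ _)
  have hfinal : 2 ^ S * 2 ^ (N * m)
      ≤ Fintype.card (Fin k × (Fin m → V k N) × (Fin m → Bool)) * (2 ^ m - 1) ^ N * 2 ^ S := by
    calc 2 ^ S * 2 ^ (N * m) ≤ (T.biUnion Bad).card * 2 ^ (N * m) :=
          Nat.mul_le_mul_right _ hcard1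
      _ ≤ T.card * ((2 ^ m - 1) ^ N * 2 ^ S) := hcard2
      _ ≤ Fintype.card (Fin k × (Fin m → V k N) × (Fin m → Bool))
            * ((2 ^ m - 1) ^ N * 2 ^ S) := Nat.mul_le_mul_right _ hTcard
      _ = Fintype.card (Fin k × (Fin m → V k N) × (Fin m → Bool)) * (2 ^ m - 1) ^ N * 2 ^ S := by
          ring
  have hlt : Fintype.card (Fin k × (Fin m → V k N) × (Fin m → Bool)) * (2 ^ m - 1) ^ N * 2 ^ S
      < 2 ^ (N * m) * 2 ^ S :=
    Nat.mul_lt_mul_of_lt_of_le hcount (le_refl _) (Nat.pow_pos (by norm_num))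
  have := hfinal.trans_lt hlt
  rw [mul_comm (2 ^ S)] at this
  exact lt_irrefl _ this

open Filter in
lemma exists_N (k m : ℕ) :
    ∃ N : ℕ, 1 ≤ N ∧ m ≤ N ∧
      k * (k * N) ^ m * 2 ^ m * (2 ^ m - 1) ^ N < 2 ^ (N * m) := by
  rcases Nat.eq_zero_or_pos k with hk | hk
  · refine ⟨max m 1, le_max_right _ _, le_max_left _ _, ?_⟩
    subst hk
    simp
  · set a : ℕ := 2 ^ m - 1 with ha
    have hapos : (a : ℝ) < 2 ^ m := by
      have h1 : a < 2 ^ m := Nat.sub_lt (Nat.pow_pos (by norm_num)) one_pos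
      calc (a : ℝ) < ((2 ^ m : ℕ) : ℝ) := by exact_mod_cast h1
        _ = 2 ^ m := by push_cast; ring
    set r : ℝ := (a : ℝ) / 2 ^ m with hrdef
    have h2m : (0 : ℝ) < 2 ^ m := by positivity
    have hr0 : 0 ≤ r := by positivity
    have hr1 : r < 1 := (div_lt_one h2m).2 hapos
    have hsum : Summable (fun n : ℕ => (n : ℝ) ^ m * r ^ n) :=
      summable_pow_mul_geometric_of_norm_lt_one m
        (by rwa [Real.norm_eq_abs, abs_of_nonneg hr0])
    have htend := hsum.tendsto_atTop_zero
    set D : ℝ := (k : ℝ) * (k : ℝ) ^ m * 2 ^ m with hDdef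
    have hD : 0 < D := by
      have : (0 : ℝ) < (k : ℝ) := by exact_mod_cast hk
      positivity
    have hev : ∀ᶠ n : ℕ in atTop, (n : ℝ) ^ m * r ^ n < 1 / D :=
      htend.eventually (gt_mem_nhds (by positivity))
    obtain ⟨N, hNge, hNlt⟩ := ((eventually_ge_atTop (max 1 m)).and hev).exists
    refine ⟨N, le_trans (le_max_left _ _) hNge, le_trans (le_max_right _ _) hNge, ?_⟩
    have hareq : (a : ℝ) = r * 2 ^ m := by
      rw [hrdef]; field_simp
    have key : ((k * (k * N) ^ m * 2 ^ m * a ^ N : ℕ) : ℝ) < ((2 ^ (N * m) : ℕ) : ℝ) := by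
      push_cast
      have hL : (k : ℝ) * ((k : ℝ) * N) ^ m * 2 ^ m * (a : ℝ) ^ N
          = D * ((N : ℝ) ^ m * r ^ N) * (2 ^ m) ^ N := by
        rw [hareq, mul_pow, mul_pow, hDdef]; ring
      have hR : (2 : ℝ) ^ (N * m) = (2 ^ m) ^ N := by
        rw [← pow_mul, mul_comm]
      rw [hL, hR]
      have h1 : D * ((N : ℝ) ^ m * r ^ N) < D * (1 / D) :=
        (mul_lt_mul_iff_right₀ hD).2 hNlt
      have h2 : D * (1 / D) = 1 := by field_simp
      calc D * ((N : ℝ) ^ m * r ^ N) * (2 ^ m) ^ N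
          < (D * (1 / D)) * (2 ^ m) ^ N := by
            apply mul_lt_mul_of_pos_right h1 (by positivity)
        _ = (2 ^ m) ^ N := by rw [h2, one_mul]
    exact_mod_cast key

lemma exists_graph (k : ℕ) (hk : 1 ≤ k) :
    ∃ (N : ℕ) (f : Sym2 (V k N) → Bool), 1 ≤ N ∧
      HasExtensionProperty (gr k N f) k := by
  set m := k - 1 with hm
  obtain ⟨N, hN1, hNm, hcount⟩ := exists_N k m
  have hcard : Fintype.card (Fin k × (Fin m → V k N) × (Fin m → Bool))
      = k * (k * N) ^ m * 2 ^ m := by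
    simp [Fintype.card_fun, mul_assoc]
  obtain ⟨f, hf⟩ := exists_good k N m (by rw [hcard]; exact hcount)
  refine ⟨N, f, hN1, ?_⟩
  intro X Y hdisj hcardXY
  have hXYm : (X ∪ Y).card ≤ m := by
    have h1 : (X ∪ Y).card ≤ X.card + Y.card := Finset.card_union_le X Y
    have h2 : X.card + Y.card ≤ m := Nat.le_pred_of_lt hcardXY
    exact h1.trans h2
  -- find a free part c
  set P : Finset (Fin k) := (X ∪ Y).image Prod.fst with hP
  have hPcard : P.card < k := by
    have : P.card ≤ (X ∪ Y).card := Finset.card_image_le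
    have h2 := this.trans hXYm
    calc P.card ≤ m := h2
      _ < k := Nat.pred_lt (Nat.one_le_iff_ne_zero.1 hk)
  obtain ⟨c, hc⟩ : ∃ c : Fin k, c ∉ P := by
    by_contra h
    push_neg at h
    have : (Finset.univ : Finset (Fin k)) ⊆ P := fun x _ => h x
    have := Finset.card_le_card this
    simp only [Finset.card_univ, Fintype.card_fin] at this
    omega
  -- superset of X ∪ Y of size m avoiding part c
  set Vc : Finset (V k N) := Finset.univ.filter (fun v => v.1 ≠ c) with hVc
  have hXYVc : X ∪ Y ⊆ Vc := by
    intro v hv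
    simp only [hVc, Finset.mem_filter, Finset.mem_univ, true_and]
    intro hvc
    exact hc (Finset.mem_image.2 ⟨v, hv, hvc⟩)
  have hVccard : m ≤ Vc.card := by
    have : ((Finset.univ.erase c) ×ˢ (Finset.univ : Finset (Fin N))) = Vc := by
      ext v
      simp [hVc, Finset.mem_erase, and_comm]
    rw [← this, Finset.card_product, Finset.card_erase_of_mem (Finset.mem_univ c)]
    simp only [Finset.card_univ, Fintype.card_fin]
    calc m = m * 1 := (mul_one m).symm
      _ ≤ (k - 1) * N := Nat.mul_le_mul (le_of_eq hm.symm) hN1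
  obtain ⟨T, hXYT, hTVc, hTcard⟩ :=
    Finset.exists_subsuperset_card_eq hXYVc hXYm hVccard
  set e := T.equivFinOfCardEq hTcard with he
  set w : Fin m → V k N := fun t => (e.symm t : V k N) with hw
  have hwinj : Function.Injective w := by
    intro t s hts
    exact e.symm.injective (Subtype.ext hts)
  have hwc : ∀ t, (w t).1 ≠ c := by
    intro t
    have : (w t) ∈ Vc := hTVc (e.symm t).2
    simpa [hVc] using this
  have hwmem : ∀ v ∈ T, ∃ t, w t = v := by
    intro v hv
    exact ⟨e ⟨v, hv⟩, by simp [hw]⟩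
  obtain ⟨i, hi⟩ := hf c w hwinj hwc (fun t => decide (w t ∈ X))
  refine ⟨(c, i), ?_, ?_, ?_, ?_⟩
  · intro hmem
    exact hc (Finset.mem_image.2 ⟨(c, i), Finset.mem_union_left _ hmem, rfl⟩)
  · intro hmem
    exact hc (Finset.mem_image.2 ⟨(c, i), Finset.mem_union_right _ hmem, rfl⟩)
  · intro x hx
    obtain ⟨t, rfl⟩ := hwmem x (hXYT (Finset.mem_union_left _ hx))
    refine (⟨?_, ?_⟩ : _ ∧ _)
    · exact fun h => hwc t h.symm
    · have := hi t
      rw [this]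
      simp [hx]
  · intro y hy
    obtain ⟨t, rfl⟩ := hwmem y (hXYT (Finset.mem_union_right _ hy))
    rintro (⟨-, hadj⟩ : _ ∧ _)
    have := hi t
    rw [this] at hadj
    have hyX : w t ∉ X := fun h => (Finset.disjoint_left.1 hdisj) h hy
    simp [hyX] at hadj

end ExtTest

theorem exists_cliqueFree_graph_with_extension_property
    (ℓ : ℕ) (hℓ : 2 ≤ ℓ) :
    ∃ (n : ℕ) (H : SimpleGraph (Fin n)),
      H.CliqueFree ℓ ∧ HasExtensionProperty H (ℓ - 1) := by
  set k := ℓ - 1 with hk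
  have hk1 : 1 ≤ k := by omega
  have hkℓ : k + 1 = ℓ := by omega
  obtain ⟨N, f, hN1, hext⟩ := ExtTest.exists_graph k hk1
  set G := ExtTest.gr k N f with hG
  set e : ExtTest.V k N ≃ Fin (k * N) := finProdFinEquiv with he
  refine ⟨k * N,
    ⟨fun a b => G.Adj (e.symm a) (e.symm b),
     ⟨fun a b h => h.symm⟩,
     ⟨fun a h => G.loopless.irrefl _ h⟩⟩, ?_, ?_⟩
  · intro s hs
    have hclique : G.IsNClique (k + 1) (s.image e.symm) := by
      constructor
      · rintro a ha b hb hab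
        rw [Finset.coe_image] at ha hb
        obtain ⟨x, hx, rfl⟩ := ha
        obtain ⟨y, hy, rfl⟩ := hb
        have hxy : x ≠ y := fun h => hab (by rw [h])
        exact hs.1 hx hy hxy
      · rw [Finset.card_image_of_injective _ e.symm.injective, hs.2, hkℓ]
    exact ExtTest.gr_cliqueFree k N f _ hclique
  · intro X Y hdisj hlt
    have hXY' : Disjoint (X.image e.symm) (Y.image e.symm) :=
      Finset.disjoint_image e.symm.injective |>.2 hdisj
    have hcards : (X.image e.symm).card + (Y.image e.symm).card < k := by
      rw [Finset.card_image_of_injective _ e.symm.injective,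
        Finset.card_image_of_injective _ e.symm.injective]
      exact hlt
    obtain ⟨z', hzX, hzY, hadj, hnadj⟩ := hext (X.image e.symm) (Y.image e.symm) hXY' hcards
    refine ⟨e z', ?_, ?_, ?_, ?_⟩
    · intro h
      exact hzX (by simpa using Finset.mem_image_of_mem e.symm h)
    · intro h
      exact hzY (by simpa using Finset.mem_image_of_mem e.symm h)
    · intro x hx
      show G.Adj (e.symm (e z')) (e.symm x)
      rw [Equiv.symm_apply_apply]
      exact hadj _ (Finset.mem_image_of_mem e.symm hx)
    · intro y hy
      show ¬ G.Adj (e.symm (e z')) (e.symm y)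
      rw [Equiv.symm_apply_apply]
      exact hnadj _ (Finset.mem_image_of_mem e.symm hy)
end

section
/- Let F be a finite simple graph with ℓ ≥ 2 vertices and let k = ⌊ℓ/2 − 2·log₂ℓ + 3⌋. Then there exists a finite simple graph H that has the (k−1)-extension property and contains no induced copy of F. (Equivalently, the extension index of F is at least ⌊ℓ/2 − 2·log₂ℓ + 3⌋.) -/
set_option maxHeartbeats 1000000

open Finset
open scoped Classical

namespace ExtLB


abbrev Coord (n : ℕ) := {z : Sym2 (Fin n) // ¬ z.IsDiag}

variable {n : ℕ}

def Gf (f : Coord n → Bool) : SimpleGraph (Fin n) where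
  Adj a b := a ≠ b ∧ ∃ e : Coord n, e.1 = s(a, b) ∧ f e = true
  symm := by
    refine ⟨?_⟩; rintro a b ⟨hab, e, he, hf⟩
    exact ⟨hab.symm, e, by rw [he, Sym2.eq_swap], hf⟩
  loopless := by refine ⟨?_⟩; rintro a ⟨hab, -⟩; exact hab rfl

def cedge (a b : Fin n) (h : a ≠ b) : Coord n := ⟨s(a, b), by simpa using h⟩

lemma adj_iff (f : Coord n → Bool) {a b : Fin n} (h : a ≠ b) :
    (Gf f).Adj a b ↔ f (cedge a b h) = true := by
  constructor
  · rintro ⟨-, e, he, hf⟩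
    have : e = cedge a b h := Subtype.ext he
    rwa [this] at hf
  · intro hf
    exact ⟨h, cedge a b h, rfl, hf⟩

lemma cardA_le (X Y : Finset (Fin n)) (hd : Disjoint X Y) :
    (univ.filter (fun f : Coord n → Bool =>
        ∀ z : Fin n, z ∉ X ∪ Y →
          ¬((∀ x ∈ X, (Gf f).Adj z x) ∧ (∀ y ∈ Y, ¬ (Gf f).Adj z y)))).card
      * 2 ^ ((X.card + Y.card) * (n - (X.card + Y.card)))
    ≤ (2 ^ (X.card + Y.card) - 1) ^ (n - (X.card + Y.card))
      * 2 ^ (Fintype.card (Coord n)) := by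
  set S : Finset (Fin n) := X ∪ Y with hS
  have hsc : S.card = X.card + Y.card := card_union_of_disjoint hd
  set s : ℕ := X.card + Y.card with hs
  set P : (Coord n → Bool) → Prop := fun f =>
    ∀ z : Fin n, z ∉ S →
      ¬((∀ x ∈ X, (Gf f).Adj z x) ∧ (∀ y ∈ Y, ¬ (Gf f).Adj z y)) with hP
  set pat : {w : Fin n // w ∈ S} → Bool := fun w => decide (w.1 ∈ X) with hpat
  set crossP : Coord n → Prop := fun e => ∃ a b : Fin n, a ∉ S ∧ b ∈ S ∧ e.1 = s(a, b)
    with hcrossP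
  -- the not-equal lemma
  have hne : ∀ (z : {z : Fin n // z ∉ S}) (w : {w : Fin n // w ∈ S}), z.1 ≠ w.1 := by
    intro z w h
    exact z.2 (by rw [h]; exact w.2)
  -- injective map
  have key : Fintype.card {f : Coord n → Bool // P f} ≤
      Fintype.card ((∀ _z : {z : Fin n // z ∉ S}, {g : {w : Fin n // w ∈ S} → Bool // g ≠ pat})
        × ({e : Coord n // ¬ crossP e} → Bool)) := by
    apply Fintype.card_le_of_injective (fun fp =>
      (fun z => ⟨fun w => fp.1 (cedge z.1 w.1 (hne z w)), by
        intro heq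
        refine fp.2 z.1 z.2 ⟨?_, ?_⟩
        · intro x hx
          rw [adj_iff fp.1 (hne z ⟨x, mem_union_left Y hx⟩)]
          have := congrFun heq ⟨x, mem_union_left Y hx⟩
          simpa [hpat, hx] using this
        · intro y hy hadj
          rw [adj_iff fp.1 (hne z ⟨y, mem_union_right X hy⟩)] at hadj
          have := congrFun heq ⟨y, mem_union_right X hy⟩
          rw [hadj] at this
          simp [hpat, Finset.disjoint_right.mp hd hy] at this⟩,
       fun e => fp.1 e.1))
    intro f1 f2 h
    apply Subtype.ext
    funext e
    by_cases hc : crossP e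
    · obtain ⟨a, b, haS, hbS, he⟩ := hc
      have hab : a ≠ b := fun hh => haS (by rw [hh]; exact hbS)
      have he' : e = cedge a b hab := Subtype.ext he
      have h1 := congrFun (congrArg Prod.fst h) ⟨a, haS⟩
      have h2 := congrFun (congrArg Subtype.val h1) ⟨b, hbS⟩
      rw [he']
      exact h2
    · exact congrFun (congrArg Prod.snd h) ⟨e, hc⟩
  -- cardinalities
  have cardS : Fintype.card {w : Fin n // w ∈ S} = s := by
    rw [← hsc]; exact Fintype.card_coe S
  have cardOut : Fintype.card {z : Fin n // z ∉ S} = n - s := by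
    have h1 := Fintype.card_subtype_compl (fun z : Fin n => z ∈ S)
    have h2 : Fintype.card {z : Fin n // z ∈ S} = s := by
      rw [← hsc]; exact Fintype.card_coe S
    rw [h1, h2, Fintype.card_fin]
  have cardG : Fintype.card {g : {w : Fin n // w ∈ S} → Bool // g ≠ pat} = 2 ^ s - 1 := by
    have h1 : Fintype.card {g : {w : Fin n // w ∈ S} → Bool // ¬ g = pat} =
        Fintype.card ({w : Fin n // w ∈ S} → Bool) -
        Fintype.card {g : {w : Fin n // w ∈ S} → Bool // g = pat} :=
      Fintype.card_subtype_compl _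
    rw [h1, Fintype.card_subtype_eq, Fintype.card_fun, Fintype.card_bool, cardS]
  have cardTarget : Fintype.card
      ((∀ _z : {z : Fin n // z ∉ S}, {g : {w : Fin n // w ∈ S} → Bool // g ≠ pat})
        × ({e : Coord n // ¬ crossP e} → Bool))
      = (2 ^ s - 1) ^ (n - s) * 2 ^ (Fintype.card {e : Coord n // ¬ crossP e}) := by
    rw [Fintype.card_prod, Fintype.card_pi, Fintype.card_fun, Fintype.card_bool]
    congr 1
    rw [Finset.prod_congr rfl (fun z _ => cardG), Finset.prod_const, Finset.card_univ, cardOut]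
  -- crossing coordinates
  have cardCross : (n - s) * s ≤ Fintype.card {e : Coord n // crossP e} := by
    have := Fintype.card_le_of_injective
      (fun p : {z : Fin n // z ∉ S} × {w : Fin n // w ∈ S} =>
        (⟨cedge p.1.1 p.2.1 (hne p.1 p.2), ⟨p.1.1, p.2.1, p.1.2, p.2.2, rfl⟩⟩ :
          {e : Coord n // crossP e}))
      (by
        rintro ⟨z, w⟩ ⟨z', w'⟩ h
        have hval : (s(z.1, w.1) : Sym2 (Fin n)) = s(z'.1, w'.1) :=
          congrArg (fun e => e.1.1) h
        rw [Sym2.eq_iff] at hval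
        rcases hval with ⟨h1, h2⟩ | ⟨h1, h2⟩
        · exact Prod.ext (Subtype.ext h1) (Subtype.ext h2)
        · exact absurd (h1 ▸ w'.2) z.2)
    rwa [Fintype.card_prod, cardOut, cardS] at this
  have cRest : Fintype.card {e : Coord n // ¬ crossP e} =
      Fintype.card (Coord n) - Fintype.card {e : Coord n // crossP e} :=
    Fintype.card_subtype_compl _
  have hCle : Fintype.card {e : Coord n // crossP e} ≤ Fintype.card (Coord n) :=
    Fintype.card_subtype_le _
  have hexp : Fintype.card {e : Coord n // ¬ crossP e} + s * (n - s) ≤ Fintype.card (Coord n) := by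
    have h' : s * (n - s) ≤ Fintype.card {e : Coord n // crossP e} := by
      rw [mul_comm]; exact cardCross
    omega
  -- assemble
  have hfilter : (univ.filter (fun f : Coord n → Bool =>
      ∀ z : Fin n, z ∉ X ∪ Y →
        ¬((∀ x ∈ X, (Gf f).Adj z x) ∧ (∀ y ∈ Y, ¬ (Gf f).Adj z y)))).card
      = Fintype.card {f : Coord n → Bool // P f} := by
    rw [Fintype.card_subtype]
  rw [hfilter]
  calc Fintype.card {f : Coord n → Bool // P f} * 2 ^ (s * (n - s))
      ≤ ((2 ^ s - 1) ^ (n - s) * 2 ^ (Fintype.card {e : Coord n // ¬ crossP e}))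
          * 2 ^ (s * (n - s)) := by
        apply Nat.mul_le_mul_right
        rw [← cardTarget]
        exact key
    _ = (2 ^ s - 1) ^ (n - s) *
          2 ^ (Fintype.card {e : Coord n // ¬ crossP e} + s * (n - s)) := by
        rw [mul_assoc, ← pow_add]
    _ ≤ (2 ^ s - 1) ^ (n - s) * 2 ^ (Fintype.card (Coord n)) := by
        apply Nat.mul_le_mul_left
        exact Nat.pow_le_pow_right (by norm_num) hexp

lemma cardB_le (ℓ : ℕ) (F' : SimpleGraph (Fin ℓ)) (φ : Fin ℓ ↪ Fin n) :
    (univ.filter (fun f : Coord n → Bool =>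
        ∀ i j : Fin ℓ, (F'.Adj i j ↔ (Gf f).Adj (φ i) (φ j)))).card
      * 2 ^ (ℓ.choose 2)
    ≤ 2 ^ (Fintype.card (Coord n)) := by
  set pairP : Coord n → Prop := fun e => ∃ i j : Fin ℓ, i ≠ j ∧ e.1 = s(φ i, φ j) with hpairP
  set P : (Coord n → Bool) → Prop := fun f =>
    ∀ i j : Fin ℓ, (F'.Adj i j ↔ (Gf f).Adj (φ i) (φ j)) with hP
  have key : Fintype.card {f : Coord n → Bool // P f} ≤
      Fintype.card ({e : Coord n // ¬ pairP e} → Bool) := by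
    apply Fintype.card_le_of_injective (fun fp => fun e => fp.1 e.1)
    intro f1 f2 h
    apply Subtype.ext; funext e
    by_cases hc : pairP e
    · obtain ⟨i, j, hij, he⟩ := hc
      have hφ : φ i ≠ φ j := fun hh => hij (φ.injective hh)
      have he' : e = cedge (φ i) (φ j) hφ := Subtype.ext he
      have H1 := (f1.2 i j).trans (adj_iff f1.1 hφ)
      have H2 := (f2.2 i j).trans (adj_iff f2.1 hφ)
      rw [he']
      exact Bool.eq_iff_iff.mpr (H1.symm.trans H2)
    · exact congrFun h ⟨e, hc⟩
  have cardPair : ℓ.choose 2 ≤ Fintype.card {e : Coord n // pairP e} := by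
    have hinj : Function.Injective
        (fun z : {z : Sym2 (Fin ℓ) // ¬ z.IsDiag} =>
          (⟨⟨z.1.map φ, by
              obtain ⟨⟨i, j⟩, hij⟩ := Quot.exists_rep z.1
              have hz := z.2
              rw [← hij] at hz ⊢
              rw [Sym2.map_pair_eq]
              simp only [Sym2.mk_isDiag_iff] at hz ⊢
              exact fun hh => hz (φ.injective hh)⟩,
            by
              obtain ⟨⟨i, j⟩, hij⟩ := Quot.exists_rep z.1
              have hz := z.2
              rw [← hij] at hz
              simp only [Sym2.mk_isDiag_iff] at hz
              exact ⟨i, j, hz, by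
                show Sym2.map ⇑φ z.1 = s(φ i, φ j)
                rw [← hij, Sym2.map_pair_eq]⟩⟩ :
              {e : Coord n // pairP e})) := by
      intro z1 z2 h
      have : z1.1.map φ = z2.1.map φ := congrArg (fun e => e.1.1) h
      exact Subtype.ext (Sym2.map.injective φ.injective this)
    have := Fintype.card_le_of_injective _ hinj
    rwa [Sym2.card_subtype_not_diag, Fintype.card_fin] at this
  have cRest : Fintype.card {e : Coord n // ¬ pairP e} =
      Fintype.card (Coord n) - Fintype.card {e : Coord n // pairP e} :=
    Fintype.card_subtype_compl _
  have hCle : Fintype.card {e : Coord n // pairP e} ≤ Fintype.card (Coord n) :=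
    Fintype.card_subtype_le _
  have hfilter : (univ.filter (fun f : Coord n → Bool =>
      ∀ i j : Fin ℓ, (F'.Adj i j ↔ (Gf f).Adj (φ i) (φ j)))).card
      = Fintype.card {f : Coord n → Bool // P f} := by
    rw [Fintype.card_subtype]
  rw [hfilter]
  calc Fintype.card {f : Coord n → Bool // P f} * 2 ^ (ℓ.choose 2)
      ≤ 2 ^ (Fintype.card {e : Coord n // ¬ pairP e}) * 2 ^ (ℓ.choose 2) := by
        apply Nat.mul_le_mul_right
        simpa [Fintype.card_fun] using key
    _ = 2 ^ (Fintype.card {e : Coord n // ¬ pairP e} + ℓ.choose 2) := by rw [← pow_add]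
    _ ≤ 2 ^ (Fintype.card (Coord n)) := by
        apply Nat.pow_le_pow_right (by norm_num)
        omega


lemma sum_pow_le {n : ℕ} (hn : 2 ≤ n) : ∀ m, 1 ≤ m → (∑ i ∈ range m, n ^ i) ≤ 2 * n ^ (m - 1) := by
  intro m
  induction m with
  | zero => omega
  | succ m ih =>
    intro _
    rcases Nat.eq_zero_or_pos m with h | h
    · subst h; simp
    · have hm : 1 ≤ m := h
      rw [Finset.sum_range_succ]
      have h1 := ih hm
      have h2 : 2 * n ^ (m - 1) ≤ n ^ m := by
        calc 2 * n ^ (m - 1) ≤ n * n ^ (m - 1) := Nat.mul_le_mul_right _ hn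
          _ = n ^ m := by
            rw [← pow_succ']
            congr 1
            omega
      have : m + 1 - 1 = m := by omega
      rw [this]
      calc (∑ i ∈ range m, n ^ i) + n ^ m ≤ n ^ m + n ^ m := by
            exact Nat.add_le_add_right (h1.trans h2) _
        _ = 2 * n ^ m := by ring

lemma card_pairs_le {n : ℕ} (m : ℕ) (hm : 1 ≤ m) (hn : 2 ≤ n) :
    (((univ : Finset (Fin n)).powerset ×ˢ (univ : Finset (Fin n)).powerset).filter
      (fun XY => Disjoint XY.1 XY.2 ∧ XY.1.card + XY.2.card < m)).card
      ≤ 2 ^ m * n ^ (m - 1) := by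
  set Pairs := (((univ : Finset (Fin n)).powerset ×ˢ (univ : Finset (Fin n)).powerset).filter
      (fun XY => Disjoint XY.1 XY.2 ∧ XY.1.card + XY.2.card < m)) with hPairs
  set Fil := (univ : Finset (Fin n)).powerset.filter (fun S => S.card < m) with hFil
  set T := Fil.biUnion (fun S => S.powerset.image (fun X => (S, X))) with hT
  have hmap : Pairs.card ≤ T.card := by
    apply Finset.card_le_card_of_injOn (fun XY => (XY.1 ∪ XY.2, XY.1))
    · intro XY hXY
      rw [hPairs, Finset.mem_coe, Finset.mem_filter] at hXY
      obtain ⟨-, hdisj, hcard⟩ := hXY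
      rw [hT, Finset.mem_coe, Finset.mem_biUnion]
      refine ⟨XY.1 ∪ XY.2, ?_, ?_⟩
      · rw [hFil, Finset.mem_filter]
        exact ⟨Finset.mem_powerset.mpr (Finset.subset_univ _),
          lt_of_le_of_lt (Finset.card_union_le _ _) hcard⟩
      · rw [Finset.mem_image]
        exact ⟨XY.1, Finset.mem_powerset.mpr Finset.subset_union_left, rfl⟩
    · intro XY hXY XY' hXY' h
      rw [hPairs, Finset.coe_filter, Set.mem_setOf_eq] at hXY hXY'
      have h1 : XY.1 ∪ XY.2 = XY'.1 ∪ XY'.2 := congrArg Prod.fst h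
      have h2 : XY.1 = XY'.1 := congrArg Prod.snd h
      have h3 : XY.2 = XY'.2 := by
        have e1 : (XY.1 ∪ XY.2) \ XY.1 = XY.2 := Finset.union_sdiff_cancel_left hXY.2.1
        have e2 : (XY'.1 ∪ XY'.2) \ XY'.1 = XY'.2 := Finset.union_sdiff_cancel_left hXY'.2.1
        rw [← e1, ← e2, h1, h2]
      exact Prod.ext h2 h3
  have hT2 : T.card ≤ Fil.card * 2 ^ (m - 1) := by
    calc T.card ≤ ∑ S ∈ Fil, (S.powerset.image (fun X => (S, X))).card :=
          Finset.card_biUnion_le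
      _ ≤ ∑ S ∈ Fil, 2 ^ (m - 1) := by
          apply Finset.sum_le_sum
          intro S hS
          calc (S.powerset.image (fun X => (S, X))).card ≤ S.powerset.card :=
                Finset.card_image_le
            _ = 2 ^ S.card := Finset.card_powerset S
            _ ≤ 2 ^ (m - 1) := by
                apply Nat.pow_le_pow_right (by norm_num)
                rw [hFil, Finset.mem_filter] at hS
                omega
      _ = Fil.card * 2 ^ (m - 1) := by rw [Finset.sum_const, smul_eq_mul]
  have hFil2 : Fil.card ≤ 2 * n ^ (m - 1) := by
    have heq : Fil = (range m).biUnion (fun i => Finset.powersetCard i univ) := by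
      ext S
      rw [hFil, Finset.mem_filter, Finset.mem_biUnion]
      constructor
      · rintro ⟨-, hc⟩
        exact ⟨S.card, Finset.mem_range.mpr hc, Finset.mem_powersetCard.mpr
          ⟨Finset.subset_univ _, rfl⟩⟩
      · rintro ⟨i, hi, hS⟩
        rw [Finset.mem_powersetCard] at hS
        exact ⟨Finset.mem_powerset.mpr (Finset.subset_univ _), by
          rw [hS.2]; exact Finset.mem_range.mp hi⟩
    have hdisj : ∀ i ∈ range m, ∀ j ∈ range m, i ≠ j →
        Disjoint (Finset.powersetCard i (univ : Finset (Fin n)))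
          (Finset.powersetCard j univ) := by
      intro i _ j _ hij
      rw [Finset.disjoint_left]
      intro S hSi hSj
      rw [Finset.mem_powersetCard] at hSi hSj
      exact hij (hSi.2 ▸ hSj.2 ▸ rfl)
    rw [heq, Finset.card_biUnion hdisj]
    calc (∑ i ∈ range m, (Finset.powersetCard i (univ : Finset (Fin n))).card)
        = ∑ i ∈ range m, n.choose i := by
          apply Finset.sum_congr rfl
          intro i _
          rw [Finset.card_powersetCard, Finset.card_univ, Fintype.card_fin]
      _ ≤ ∑ i ∈ range m, n ^ i := Finset.sum_le_sum (fun i _ => Nat.choose_le_pow n i)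
      _ ≤ 2 * n ^ (m - 1) := sum_pow_le hn m hm
  calc Pairs.card ≤ Fil.card * 2 ^ (m - 1) := hmap.trans hT2
    _ ≤ (2 * n ^ (m - 1)) * 2 ^ (m - 1) := Nat.mul_le_mul_right _ hFil2
    _ = 2 ^ m * n ^ (m - 1) := by
        rw [mul_comm (2 * n ^ (m - 1)) _, ← mul_assoc, mul_comm _ 2]
        congr 1
        rw [mul_comm]
        rw [← pow_succ]
        congr 1
        omega


lemma aux16 : ∀ j, 7 ≤ j → 16 * j + 16 ≤ 2 ^ j := by
  intro j
  induction j with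
  | zero => omega
  | succ j ih =>
    intro hj
    rcases Nat.lt_or_ge j 7 with h | h
    · have : j = 6 := by omega
      subst this; norm_num
    · have h1 := ih h
      calc 16 * (j + 1) + 16 ≤ 2 * (16 * j + 16) := by omega
        _ ≤ 2 * 2 ^ j := by omega
        _ = 2 ^ (j + 1) := by rw [pow_succ]; ring

lemma nat8 (t : ℕ) (ht : 16 ≤ t) : 8 * t ≤ 2 ^ ((t - 1) / 2) := by
  set j := (t - 1) / 2 with hj
  have h1 : 7 ≤ j := by omega
  have h2 : t ≤ 2 * j + 2 := by omega
  calc 8 * t ≤ 8 * (2 * j + 2) := by omega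
    _ = 16 * j + 16 := by ring
    _ ≤ 2 ^ j := aux16 j h1

lemma ell_ge_16 {ℓ : ℕ} (hℓ : 2 ≤ ℓ)
    (h3L : (3 : ℝ) ≤ (ℓ : ℝ) / 2 - 2 * Real.logb 2 ℓ + 3) : 16 ≤ ℓ := by
  by_contra hlt
  push_neg at hlt
  have hℓpos : (0:ℝ) < (ℓ:ℝ) := by
    have : 0 < ℓ := by omega
    exact_mod_cast this
  have hkey : (ℓ:ℝ)/4 < Real.logb 2 ℓ := by
    rw [Real.lt_logb_iff_rpow_lt one_lt_two hℓpos]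
    have h4 : ((2:ℝ) ^ ((ℓ:ℝ)/4)) ^ (4:ℕ) = 2 ^ ℓ := by
      rw [← Real.rpow_natCast ((2:ℝ) ^ ((ℓ:ℝ)/4)) 4, ← Real.rpow_mul (by norm_num : (0:ℝ) ≤ 2)]
      have h44 : (ℓ:ℝ)/4 * ((4:ℕ):ℝ) = ((ℓ:ℕ):ℝ) := by push_cast; ring
      rw [h44, Real.rpow_natCast]
    have hpow : ((2:ℝ) ^ ((ℓ:ℝ)/4)) ^ (4:ℕ) < (ℓ:ℝ) ^ (4:ℕ) := by
      rw [h4]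
      interval_cases ℓ <;> norm_num
    exact lt_of_pow_lt_pow_left₀ 4 (le_of_lt hℓpos) hpow
  linarith

lemma real_pair_bound {n m s cA cE : ℕ} (hs : s < m) (hm : 2 ≤ m) (hmn : m ≤ n)
    (hA : cA * 2 ^ (s * (n - s)) ≤ (2 ^ s - 1) ^ (n - s) * 2 ^ cE) :
    (cA : ℝ) ≤ (1 - (2:ℝ) ^ ((1:ℤ) - (m:ℤ))) ^ (n - m) * 2 ^ cE := by
  have h2s : (1:ℕ) ≤ 2 ^ s := Nat.one_le_two_pow
  have hcast : (cA : ℝ) * 2 ^ (s * (n - s)) ≤ ((2:ℝ) ^ s - 1) ^ (n - s) * 2 ^ cE := by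
    have h := (Nat.cast_le (α := ℝ)).mpr hA
    push_cast [Nat.cast_sub h2s] at h
    convert h using 3 <;> push_cast <;> ring
  set a : ℝ := (2:ℝ) ^ s with ha
  have hapos : (0:ℝ) < a := by positivity
  have hainv1 : a⁻¹ ≤ 1 := by
    rw [inv_le_one_iff₀]
    right
    exact one_le_pow₀ one_le_two
  have hinv : ((2:ℝ) ^ s - 1) ^ (n - s) / 2 ^ (s * (n - s)) = (1 - a⁻¹) ^ (n - s) := by
    rw [pow_mul, ← div_pow]
    congr 1
    field_simp
    rw [ha]; ring
  have h1 : (cA : ℝ) ≤ (1 - a⁻¹) ^ (n - s) * 2 ^ cE := by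
    rw [← hinv, div_mul_eq_mul_div, le_div_iff₀ (by positivity)]
    calc (cA:ℝ) * 2 ^ (s * (n-s)) ≤ ((2:ℝ) ^ s - 1) ^ (n - s) * 2 ^ cE := hcast
      _ = ((2:ℝ) ^ s - 1) ^ (n - s) * 2 ^ cE := rfl
  have heps_le : (2:ℝ) ^ ((1:ℤ) - (m:ℤ)) ≤ a⁻¹ := by
    have hae : a⁻¹ = (2:ℝ) ^ (-(s:ℤ)) := by
      rw [zpow_neg, zpow_natCast]
    rw [hae]
    apply zpow_le_zpow_right₀ one_le_two
    omega
  have hεpos : (0:ℝ) < (2:ℝ) ^ ((1:ℤ) - (m:ℤ)) := by positivity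
  have hbase1 : (0:ℝ) ≤ 1 - a⁻¹ := by linarith
  have h2 : (1 - a⁻¹) ^ (n - s) ≤ (1 - (2:ℝ) ^ ((1:ℤ) - (m:ℤ))) ^ (n - s) :=
    pow_le_pow_left₀ hbase1 (by linarith) _
  have h3 : (1 - (2:ℝ) ^ ((1:ℤ) - (m:ℤ))) ^ (n - s) ≤
      (1 - (2:ℝ) ^ ((1:ℤ) - (m:ℤ))) ^ (n - m) := by
    apply pow_le_pow_of_le_one (by linarith) (by linarith)
    omega
  calc (cA : ℝ) ≤ (1 - a⁻¹) ^ (n - s) * 2 ^ cE := h1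
    _ ≤ (1 - (2:ℝ) ^ ((1:ℤ) - (m:ℤ))) ^ (n - s) * 2 ^ cE := by
        apply mul_le_mul_of_nonneg_right h2 (by positivity)
    _ ≤ (1 - (2:ℝ) ^ ((1:ℤ) - (m:ℤ))) ^ (n - m) * 2 ^ cE := by
        apply mul_le_mul_of_nonneg_right h3 (by positivity)


lemma core (ℓ m h n : ℕ) (k : ℤ)
    (hℓ16 : 16 ≤ ℓ) (hm2 : 2 ≤ m) (hkm : (m:ℤ) = k - 1)
    (hh2 : 2 * h ≤ ℓ - 1) (hh3 : ℓ ≤ 2 * h + 2) (hn : n = 2 ^ h) (h16m : 16 * m ≤ n)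
    (hkL : (k:ℝ) ≤ (ℓ:ℝ)/2 - 2 * Real.logb 2 ℓ + 3) :
    ((2:ℝ)^m * (n:ℝ)^(m-1)) * (1 - (2:ℝ)^((1:ℤ)-(m:ℤ)))^(n-m) * n < (ℓ:ℝ) - 1 := by
  have hℓR : (16:ℝ) ≤ (ℓ:ℝ) := by exact_mod_cast hℓ16
  set c : ℝ := Real.logb 2 ℓ with hc
  have hℓpos : (0:ℝ) < (ℓ:ℝ) := by linarith
  have hc4 : (4:ℝ) ≤ c := by
    rw [hc, Real.le_logb_iff_rpow_le one_lt_two hℓpos]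
    have h16 : (2:ℝ) ^ (4:ℝ) = 16 := by
      rw [show (4:ℝ) = ((4:ℕ):ℝ) by norm_num, Real.rpow_natCast]
      norm_num
    rw [h16]; exact hℓR
  set ε : ℝ := (2:ℝ)^((1:ℤ)-(m:ℤ)) with hε
  have hεpos : (0:ℝ) < ε := by rw [hε]; positivity
  have hεle1 : ε ≤ 1 := by
    rw [hε]
    calc (2:ℝ)^((1:ℤ)-(m:ℤ)) ≤ (2:ℝ)^(0:ℤ) := by
          apply zpow_le_zpow_right₀ one_le_two
          omega
      _ = 1 := zpow_zero 2
  have hlog2 : Real.log 2 < 0.6931471808 := Real.log_two_lt_d9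
  have hlogpos : (0:ℝ) < Real.log 2 := Real.log_pos one_lt_two
  have hhR : (h:ℝ) ≤ ((ℓ:ℝ)-1)/2 := by
    have h2 : ((2*h:ℕ):ℝ) ≤ ((ℓ-1:ℕ):ℝ) := by exact_mod_cast hh2
    have h3 : ((ℓ-1:ℕ):ℝ) = (ℓ:ℝ) - 1 := by
      have h1 : 1 ≤ ℓ := by omega
      push_cast [Nat.cast_sub h1]
      ring
    push_cast at h2
    rw [h3] at h2
    linarith
  have hmR : (m:ℝ) ≤ (ℓ:ℝ)/2 - 2*c + 2 := by
    have hmk : (m:ℝ) = (k:ℝ) - 1 := by exact_mod_cast hkm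
    rw [hmk]; linarith
  have hmle : (m:ℝ) ≤ (ℓ:ℝ)/2 - 6 := by linarith
  have hm2R : (2:ℝ) ≤ (m:ℝ) := by exact_mod_cast hm2
  have hNbound : (((h+1)*m : ℕ):ℝ) ≤ (((ℓ:ℝ)+1)/2) * ((ℓ:ℝ)/2 - 6) := by
    push_cast
    have h1 : (h:ℝ) + 1 ≤ ((ℓ:ℝ)+1)/2 := by linarith
    apply mul_le_mul h1 hmle (by linarith) (by linarith)
  have hεlow : (ℓ:ℝ)^2 * (2:ℝ) ^ (-(ℓ:ℝ)/2 - 1) ≤ ε := by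
    have hεrpow : ε = (2:ℝ) ^ ((((1:ℤ)-(m:ℤ)) : ℤ):ℝ) := by
      rw [hε, Real.rpow_intCast]
    have hklm : ((((1:ℤ)-(m:ℤ)) : ℤ):ℝ) = 2 - (k:ℝ) := by
      push_cast [hkm]; ring
    rw [hεrpow, hklm]
    have hexpkL : 2*c + (-(ℓ:ℝ)/2 - 1) ≤ ((2:ℝ) - (k:ℝ)) := by linarith
    have step1 : (2:ℝ) ^ (2*c + (-(ℓ:ℝ)/2 - 1)) ≤ (2:ℝ) ^ (2 - (k:ℝ)) :=
      Real.rpow_le_rpow_of_exponent_le one_le_two hexpkL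
    have step2 : (2:ℝ) ^ (2*c + (-(ℓ:ℝ)/2 - 1)) =
        (2:ℝ) ^ (2*c) * (2:ℝ) ^ (-(ℓ:ℝ)/2 - 1) :=
      Real.rpow_add two_pos _ _
    have step3 : (2:ℝ) ^ (2*c) = (ℓ:ℝ)^2 := by
      rw [show (2*c : ℝ) = c*2 by ring, Real.rpow_mul (by norm_num : (0:ℝ) ≤ 2),
        Real.rpow_logb two_pos (by norm_num) hℓpos,
        show ((2:ℝ)) = ((2:ℕ):ℝ) by norm_num, Real.rpow_natCast]
    calc (ℓ:ℝ)^2 * (2:ℝ) ^ (-(ℓ:ℝ)/2 - 1)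
        = (2:ℝ) ^ (2*c + (-(ℓ:ℝ)/2 - 1)) := by rw [step2, step3]
      _ ≤ (2:ℝ) ^ (2 - (k:ℝ)) := step1
  have hnR : (n:ℝ) = (2:ℝ) ^ ((h:ℕ):ℝ) := by
    rw [hn, Real.rpow_natCast]
    push_cast
    ring
  have hnrpow : (1:ℝ)/4 ≤ (n:ℝ) * (2:ℝ) ^ (-(ℓ:ℝ)/2 - 1) := by
    rw [hnR, ← Real.rpow_add two_pos]
    have hℓ2h : (ℓ:ℝ) ≤ 2*(h:ℝ) + 2 := by exact_mod_cast hh3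
    have hexp : (-2:ℝ) ≤ ((h:ℕ):ℝ) + (-(ℓ:ℝ)/2 - 1) := by
      push_cast
      linarith
    calc (1:ℝ)/4 = (2:ℝ) ^ (((-2:ℤ)):ℝ) := by
          rw [Real.rpow_intCast]; norm_num
      _ ≤ (2:ℝ) ^ (((h:ℕ):ℝ) + (-(ℓ:ℝ)/2 - 1)) := by
          apply Real.rpow_le_rpow_of_exponent_le one_le_two
          push_cast
          push_cast at hexp
          linarith
  have hmn : m ≤ n := by omega
  have hnmR : (15/16:ℝ) * n ≤ ((n - m : ℕ):ℝ) := by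
    have h1 : ((n - m:ℕ):ℝ) = (n:ℝ) - m := by
      push_cast [Nat.cast_sub hmn]
      ring
    rw [h1]
    have h2 : (16:ℝ)*m ≤ n := by exact_mod_cast h16m
    linarith
  have hnpos : (0:ℝ) < n := by
    have : 0 < n := by omega
    exact_mod_cast this
  have hkey : (((h+1)*m : ℕ):ℝ) * Real.log 2 < ε * ((n - m : ℕ):ℝ) := by
    have hQnn : (0:ℝ) ≤ ((ℓ:ℝ)+1)/2 * ((ℓ:ℝ)/2 - 6) := by nlinarith
    have lhs_le : (((h+1)*m : ℕ):ℝ) * Real.log 2 ≤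
        (((ℓ:ℝ)+1)/2 * ((ℓ:ℝ)/2 - 6)) * 0.6931471808 := by
      apply mul_le_mul hNbound (le_of_lt hlog2) (le_of_lt hlogpos) hQnn
    have rhs_ge : (15/64:ℝ) * (ℓ:ℝ)^2 ≤ ε * ((n-m:ℕ):ℝ) := by
      calc (15/64:ℝ) * (ℓ:ℝ)^2 = ((ℓ:ℝ)^2 * (1/4)) * (15/16) := by ring
        _ ≤ ((ℓ:ℝ)^2 * ((n:ℝ) * (2:ℝ) ^ (-(ℓ:ℝ)/2-1))) * (15/16) := by
            apply mul_le_mul_of_nonneg_right _ (by norm_num)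
            apply mul_le_mul_of_nonneg_left hnrpow (by positivity)
        _ = ((ℓ:ℝ)^2 * (2:ℝ) ^ (-(ℓ:ℝ)/2-1)) * ((15/16)*(n:ℝ)) := by ring
        _ ≤ ε * ((n-m:ℕ):ℝ) := by
            apply mul_le_mul hεlow hnmR (by positivity) (le_of_lt hεpos)
    have middle : (((ℓ:ℝ)+1)/2 * ((ℓ:ℝ)/2 - 6)) * 0.6931471808 < (15/64:ℝ) * (ℓ:ℝ)^2 := by
      nlinarith [sq_nonneg ((ℓ:ℝ))]
    linarith
  have hnm1 : (n:ℝ)^(m-1) * n = (n:ℝ)^m := by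
    rw [← pow_succ]
    congr 1
    omega
  have hnr2 : (n:ℝ) = (2:ℝ)^h := by
    rw [hn]; push_cast; ring
  have h2n : (2:ℝ)^m * (n:ℝ)^m = (2:ℝ)^((h+1)*m) := by
    rw [← mul_pow, show (2:ℝ) * (n:ℝ) = (2:ℝ)^(h+1) by rw [hnr2, pow_succ]; ring, ← pow_mul]
  have hpowexp : (2:ℝ)^((h+1)*m) = Real.exp ((((h+1)*m:ℕ):ℝ) * Real.log 2) := by
    conv_lhs => rw [← Real.exp_log (show (0:ℝ) < 2 from two_pos)]
    rw [← Real.exp_nat_mul]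
  have hone_sub : (1 - ε)^(n-m) ≤ Real.exp (((n-m:ℕ):ℝ) * (-ε)) := by
    have hes : 1 - ε ≤ Real.exp (-ε) := by
      have := Real.add_one_le_exp (-ε)
      linarith
    calc (1-ε)^(n-m) ≤ (Real.exp (-ε))^(n-m) := pow_le_pow_left₀ (by linarith) hes _
      _ = Real.exp (((n-m:ℕ):ℝ) * (-ε)) := (Real.exp_nat_mul _ _).symm
  calc ((2:ℝ)^m * (n:ℝ)^(m-1)) * (1 - ε)^(n-m) * n
      = ((2:ℝ)^m * ((n:ℝ)^(m-1) * n)) * (1-ε)^(n-m) := by ring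
    _ = (2:ℝ)^((h+1)*m) * (1-ε)^(n-m) := by rw [hnm1, ← h2n]
    _ ≤ Real.exp ((((h+1)*m:ℕ):ℝ) * Real.log 2) * Real.exp (((n-m:ℕ):ℝ) * (-ε)) := by
        rw [hpowexp]
        apply mul_le_mul_of_nonneg_left hone_sub (le_of_lt (Real.exp_pos _))
    _ = Real.exp ((((h+1)*m:ℕ):ℝ) * Real.log 2 + ((n-m:ℕ):ℝ) * (-ε)) := (Real.exp_add _ _).symm
    _ < Real.exp 0 := by
        apply Real.exp_lt_exp.mpr
        have hre : ((n-m:ℕ):ℝ) * (-ε) = -(ε * ((n-m:ℕ):ℝ)) := by ring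
        rw [hre]
        linarith
    _ = 1 := Real.exp_zero
    _ ≤ (ℓ:ℝ) - 1 := by linarith

lemma choose_ge (ℓ h : ℕ) (hh2 : 2*h ≤ ℓ - 1) (hℓ : 1 ≤ ℓ) : h * ℓ ≤ ℓ.choose 2 := by
  rw [Nat.choose_two_right]
  rw [Nat.le_div_iff_mul_le (by norm_num : 0 < 2)]
  calc h * ℓ * 2 = (2*h) * ℓ := by ring
    _ ≤ (ℓ-1) * ℓ := Nat.mul_le_mul_right ℓ hh2
    _ = ℓ * (ℓ-1) := Nat.mul_comm _ _

lemma descf (n t : ℕ) : n.descFactorial (t+1) ≤ (n - t) * n ^ t := by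
  rw [Nat.descFactorial_succ]
  exact Nat.mul_le_mul_left _ (Nat.descFactorial_le_pow _ _)

end ExtLB

open ExtLB

/-- Lower bound on the extension index: for every graph `F` on `ℓ ≥ 2` vertices and
`k = ⌊ℓ/2 - 2·log₂ ℓ + 3⌋`, there is a graph `H` with the `(k-1)`-extension property
containing no induced copy of `F`. -/
theorem extension_index_lower_bound
    {V : Type} [Fintype V] (F : SimpleGraph V) (ℓ : ℕ)
    (hV : Fintype.card V = ℓ) (hℓ : 2 ≤ ℓ)
    (k : ℤ) (hk : k = ⌊(ℓ : ℝ) / 2 - 2 * Real.logb 2 ℓ + 3⌋) :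
    ∃ (n : ℕ) (H : SimpleGraph (Fin n)),
      HasExtensionProperty H (k - 1).toNat ∧ IsEmpty (F ↪g H) := by
  classical
  by_cases hm1 : (k-1).toNat ≤ 1
  · refine ⟨1, ⊥, ?_, ?_⟩
    · intro X Y _ hcard
      have hX : X = ∅ := Finset.card_eq_zero.mp (by omega)
      have hY : Y = ∅ := Finset.card_eq_zero.mp (by omega)
      subst hX hY
      exact ⟨0, by simp, by simp, by simp, by simp⟩
    · refine ⟨fun ψ => ?_⟩
      have hc2 : Fintype.card V ≤ Fintype.card (Fin 1) :=
        Fintype.card_le_of_embedding ψ.toEmbedding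
      rw [hV, Fintype.card_fin] at hc2
      omega
  · push_neg at hm1
    set m : ℕ := (k-1).toNat with hmdef
    have hm2 : 2 ≤ m := hm1
    have hk3 : 3 ≤ k := by omega
    have hkm : (m:ℤ) = k - 1 := by omega
    have hkL : (k : ℝ) ≤ (ℓ : ℝ)/2 - 2 * Real.logb 2 ℓ + 3 := by
      rw [hk]; exact Int.floor_le _
    have h3L : (3 : ℝ) ≤ (ℓ : ℝ)/2 - 2 * Real.logb 2 ℓ + 3 := by
      have h1 : ((3:ℤ):ℝ) ≤ (k:ℝ) := by exact_mod_cast hk3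
      have h2 : ((3:ℤ):ℝ) = (3:ℝ) := by norm_num
      rw [← h2]
      exact h1.trans hkL
    have hℓ16 : 16 ≤ ℓ := ell_ge_16 hℓ h3L
    have hℓpos : (0:ℝ) < (ℓ:ℝ) := by
      have : 0 < ℓ := by omega
      exact_mod_cast this
    set h : ℕ := (ℓ - 1) / 2 with hhdef
    set n : ℕ := 2 ^ h with hndef
    have hh2 : 2 * h ≤ ℓ - 1 := by omega
    have hh3 : ℓ ≤ 2 * h + 2 := by omega
    have h8ℓ : 8 * ℓ ≤ n := nat8 ℓ hℓ16
    have hmℓ : 2 * m ≤ ℓ := by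
      have hc4 : (4:ℝ) ≤ Real.logb 2 ℓ := by
        rw [Real.le_logb_iff_rpow_le one_lt_two hℓpos]
        have h16 : (2:ℝ) ^ (4:ℝ) = 16 := by
          rw [show (4:ℝ) = ((4:ℕ):ℝ) by norm_num, Real.rpow_natCast]
          norm_num
        rw [h16]
        exact_mod_cast hℓ16
      have hmR : (m:ℝ) = (k:ℝ) - 1 := by exact_mod_cast hkm
      have h2 : ((2*m:ℕ):ℝ) ≤ (ℓ:ℝ) := by
        push_cast
        linarith
      exact_mod_cast h2
    have h16m : 16 * m ≤ n := by omega
    have hn2 : 2 ≤ n := by omega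
    have hmn : m ≤ n := by omega
    have hℓn : ℓ ≤ n := by omega
    have hnpos : (0:ℝ) < (n:ℝ) := by
      have : 0 < n := by omega
      exact_mod_cast this
    obtain ⟨e⟩ : Nonempty (V ≃ Fin ℓ) := ⟨Fintype.equivFinOfCardEq hV⟩
    set F' : SimpleGraph (Fin ℓ) :=
      { Adj := fun i j => F.Adj (e.symm i) (e.symm j)
        symm := ⟨fun i j hij => F.adj_symm hij⟩
        loopless := ⟨fun i hi => F.irrefl hi⟩ } with hF'
    have ι : F' ↪g F := ⟨e.symm.toEmbedding, fun {a b} => Iff.rfl⟩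
    set Bad1 : Finset (Coord n → Bool) :=
      univ.filter (fun f => ¬ HasExtensionProperty (Gf f) m) with hBad1
    set Bad2 : Finset (Coord n → Bool) :=
      univ.filter (fun f => Nonempty (F' ↪g Gf f)) with hBad2
    set Pairs : Finset (Finset (Fin n) × Finset (Fin n)) :=
      ((univ.powerset ×ˢ univ.powerset).filter
        (fun XY => Disjoint XY.1 XY.2 ∧ XY.1.card + XY.2.card < m)) with hPairs
    -- covering Bad1
    have hBad1sub : Bad1 ⊆ Pairs.biUnion (fun XY =>
        univ.filter (fun f : Coord n → Bool =>
          ∀ z : Fin n, z ∉ XY.1 ∪ XY.2 →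
            ¬((∀ x ∈ XY.1, (Gf f).Adj z x) ∧ (∀ y ∈ XY.2, ¬ (Gf f).Adj z y)))) := by
      intro f hf
      have hne := (Finset.mem_filter.mp hf).2
      rw [HasExtensionProperty] at hne
      push_neg at hne
      obtain ⟨X, Y, hdisj, hcard, hall⟩ := hne
      rw [Finset.mem_biUnion]
      refine ⟨(X, Y), Finset.mem_filter.mpr ⟨Finset.mem_product.mpr
        ⟨Finset.mem_powerset.mpr (Finset.subset_univ X),
         Finset.mem_powerset.mpr (Finset.subset_univ Y)⟩, hdisj, hcard⟩,
        Finset.mem_filter.mpr ⟨Finset.mem_univ f, ?_⟩⟩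
      intro z hz hcon
      rw [Finset.mem_union] at hz
      push_neg at hz
      have := hall z
      tauto
    -- covering Bad2
    have hBad2sub : Bad2 ⊆ (univ : Finset (Fin ℓ ↪ Fin n)).biUnion (fun φ =>
        univ.filter (fun f : Coord n → Bool =>
          ∀ i j : Fin ℓ, (F'.Adj i j ↔ (Gf f).Adj (φ i) (φ j)))) := by
      intro f hf
      obtain ⟨ψ⟩ := (Finset.mem_filter.mp hf).2
      rw [Finset.mem_biUnion]
      refine ⟨ψ.toEmbedding, Finset.mem_univ _,
        Finset.mem_filter.mpr ⟨Finset.mem_univ f, ?_⟩⟩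
      intro i j
      exact ψ.map_rel_iff.symm
    -- real bound for Bad1
    have hB1R : (Bad1.card : ℝ) ≤ ((2:ℝ)^m * (n:ℝ)^(m-1)) *
        ((1 - (2:ℝ)^((1:ℤ)-(m:ℤ)))^(n-m) * 2^(Fintype.card (Coord n))) := by
      have hstep1 : Bad1.card ≤ ∑ XY ∈ Pairs, (univ.filter (fun f : Coord n → Bool =>
          ∀ z : Fin n, z ∉ XY.1 ∪ XY.2 →
            ¬((∀ x ∈ XY.1, (Gf f).Adj z x) ∧ (∀ y ∈ XY.2, ¬ (Gf f).Adj z y)))).card :=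
        (Finset.card_le_card hBad1sub).trans Finset.card_biUnion_le
      have hMnn : (0:ℝ) ≤ (1 - (2:ℝ)^((1:ℤ)-(m:ℤ)))^(n-m) * 2^(Fintype.card (Coord n)) := by
        apply mul_nonneg _ (by positivity)
        apply pow_nonneg
        have : (2:ℝ)^((1:ℤ)-(m:ℤ)) ≤ (2:ℝ)^(0:ℤ) := by
          apply zpow_le_zpow_right₀ one_le_two
          omega
        simp only [zpow_zero] at this
        linarith
      calc (Bad1.card : ℝ)
          ≤ ((∑ XY ∈ Pairs, (univ.filter (fun f : Coord n → Bool =>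
              ∀ z : Fin n, z ∉ XY.1 ∪ XY.2 →
                ¬((∀ x ∈ XY.1, (Gf f).Adj z x) ∧
                  (∀ y ∈ XY.2, ¬ (Gf f).Adj z y)))).card : ℕ) : ℝ) := by
            exact_mod_cast hstep1
        _ = ∑ XY ∈ Pairs, ((univ.filter (fun f : Coord n → Bool =>
              ∀ z : Fin n, z ∉ XY.1 ∪ XY.2 →
                ¬((∀ x ∈ XY.1, (Gf f).Adj z x) ∧
                  (∀ y ∈ XY.2, ¬ (Gf f).Adj z y)))).card : ℝ) := by
            push_cast
            rfl
        _ ≤ ∑ _XY ∈ Pairs,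
              ((1 - (2:ℝ)^((1:ℤ)-(m:ℤ)))^(n-m) * 2^(Fintype.card (Coord n))) := by
            apply Finset.sum_le_sum
            intro XY hXY
            have hmem := Finset.mem_filter.mp hXY
            exact real_pair_bound hmem.2.2 hm2 hmn (cardA_le XY.1 XY.2 hmem.2.1)
        _ = (Pairs.card : ℝ) *
              ((1 - (2:ℝ)^((1:ℤ)-(m:ℤ)))^(n-m) * 2^(Fintype.card (Coord n))) := by
            rw [Finset.sum_const, nsmul_eq_mul]
        _ ≤ ((2:ℝ)^m * (n:ℝ)^(m-1)) *
              ((1 - (2:ℝ)^((1:ℤ)-(m:ℤ)))^(n-m) * 2^(Fintype.card (Coord n))) := by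
            apply mul_le_mul_of_nonneg_right _ hMnn
            have := card_pairs_le (n := n) m (by omega) hn2
            calc (Pairs.card : ℝ) ≤ ((2^m * n^(m-1) : ℕ) : ℝ) := by exact_mod_cast this
              _ = (2:ℝ)^m * (n:ℝ)^(m-1) := by push_cast; ring
    -- real bound for Bad2
    have hB2R : (Bad2.card : ℝ) ≤
        (((n - (ℓ-1) : ℕ) : ℝ) / n) * 2^(Fintype.card (Coord n)) := by
      have hstep1 : Bad2.card ≤ ∑ φ ∈ (univ : Finset (Fin ℓ ↪ Fin n)),
          (univ.filter (fun f : Coord n → Bool =>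
            ∀ i j : Fin ℓ, (F'.Adj i j ↔ (Gf f).Adj (φ i) (φ j)))).card :=
        (Finset.card_le_card hBad2sub).trans Finset.card_biUnion_le
      have hper : ∀ φ : Fin ℓ ↪ Fin n,
          ((univ.filter (fun f : Coord n → Bool =>
            ∀ i j : Fin ℓ, (F'.Adj i j ↔ (Gf f).Adj (φ i) (φ j)))).card : ℝ) ≤
          2^(Fintype.card (Coord n)) / 2^(ℓ.choose 2) := by
        intro φ
        rw [le_div_iff₀ (by positivity)]
        have := cardB_le ℓ F' φ
        exact_mod_cast this
      have hchoose : h * ℓ ≤ ℓ.choose 2 := choose_ge ℓ h hh2 (by omega)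
      have hnℓpow : (n:ℝ)^ℓ ≤ (2:ℝ)^(ℓ.choose 2) := by
        have h1 : (n:ℝ)^ℓ = (2:ℝ)^(h*ℓ) := by
          rw [hndef]
          push_cast
          rw [← pow_mul]
        rw [h1]
        apply pow_le_pow_right₀ one_le_two hchoose
      have hdesc : n.descFactorial ℓ ≤ (n - (ℓ-1)) * n ^ (ℓ-1) := by
        have hd := descf n (ℓ-1)
        rwa [show ℓ - 1 + 1 = ℓ by omega] at hd
      calc (Bad2.card : ℝ)
          ≤ ∑ φ ∈ (univ : Finset (Fin ℓ ↪ Fin n)),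
              ((univ.filter (fun f : Coord n → Bool =>
                ∀ i j : Fin ℓ, (F'.Adj i j ↔ (Gf f).Adj (φ i) (φ j)))).card : ℝ) := by
            have := hstep1
            calc (Bad2.card : ℝ) ≤ ((∑ φ ∈ (univ : Finset (Fin ℓ ↪ Fin n)),
                (univ.filter (fun f : Coord n → Bool =>
                  ∀ i j : Fin ℓ, (F'.Adj i j ↔ (Gf f).Adj (φ i) (φ j)))).card : ℕ) : ℝ) := by
                  exact_mod_cast this
              _ = _ := by push_cast; rfl
        _ ≤ ∑ _φ ∈ (univ : Finset (Fin ℓ ↪ Fin n)),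
              (2^(Fintype.card (Coord n)) / 2^(ℓ.choose 2) : ℝ) :=
            Finset.sum_le_sum (fun φ _ => hper φ)
        _ = (Fintype.card (Fin ℓ ↪ Fin n) : ℝ) *
              (2^(Fintype.card (Coord n)) / 2^(ℓ.choose 2)) := by
            rw [Finset.sum_const, nsmul_eq_mul, Finset.card_univ]
        _ = (n.descFactorial ℓ : ℝ) * (2^(Fintype.card (Coord n)) / 2^(ℓ.choose 2)) := by
            rw [Fintype.card_embedding_eq, Fintype.card_fin, Fintype.card_fin]
        _ ≤ (n.descFactorial ℓ : ℝ) * (2^(Fintype.card (Coord n)) / (n:ℝ)^ℓ) := by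
            apply mul_le_mul_of_nonneg_left _ (by positivity)
            apply div_le_div_of_nonneg_left (by positivity) (by positivity) hnℓpow
        _ ≤ (((n - (ℓ-1):ℕ) * n ^ (ℓ-1) : ℕ) : ℝ) *
              (2^(Fintype.card (Coord n)) / (n:ℝ)^ℓ) := by
            apply mul_le_mul_of_nonneg_right _ (by positivity)
            exact_mod_cast hdesc
        _ = (((n - (ℓ-1) : ℕ) : ℝ) / n) * 2^(Fintype.card (Coord n)) := by
            have hnz : (n:ℝ) ≠ 0 := ne_of_gt hnpos
            have hℓpow : (n:ℝ)^ℓ = (n:ℝ)^(ℓ-1) * n := by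
              rw [← pow_succ]
              congr 1
              omega
            push_cast
            rw [hℓpow]
            field_simp
    -- the strict inequality
    have hcore := core ℓ m h n k hℓ16 hm2 hkm hh2 hh3 hndef h16m hkL
    have hQlt : ((2:ℝ)^m * (n:ℝ)^(m-1)) * (1 - (2:ℝ)^((1:ℤ)-(m:ℤ)))^(n-m) <
        ((ℓ:ℝ) - 1) / n := by
      rw [lt_div_iff₀ hnpos]
      calc ((2:ℝ)^m * (n:ℝ)^(m-1)) * (1 - (2:ℝ)^((1:ℤ)-(m:ℤ)))^(n-m) * n
          = ((2:ℝ)^m * (n:ℝ)^(m-1)) * (1 - (2:ℝ)^((1:ℤ)-(m:ℤ)))^(n-m) * n := rfl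
        _ < (ℓ:ℝ) - 1 := hcore
    have hsum : (Bad1.card : ℝ) + (Bad2.card : ℝ) < 2^(Fintype.card (Coord n)) := by
      have hsplit : ((n - (ℓ-1) : ℕ) : ℝ) = (n:ℝ) - ((ℓ:ℝ) - 1) := by
        have h1 : (ℓ:ℝ) - 1 = ((ℓ - 1 : ℕ) : ℝ) := by
          have : 1 ≤ ℓ := by omega
          push_cast [Nat.cast_sub this]
          ring
        rw [h1]
        have : ℓ - 1 ≤ n := by omega
        push_cast [Nat.cast_sub this]
        ring
      have hposE : (0:ℝ) < 2^(Fintype.card (Coord n)) := by positivity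
      calc (Bad1.card : ℝ) + (Bad2.card : ℝ)
          ≤ ((2:ℝ)^m * (n:ℝ)^(m-1)) *
              ((1 - (2:ℝ)^((1:ℤ)-(m:ℤ)))^(n-m) * 2^(Fintype.card (Coord n)))
            + (((n - (ℓ-1) : ℕ) : ℝ) / n) * 2^(Fintype.card (Coord n)) :=
            add_le_add hB1R hB2R
        _ < (((ℓ:ℝ) - 1) / n) * 2^(Fintype.card (Coord n))
            + (((n - (ℓ-1) : ℕ) : ℝ) / n) * 2^(Fintype.card (Coord n)) := by
            apply add_lt_add_left
            rw [← mul_assoc]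
            exact mul_lt_mul_of_pos_right hQlt hposE
        _ = 2^(Fintype.card (Coord n)) := by
            rw [hsplit]
            field_simp
            ring
    have hsumN : Bad1.card + Bad2.card < 2^(Fintype.card (Coord n)) := by
      exact_mod_cast hsum
    -- find a good f
    have hΩ : (univ : Finset (Coord n → Bool)).card = 2^(Fintype.card (Coord n)) := by
      rw [Finset.card_univ, Fintype.card_fun, Fintype.card_bool]
    have hnotsub : ¬ ((univ : Finset (Coord n → Bool)) ⊆ Bad1 ∪ Bad2) := by
      intro hsub
      have h1 := Finset.card_le_card hsub
      have h2 := Finset.card_union_le Bad1 Bad2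
      omega
    obtain ⟨f, -, hfU⟩ := Finset.not_subset.mp hnotsub
    rw [Finset.mem_union] at hfU
    push_neg at hfU
    obtain ⟨hf1, hf2⟩ := hfU
    refine ⟨n, Gf f, ?_, ?_⟩
    · by_contra hne
      exact hf1 (Finset.mem_filter.mpr ⟨Finset.mem_univ f, hne⟩)
    · refine ⟨fun ψ => ?_⟩
      exact hf2 (Finset.mem_filter.mpr ⟨Finset.mem_univ f, ⟨ψ.comp ι⟩⟩)
end

section
/- (Olariu) A finite simple graph H contains no induced copy of the paw graph if and only if every connected component of H is triangle-free or complete multipartite. -/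
/-- The paw graph: a triangle `{0, 1, 2}` plus a pendant vertex `3` adjacent to `2`. -/
def pawGraph : SimpleGraph (Fin 4) :=
  SimpleGraph.fromRel (fun a b =>
    (a = 0 ∧ b = 1) ∨ (a = 0 ∧ b = 2) ∨ (a = 1 ∧ b = 2) ∨ (a = 2 ∧ b = 3))

/-- A graph is complete multipartite if non-adjacency (on distinct vertices) is
transitive. -/
def IsCompleteMultipartiteGraph {V : Type*} (B : SimpleGraph V) : Prop :=
  ∀ u v w : V, u ≠ v → v ≠ w → u ≠ w → ¬ B.Adj u v → ¬ B.Adj v w → ¬ B.Adj u w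

lemma pawAdj (i j : Fin 4) :
    pawGraph.Adj i j ↔ i ≠ j ∧ (((i = 0 ∧ j = 1) ∨ (i = 0 ∧ j = 2) ∨ (i = 1 ∧ j = 2) ∨ (i = 2 ∧ j = 3)) ∨
      ((j = 0 ∧ i = 1) ∨ (j = 0 ∧ i = 2) ∨ (j = 1 ∧ i = 2) ∨ (j = 2 ∧ i = 3))) := by
  simp [pawGraph, SimpleGraph.fromRel_adj]

lemma pawConfig {V : Type} {H : SimpleGraph V} (h : IsEmpty (pawGraph ↪g H))
    {a b c d : V} (hab : H.Adj a b) (hac : H.Adj a c) (hbc : H.Adj b c)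
    (hcd : H.Adj c d) (had : ¬H.Adj a d) (hbd : ¬H.Adj b d) : False := by
  have hda : a ≠ d := fun h' => hbd (h' ▸ hab.symm)
  have hdb : b ≠ d := fun h' => had (h' ▸ hab)
  have hdc : c ≠ d := hcd.ne
  have hda' : ¬H.Adj d a := fun h' => had h'.symm
  have hdb' : ¬H.Adj d b := fun h' => hbd h'.symm
  refine h.elim ⟨⟨![a,b,c,d], ?_⟩, ?_⟩
  · intro i j hij
    fin_cases i <;> fin_cases j <;>
      simp_all [hab.ne, hac.ne, hbc.ne, hab.ne.symm, hac.ne.symm, hbc.ne.symm,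
        hda.symm, hdb.symm, hdc.symm, hda, hdb, hdc]
  · intro i j
    show H.Adj (![a,b,c,d] i) (![a,b,c,d] j) ↔ pawGraph.Adj i j
    fin_cases i <;> fin_cases j <;>
      simp_all [pawAdj, hab, hac, hbc, hcd, hab.symm, hac.symm,
        hbc.symm, hcd.symm, had, hbd, hcd.ne', hda', hdb']

/-- If `x` has a neighbor in a triangle `a b c` (adjacent to `c`), then it is adjacent
to `a` or `b`. -/
lemma triangle_ext {V : Type} {H : SimpleGraph V} (hpf : IsEmpty (pawGraph ↪g H))
    {a b c x : V} (hab : H.Adj a b) (hac : H.Adj a c) (hbc : H.Adj b c)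
    (hcx : H.Adj c x) : H.Adj a x ∨ H.Adj b x := by
  by_contra hcon
  push_neg at hcon
  exact pawConfig hpf hab hac hbc hcx hcon.1 hcon.2

/-- `InTri x`: x is in a triangle. -/
def InTri {V : Type} (H : SimpleGraph V) (x : V) : Prop :=
  ∃ p q, H.Adj x p ∧ H.Adj x q ∧ H.Adj p q

/-- An edge with an endpoint in a triangle is in a triangle. -/
lemma edge_in_tri {V : Type} {H : SimpleGraph V} (hpf : IsEmpty (pawGraph ↪g H))
    {x y : V} (hx : InTri H x) (hxy : H.Adj x y) :
    ∃ z, H.Adj x z ∧ H.Adj y z := by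
  obtain ⟨p, q, hxp, hxq, hpq⟩ := hx
  rcases triangle_ext hpf hpq hxp.symm hxq.symm hxy with h | h
  · exact ⟨p, hxp, h.symm⟩
  · exact ⟨q, hxq, h.symm⟩

lemma inTri_reachable {V : Type} {H : SimpleGraph V} (hpf : IsEmpty (pawGraph ↪g H))
    {x y : V} (hr : H.Reachable x y) (hx : InTri H x) : InTri H y := by
  obtain ⟨p⟩ := hr
  induction p with
  | nil => exact hx
  | @cons a b _ hab q ih =>
    apply ih
    obtain ⟨z, haz, hbz⟩ := edge_in_tri hpf hx hab
    exact ⟨a, z, hab.symm, hbz, haz⟩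

/-- Main combinatorial lemma. -/
lemma main_lemma {V : Type} {H : SimpleGraph V} (hpf : IsEmpty (pawGraph ↪g H)) :
    ∀ {u w v : V}, H.Walk v u → InTri H u → H.Adj u w →
      ¬H.Adj v u → ¬H.Adj v w → False := by
  intro u w v p
  induction p with
  | nil => intro _ huw _ h2; exact h2 huw
  | @cons a x u hax q ih =>
    intro hu huw h1 h2
    by_cases hxu : H.Adj x u
    · by_cases hxw : H.Adj x w
      · -- triangle u w x, pendant a
        exact pawConfig hpf huw hxu.symm hxw.symm hax.symm
          (fun h' => h1 h'.symm) (fun h' => h2 h'.symm)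
      · -- edge x u in triangle {x,u,z}
        obtain ⟨z, huz, hxz⟩ := edge_in_tri hpf hu hxu.symm
        have hzw : H.Adj z w := by
          rcases triangle_ext hpf hxz hxu huz.symm huw with h | h
          · exact absurd h hxw
          · exact h
        have hza : H.Adj z a := by
          rcases triangle_ext hpf huz hxu.symm hxz.symm hax.symm with h | h
          · exact absurd h (fun h' => h1 h'.symm)
          · exact h
        exact pawConfig hpf huw huz hzw.symm hza
          (fun h' => h1 h'.symm) (fun h' => h2 h'.symm)
    · by_cases hxw : H.Adj x w
      · have hw : InTri H w := by
          obtain ⟨z, huz, hwz⟩ := edge_in_tri hpf hu huw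
          exact ⟨u, z, huw.symm, hwz, huz⟩
        obtain ⟨z, hwz, hxz⟩ := edge_in_tri hpf hw hxw.symm
        have hzu : H.Adj z u := by
          rcases triangle_ext hpf hxz hxw hwz.symm huw.symm with h | h
          · exact absurd h hxu
          · exact h
        have hza : H.Adj z a := by
          rcases triangle_ext hpf hwz hxw.symm hxz.symm hax.symm with h | h
          · exact absurd h (fun h' => h2 h'.symm)
          · exact h
        exact pawConfig hpf huw hzu.symm hwz hza
          (fun h' => h1 h'.symm) (fun h' => h2 h'.symm)
      · exact ih hu huw hxu hxw

/-- Olariu's characterization: a graph is paw-free iff each of its connected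
components is triangle-free or complete multipartite. -/
theorem paw_free_iff_components_triangleFree_or_completeMultipartite
    {V : Type} [Fintype V] (H : SimpleGraph V) :
    IsEmpty (pawGraph ↪g H) ↔
      ∀ c : H.ConnectedComponent,
        (H.induce c.supp).CliqueFree 3 ∨ IsCompleteMultipartiteGraph (H.induce c.supp) := by
  classical
  constructor
  · intro hpf c
    by_cases hcf : (H.induce c.supp).CliqueFree 3
    · exact Or.inl hcf
    · right
      rw [SimpleGraph.CliqueFree] at hcf
      push_neg at hcf
      obtain ⟨t, ht⟩ := hcf
      rw [SimpleGraph.is3Clique_iff] at ht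
      obtain ⟨a, b, cc, hab, hac, hbc, -⟩ := ht
      intro u v w huv hvw huw hnuv hnvw
      intro hadj
      simp only [SimpleGraph.comap_adj, Function.Embedding.coe_subtype]
        at hab hac hbc hadj hnuv hnvw
      have htri : InTri H (a : V) := ⟨b, cc, hab, hac, hbc⟩
      have hru : H.Reachable (a : V) (u : V) :=
        SimpleGraph.ConnectedComponent.exact (a.2.trans u.2.symm)
      have hu : InTri H (u : V) := inTri_reachable hpf hru htri
      have hrv : H.Reachable (v : V) (u : V) :=
        SimpleGraph.ConnectedComponent.exact (v.2.trans u.2.symm)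
      obtain ⟨p⟩ := hrv
      exact main_lemma hpf p hu hadj (fun h' => hnuv h'.symm) hnvw
  · intro hcomp
    constructor
    intro f
    have h01 : H.Adj (f 0) (f 1) := f.map_adj_iff.2 (by rw [pawAdj]; decide)
    have h02 : H.Adj (f 0) (f 2) := f.map_adj_iff.2 (by rw [pawAdj]; decide)
    have h12 : H.Adj (f 1) (f 2) := f.map_adj_iff.2 (by rw [pawAdj]; decide)
    have h23 : H.Adj (f 2) (f 3) := f.map_adj_iff.2 (by rw [pawAdj]; decide)
    have h03 : ¬H.Adj (f 0) (f 3) := fun h =>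
      absurd (f.map_adj_iff.1 h) (by rw [pawAdj]; decide)
    have h13 : ¬H.Adj (f 1) (f 3) := fun h =>
      absurd (f.map_adj_iff.1 h) (by rw [pawAdj]; decide)
    set c := H.connectedComponentMk (f 2) with hc
    have m0 : f 0 ∈ c.supp := SimpleGraph.ConnectedComponent.sound h02.reachable
    have m1 : f 1 ∈ c.supp := SimpleGraph.ConnectedComponent.sound h12.reachable
    have m2 : f 2 ∈ c.supp := rfl
    have m3 : f 3 ∈ c.supp := SimpleGraph.ConnectedComponent.sound h23.symm.reachable
    rcases hcomp c with hcf | hcm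
    · refine hcf {⟨f 0, m0⟩, ⟨f 1, m1⟩, ⟨f 2, m2⟩} ?_
      rw [SimpleGraph.is3Clique_triple_iff]
      refine ⟨?_, ?_, ?_⟩ <;>
        simp only [SimpleGraph.comap_adj, Function.Embedding.coe_subtype] <;>
        assumption
    · have hne03 : (⟨f 0, m0⟩ : c.supp) ≠ ⟨f 3, m3⟩ := by
        simp only [ne_eq, Subtype.mk_eq_mk]
        exact fun h => absurd (f.injective h) (by decide)
      have hne31 : (⟨f 3, m3⟩ : c.supp) ≠ ⟨f 1, m1⟩ := by
        simp only [ne_eq, Subtype.mk_eq_mk]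
        exact fun h => absurd (f.injective h) (by decide)
      have hne01 : (⟨f 0, m0⟩ : c.supp) ≠ ⟨f 1, m1⟩ := by
        simp only [ne_eq, Subtype.mk_eq_mk]
        exact fun h => absurd (f.injective h) (by decide)
      refine hcm ⟨f 0, m0⟩ ⟨f 3, m3⟩ ⟨f 1, m1⟩ hne03 hne31 hne01 ?_ ?_ ?_ <;>
        simp only [SimpleGraph.comap_adj, Function.Embedding.coe_subtype]
      · exact h03
      · exact fun h => h13 h.symm
      · exact h01
end

section
/- A finite simple graph G contains an induced copy of the paw graph if and only if there exist vertices v, u, w of G such that: v lies in a triangle of G (there are vertices a, b with v, a, b pairwise adjacent); u is at distance 2 from v (u ≠ v, u is not adjacent to v, and u and v have a common neighbour); and w is adjacent to v but not adjacent to u. -/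
lemma paw_of {V : Type} (G : SimpleGraph V) {x y z p : V}
    (hxy : G.Adj x y) (hxz : G.Adj x z) (hyz : G.Adj y z) (hzp : G.Adj z p)
    (hxp : ¬ G.Adj x p) (hyp : ¬ G.Adj y p) (hpx : p ≠ x) (hpy : p ≠ y) :
    Nonempty (pawGraph ↪g G) := by
  refine ⟨⟨⟨![x, y, z, p], ?_⟩, ?_⟩⟩
  · intro i j hij
    fin_cases i <;> fin_cases j <;> simp_all
  · intro i j
    show G.Adj (![x, y, z, p] i) (![x, y, z, p] j) ↔ pawGraph.Adj i j
    fin_cases i <;> fin_cases j <;>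
      simp_all [pawGraph, SimpleGraph.fromRel_adj, G.adj_comm]

/-- A graph contains an induced paw iff there is a vertex `v` in a triangle, a vertex
`u` at distance 2 from `v`, and a vertex `w` adjacent to `v` but not to `u`. -/
theorem induced_paw_iff
    {V : Type} [Fintype V] (G : SimpleGraph V) :
    Nonempty (pawGraph ↪g G) ↔
      ∃ v u w : V,
        (∃ a b : V, G.Adj v a ∧ G.Adj v b ∧ G.Adj a b) ∧
        (u ≠ v ∧ ¬ G.Adj u v ∧ ∃ c : V, G.Adj v c ∧ G.Adj c u) ∧
        (G.Adj v w ∧ ¬ G.Adj w u) := by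
  constructor
  · rintro ⟨f⟩
    have hmap : ∀ i j : Fin 4, G.Adj (f i) (f j) ↔ pawGraph.Adj i j := fun i j => f.map_adj_iff
    refine ⟨f 0, f 3, f 1, ⟨f 1, f 2, ?_, ?_, ?_⟩, ⟨?_, ?_, ⟨f 2, ?_, ?_⟩⟩, ?_, ?_⟩
    · exact (hmap 0 1).2 (by simp [pawGraph, SimpleGraph.fromRel_adj])
    · exact (hmap 0 2).2 (by simp [pawGraph, SimpleGraph.fromRel_adj])
    · exact (hmap 1 2).2 (by simp [pawGraph, SimpleGraph.fromRel_adj])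
    · exact fun h => (by decide : (3 : Fin 4) ≠ 0) (f.injective h)
    · exact fun h => (by simp [pawGraph, SimpleGraph.fromRel_adj] : ¬ pawGraph.Adj 3 0)
        ((hmap 3 0).1 h)
    · exact (hmap 0 2).2 (by simp [pawGraph, SimpleGraph.fromRel_adj])
    · exact (hmap 2 3).2 (by simp [pawGraph, SimpleGraph.fromRel_adj])
    · exact (hmap 0 1).2 (by simp [pawGraph, SimpleGraph.fromRel_adj])
    · exact fun h => (by simp [pawGraph, SimpleGraph.fromRel_adj] : ¬ pawGraph.Adj 1 3)
        ((hmap 1 3).1 h)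
  · rintro ⟨v, u, w, ⟨a, b, hva, hvb, hab⟩, ⟨huv, hnuv, c, hvc, hcu⟩, hvw, hnwu⟩
    have hnvu : ¬ G.Adj v u := fun h => hnuv h.symm
    have hune : ∀ t : V, G.Adj v t → u ≠ t := by
      rintro t ht rfl; exact hnuv ht.symm
    by_cases hua : G.Adj u a
    · by_cases hub : G.Adj u b
      · by_cases hwa : G.Adj w a
        · by_cases hwb : G.Adj w b
          · -- triangle v w a, pendant u at a
            exact paw_of G hvw hva hwa hua.symm hnvu hnwu huv (hune w hvw)
          · -- triangle u b a, pendant w at a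
            refine paw_of G hub hua hab.symm hwa.symm (fun h => hnwu h.symm)
              (fun h => hwb h.symm) ?_ ?_
            · rintro rfl; exact hnuv hvw.symm
            · rintro rfl; exact hnwu hub.symm
        · by_cases hwb : G.Adj w b
          · -- triangle u a b, pendant w at b
            refine paw_of G hua hub hab hwb.symm (fun h => hnwu h.symm)
              (fun h => hwa h.symm) ?_ ?_
            · rintro rfl; exact hnuv hvw.symm
            · rintro rfl; exact hnwu hua.symm
          · -- triangle a b v, pendant w at v
            refine paw_of G hab hva.symm hvb.symm hvw (fun h => hwa h.symm)
              (fun h => hwb h.symm) ?_ ?_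
            · rintro rfl; exact hnwu hua.symm
            · rintro rfl; exact hnwu hub.symm
      · -- triangle v b a, pendant u at a
        exact paw_of G hvb hva hab.symm hua.symm hnvu (fun h => hub h.symm) huv (hune b hvb)
    · by_cases hub : G.Adj u b
      · -- triangle v a b, pendant u at b
        exact paw_of G hva hvb hab hub.symm hnvu (fun h => hua h.symm) huv (hune a hva)
      · by_cases hca : G.Adj c a
        · -- triangle v a c, pendant u at c
          exact paw_of G hva hvc hca.symm hcu hnvu (fun h => hua h.symm) huv (hune a hva)
        · by_cases hcb : G.Adj c b
          · -- triangle v b c, pendant u at c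
            exact paw_of G hvb hvc hcb.symm hcu hnvu (fun h => hub h.symm) huv (hune b hvb)
          · -- triangle a b v, pendant c at v
            refine paw_of G hab hva.symm hvb.symm hvc (fun h => hca h.symm)
              (fun h => hcb h.symm) ?_ ?_
            · rintro rfl; exact hua hcu.symm
            · rintro rfl; exact hub hcu.symm
end

section
/- Every finite simple graph with the 3-extension property contains an induced copy of the paw graph; moreover, the cycle C₄ on 4 vertices has the 2-extension property and contains no induced copy of the paw graph. (Hence the extension index of the paw graph equals 3.) -/
/-- Given a triangle `a b c` with a pendant vertex `d` attached at `c`, we obtain an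
induced copy of the paw graph. -/
lemma paw_emb {V : Type} (G : SimpleGraph V) (a b c d : V)
    (hab : G.Adj a b) (hac : G.Adj a c) (hbc : G.Adj b c) (hcd : G.Adj c d)
    (had : ¬ G.Adj a d) (hbd : ¬ G.Adj b d) (hadne : a ≠ d) (hbdne : b ≠ d) :
    Nonempty (pawGraph ↪g G) := by
  refine ⟨⟨⟨![a, b, c, d], ?_⟩, ?_⟩⟩
  · intro i j h
    fin_cases i <;> fin_cases j <;>
      simp_all (config := { decide := true }) [Fin.ext_iff, G.adj_comm,
        hab.ne, hac.ne, hbc.ne, hcd.ne, hadne, hbdne]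
  · intro i j
    show G.Adj (![a, b, c, d] i) (![a, b, c, d] j) ↔ _
    fin_cases i <;> fin_cases j <;>
      simp (config := { decide := true }) [pawGraph, SimpleGraph.fromRel_adj,
        hab, hac, hbc, hcd, had, hbd, hab.symm, hac.symm, hbc.symm, hcd.symm, G.irrefl,
        Fin.ext_iff, -Fin.val_eq_zero_iff] <;>
      first
        | exact fun h => had (G.adj_symm h)
        | exact fun h => hbd (G.adj_symm h)

/-- The extension index of the paw graph equals 3: every finite graph with the
3-extension property contains an induced paw, whereas `C₄` has the 2-extension
property and is paw-free. -/
theorem extension_index_paw_eq_three :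
    (∀ (V : Type) [Fintype V] (G : SimpleGraph V),
      HasExtensionProperty G 3 → Nonempty (pawGraph ↪g G)) ∧
    HasExtensionProperty (SimpleGraph.cycleGraph 4) 2 ∧
    IsEmpty (pawGraph ↪g SimpleGraph.cycleGraph 4) := by
  refine ⟨?_, ?_, ?_⟩
  · intro V _ G h
    classical
    obtain ⟨c, -, -, -, -⟩ := h ∅ ∅ (by simp) (by norm_num)
    obtain ⟨d, hd1, -, hd2, -⟩ := h {c} ∅ (by simp) (by simp)
    have hdc : G.Adj d c := hd2 c (Finset.mem_singleton_self c)
    obtain ⟨a, ha1, ha2, ha3, ha4⟩ := h {c} {d}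
      (Finset.disjoint_singleton.mpr (fun hh => hd1 (by simp [hh]))) (by simp)
    have hac : G.Adj a c := ha3 c (Finset.mem_singleton_self c)
    have had : ¬ G.Adj a d := ha4 d (Finset.mem_singleton_self d)
    have hadne : a ≠ d := by simpa using ha2
    obtain ⟨b, hb1, -, hb3, -⟩ := h {a, c} ∅ (by simp) (by
      have h2 := Finset.card_insert_le a ({c} : Finset V)
      rw [Finset.card_singleton] at h2
      simp only [Finset.card_empty]
      omega)
    have hba : G.Adj b a := hb3 a (by simp)
    have hbc : G.Adj b c := hb3 c (by simp)
    by_cases hbd : G.Adj b d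
    · -- diamond case
      obtain ⟨e, he1, he2, he3, he4⟩ := h {a} {d}
        (Finset.disjoint_singleton.mpr hadne) (by simp)
      have hea : G.Adj e a := he3 a (Finset.mem_singleton_self a)
      have hed : ¬ G.Adj e d := he4 d (Finset.mem_singleton_self d)
      have hedne : e ≠ d := by simpa using he2
      by_cases heb : G.Adj e b
      · exact paw_emb G e a b d hea heb hba.symm hbd hed had hedne hadne
      · by_cases hec : G.Adj e c
        · exact paw_emb G e a c d hea hec hac hdc.symm hed had hedne hadne
        · refine paw_emb G b c a e hbc hba hac.symm hea.symm
            (fun hh => heb (hh.symm)) (fun hh => hec (hh.symm)) ?_ ?_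
          · rintro rfl; exact hec hbc
          · rintro rfl; exact hed hdc.symm
    · refine paw_emb G a b c d hba.symm hac hbc hdc.symm had hbd hadne ?_
      rintro rfl; exact had hba.symm
  · unfold HasExtensionProperty
    decide
  · constructor
    intro f
    have h01 : (SimpleGraph.cycleGraph 4).Adj (f 0) (f 1) :=
      f.map_rel_iff.mpr (by simp [pawGraph])
    have h02 : (SimpleGraph.cycleGraph 4).Adj (f 0) (f 2) :=
      f.map_rel_iff.mpr (by simp [pawGraph])
    have h12 : (SimpleGraph.cycleGraph 4).Adj (f 1) (f 2) :=
      f.map_rel_iff.mpr (by simp [pawGraph])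
    exact (by decide : ∀ x y z : Fin 4, ¬ ((SimpleGraph.cycleGraph 4).Adj x y ∧
      (SimpleGraph.cycleGraph 4).Adj x z ∧ (SimpleGraph.cycleGraph 4).Adj y z))
      (f 0) (f 1) (f 2) ⟨h01, h02, h12⟩
end

section
/- Every finite simple graph H with at least two vertices that contains no induced copy of the path P₄ on 4 vertices has two twins, i.e., there exist distinct vertices u and v of H such that every vertex w ∉ {u, v} is adjacent to u if and only if it is adjacent to v. -/
open SimpleGraph

/-- Build an induced `P₄` embedding from four vertices forming an induced path. -/
def p4OfFour {V : Type} (G : SimpleGraph V) (a b c d : V)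
    (hab : G.Adj a b) (hbc : G.Adj b c) (hcd : G.Adj c d)
    (hac : ¬G.Adj a c) (had : ¬G.Adj a d) (hbd : ¬G.Adj b d)
    (nad : a ≠ d) : SimpleGraph.pathGraph 4 ↪g G := by
  have nac : a ≠ c := by rintro rfl; exact had hcd
  have nbd : b ≠ d := by rintro rfl; exact had hab
  have hba := hab.symm; have hcb := hbc.symm; have hdc := hcd.symm
  have hca : ¬G.Adj c a := fun h => hac h.symm
  have hda : ¬G.Adj d a := fun h => had h.symm
  have hdb : ¬G.Adj d b := fun h => hbd h.symm
  have nab := hab.ne; have nbc := hbc.ne; have ncd := hcd.ne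
  have nba := hab.ne'; have ncb := hbc.ne'; have ndc := hcd.ne'
  have nca := nac.symm; have nda := nad.symm; have ndb := nbd.symm
  refine ⟨⟨![a,b,c,d], ?_⟩, ?_⟩
  · intro i j hij
    fin_cases i <;> fin_cases j <;> simp_all <;> decide
  · intro i j
    fin_cases i <;> fin_cases j <;> simp_all [pathGraph_adj, G.irrefl] <;> assumption

lemma closed_not_reachable {V : Type} {G : SimpleGraph V} {S : Set V}
    (hS : ∀ u ∈ S, ∀ v, G.Adj u v → v ∈ S) {a b : V} (ha : a ∈ S) (hb : b ∉ S) :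
    ¬G.Reachable a b := by
  rintro ⟨w⟩
  apply hb
  induction w with
  | nil => exact ha
  | cons h p ih => exact ih (hS _ ha _ h) hb

lemma isolated_not_reachable {V : Type} {G : SimpleGraph V} {x a : V}
    (hx : ∀ z, ¬G.Adj x z) (hax : a ≠ x) : ¬G.Reachable a x := by
  refine closed_not_reachable (S := {v | v ≠ x}) ?_ hax (by simp)
  intro u hu v huv
  rintro rfl
  exact hx u huv.symm

lemma walk_transition {V : Type} {G : SimpleGraph V} (P : V → Prop) {c d : V}
    (w : G.Walk c d) (hc : P c) (hd : ¬P d) :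
    ∃ u v, G.Adj u v ∧ P u ∧ ¬P v := by
  induction w with
  | nil => exact absurd hc hd
  | @cons c e d h p ih =>
    by_cases he : P e
    · exact ih he hd
    · exact ⟨c, e, h, hc, he⟩

lemma free_compl {V : Type} {G : SimpleGraph V}
    (h : IsEmpty (SimpleGraph.pathGraph 4 ↪g G)) :
    IsEmpty (SimpleGraph.pathGraph 4 ↪g Gᶜ) := by
  constructor
  intro e
  apply h.false
  refine ⟨⟨e ∘ ![1,3,0,2], e.injective.comp (by decide)⟩, ?_⟩
  intro i j
  have hG : ∀ x y : V, G.Adj x y ↔ x ≠ y ∧ ¬Gᶜ.Adj x y := by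
    intro x y; conv_lhs => rw [← compl_compl G]
    exact Gᶜ.compl_adj x y
  simp only [Function.Embedding.coeFn_mk, Function.comp, hG, e.map_adj_iff,
    e.injective.ne_iff]
  revert i j
  suffices ∀ i j : Fin 4,
      ((![1,3,0,2] : Fin 4 → Fin 4) i ≠ ![1,3,0,2] j ∧
        ¬(pathGraph 4).Adj (![1,3,0,2] i) (![1,3,0,2] j)) ↔ (pathGraph 4).Adj i j by
    intro i j; exact this i j
  intro i j
  fin_cases i <;> fin_cases j <;> simp [pathGraph_adj] <;> decide

lemma induce_compl_eq {V : Type} (G : SimpleGraph V) (s : Set V) :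
    Gᶜ.induce s = (G.induce s)ᶜ := by
  ext a b
  simp only [comap_adj, compl_adj]
  constructor
  · rintro ⟨h1, h2⟩; exact ⟨fun h => h1 (congrArg _ h), h2⟩
  · rintro ⟨h1, h2⟩; exact ⟨fun h => h1 (Subtype.ext h), h2⟩

lemma seinsche_step {V : Type} (G : SimpleGraph V)
    (hfree : IsEmpty (SimpleGraph.pathGraph 4 ↪g G)) (x a b : V) (ha : a ≠ x) (hb : b ≠ x)
    (hdisc : ¬(G.induce {v | v ≠ x}).Reachable ⟨a, ha⟩ ⟨b, hb⟩) :
    (∃ p q : V, ¬G.Reachable p q) ∨ (∃ p q : V, ¬Gᶜ.Reachable p q) := by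
  set G' := G.induce {v | v ≠ x} with hG'
  by_cases hA : ∃ c : {v : V | v ≠ x}, ∀ v : {v : V | v ≠ x}, G'.Reachable c v → ¬G.Adj x ↑v
  · obtain ⟨c, hc⟩ := hA
    left
    refine ⟨↑c, x, closed_not_reachable
      (S := {v : V | ∃ h : v ≠ x, G'.Reachable c ⟨v, h⟩}) ?_ ⟨c.2, Reachable.refl _⟩ ?_⟩
    · rintro u ⟨hu, hr⟩ v huv
      by_cases hv : v = x
      · subst hv
        exact absurd huv.symm (hc ⟨u, hu⟩ hr)
      · exact ⟨hv, hr.trans (Adj.reachable (by exact huv : G'.Adj ⟨u, hu⟩ ⟨v, hv⟩))⟩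
    · rintro ⟨h, -⟩; exact h rfl
  · push_neg at hA
    by_cases hall : ∀ v : V, v ≠ x → G.Adj x v
    · right
      refine ⟨a, x, isolated_not_reachable ?_ ha⟩
      intro z hz
      rw [compl_adj] at hz
      exact hz.2 (hall z hz.1.symm)
    · push_neg at hall
      obtain ⟨y, hyx, hxy⟩ := hall
      obtain ⟨z, hzr, hzadj⟩ := hA ⟨y, hyx⟩
      obtain ⟨w⟩ := hzr.symm
      obtain ⟨u, v, huv, hu, hv⟩ :=
        walk_transition (fun t : {v : V | v ≠ x} => G.Adj x ↑t) w hzadj hxy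
      have hreach : ¬G'.Reachable u ⟨a, ha⟩ ∨ ¬G'.Reachable u ⟨b, hb⟩ := by
        by_contra h
        push_neg at h
        exact hdisc (h.1.symm.trans h.2)
      obtain ⟨c₀, hc₀⟩ : ∃ c₀ : {v : V | v ≠ x}, ¬G'.Reachable u c₀ := by
        rcases hreach with h | h
        · exact ⟨⟨a, ha⟩, h⟩
        · exact ⟨⟨b, hb⟩, h⟩
      obtain ⟨z', hz'r, hz'adj⟩ := hA c₀
      have hnur : ¬G'.Reachable u z' := fun h => hc₀ (h.trans hz'r.symm)
      exact (hfree.false (p4OfFour G ↑v ↑u x ↑z'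
        (by exact huv.symm)
        hu.symm
        hz'adj
        (fun h => hv h.symm)
        (fun h => hnur (huv.reachable.trans (Adj.reachable (by exact h : G'.Adj v z'))))
        (fun h => hnur (Adj.reachable (by exact h : G'.Adj u z')))
        (fun h => hnur (huv.reachable.trans (by rw [Subtype.ext h]))))).elim

/-- Seinsche's theorem: a `P₄`-free graph on at least two vertices is disconnected
or has disconnected complement. -/
lemma seinsche : ∀ n : ℕ, ∀ {V : Type} [Fintype V] (G : SimpleGraph V),
    Fintype.card V = n → 2 ≤ n → IsEmpty (SimpleGraph.pathGraph 4 ↪g G) →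
    (∃ p q : V, ¬G.Reachable p q) ∨ (∃ p q : V, ¬Gᶜ.Reachable p q) := by
  intro n
  induction n using Nat.strong_induction_on with
  | _ n IH =>
  intro V _ G hcard h2 hfree
  classical
  rcases eq_or_lt_of_le h2 with h2' | h3
  · have hc2 : Nat.card V = 2 := by rw [Nat.card_eq_fintype_card, hcard, ← h2']
    obtain ⟨x, y, hxy, huniv⟩ := Nat.card_eq_two_iff.mp hc2
    have hall : ∀ z : V, z = x ∨ z = y := by
      intro z
      have : z ∈ ({x, y} : Set V) := huniv ▸ Set.mem_univ z
      simpa using this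
    by_cases hadj : G.Adj x y
    · right
      refine ⟨x, y, isolated_not_reachable (G := Gᶜ) ?_ hxy⟩
      intro z hz
      rcases hall z with h | h
      · rw [h] at hz; exact hz.2 hadj.symm
      · rw [h] at hz; exact Gᶜ.irrefl hz
    · left
      refine ⟨x, y, isolated_not_reachable ?_ hxy⟩
      intro z hz
      rcases hall z with h | h
      · rw [h] at hz; exact hadj hz.symm
      · rw [h] at hz; exact G.irrefl hz
  · have hne : Nonempty V := Fintype.card_pos_iff.mp (by omega)
    obtain ⟨x⟩ := hne
    set s : Set V := {v | v ≠ x} with hs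
    have hcard' : Fintype.card s < n := hcard ▸ Fintype.card_subtype_lt (x := x) (by simp [hs])
    have h2' : 2 ≤ Fintype.card s := by
      rw [Fintype.card_subtype]
      have : (Finset.univ.erase x) ⊆ Finset.filter (· ∈ s) Finset.univ := by
        intro z hz
        simp only [Finset.mem_erase] at hz
        simp [hs, hz.1]
      calc 2 ≤ (Finset.univ.erase x).card := by
              rw [Finset.card_erase_of_mem (Finset.mem_univ x)]
              have : Finset.univ.card = n := hcard
              omega
        _ ≤ _ := Finset.card_le_card this
    have hfree' : IsEmpty (SimpleGraph.pathGraph 4 ↪g G.induce s) :=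
      ⟨fun e => hfree.false ((Embedding.induce s).comp e)⟩
    rcases IH _ hcard' (G.induce s) rfl h2' hfree' with ⟨p, q, hpq⟩ | ⟨p, q, hpq⟩
    · exact seinsche_step G hfree x p q p.2 q.2 (by simpa using hpq)
    · rw [← induce_compl_eq] at hpq
      have := seinsche_step Gᶜ (free_compl hfree) x p q p.2 q.2 (by simpa using hpq)
      rw [compl_compl] at this
      exact this.symm

/-- The twins property. -/
def Twins {V : Type} (G : SimpleGraph V) : Prop :=
  ∃ u v : V, u ≠ v ∧ ∀ w : V, w ≠ u → w ≠ v → (G.Adj w u ↔ G.Adj w v)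

lemma twins_aux : ∀ n : ℕ, ∀ {V : Type} [Fintype V] (G : SimpleGraph V),
    Fintype.card V = n → 2 ≤ n → IsEmpty (SimpleGraph.pathGraph 4 ↪g G) →
    Twins G := by
  intro n
  induction n using Nat.strong_induction_on with
  | _ n IH =>
  intro V _ G hcard h2 hfree
  classical
  rcases eq_or_lt_of_le h2 with h2' | h3
  · -- card = 2 : vacuous
    have hc2 : Nat.card V = 2 := by rw [Nat.card_eq_fintype_card, hcard, ← h2']
    obtain ⟨x, y, hxy, huniv⟩ := Nat.card_eq_two_iff.mp hc2
    refine ⟨x, y, hxy, fun w hwx hwy => ?_⟩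
    have : w ∈ ({x, y} : Set V) := huniv ▸ Set.mem_univ w
    simp only [Set.mem_insert_iff, Set.mem_singleton_iff] at this
    rcases this with h | h
    · exact absurd h hwx
    · exact absurd h hwy
  · -- card ≥ 3
    have key : ∀ G : SimpleGraph V, IsEmpty (SimpleGraph.pathGraph 4 ↪g G) →
        (∃ a b : V, ¬G.Reachable a b) → Twins G := by
      rintro G hfree ⟨a, b, hab⟩
      have hne : a ≠ b := fun h => hab (h ▸ Reachable.refl a)
      set S : Set V := {v | G.Reachable a v} with hS
      have hbS : b ∉ S := hab
      by_cases hc : ∃ c, c ∈ S ∧ c ≠ a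
      · obtain ⟨c, hcS, hca⟩ := hc
        have hlt : Fintype.card S < n := hcard ▸ Fintype.card_subtype_lt (x := b) hbS
        have hge : 2 ≤ Fintype.card S :=
          Fintype.one_lt_card_iff.mpr
            ⟨⟨a, Reachable.refl a⟩, ⟨c, hcS⟩, fun h => hca (congrArg Subtype.val h).symm⟩
        have hfree' : IsEmpty (SimpleGraph.pathGraph 4 ↪g G.induce S) :=
          ⟨fun e => hfree.false ((Embedding.induce S).comp e)⟩
        obtain ⟨u, v, huv, htw⟩ := IH _ hlt (G.induce S) rfl hge hfree'
        refine ⟨↑u, ↑v, fun h => huv (Subtype.ext h), fun w hwu hwv => ?_⟩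
        by_cases hw : w ∈ S
        · exact htw ⟨w, hw⟩ (fun h => hwu (congrArg Subtype.val h))
            (fun h => hwv (congrArg Subtype.val h))
        · constructor
          · intro h
            exact absurd (u.2.trans h.symm.reachable) hw
          · intro h
            exact absurd (v.2.trans h.symm.reachable) hw
      · push_neg at hc
        have hiso : ∀ z, ¬G.Adj a z := by
          intro z hz
          have : z ∈ S := hz.reachable
          exact G.irrefl ((hc z this) ▸ hz)
        set T : Set V := {v | v ≠ a} with hT
        have hlt : Fintype.card T < n := hcard ▸ Fintype.card_subtype_lt (x := a) (by simp [hT])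
        have hge : 2 ≤ Fintype.card T := by
          rw [Fintype.card_subtype]
          have hsub : (Finset.univ.erase a) ⊆ Finset.filter (· ∈ T) Finset.univ := by
            intro z hz
            simp only [Finset.mem_erase] at hz
            simp [hT, hz.1]
          calc 2 ≤ (Finset.univ.erase a).card := by
                  rw [Finset.card_erase_of_mem (Finset.mem_univ a)]
                  have : Finset.univ.card = n := hcard
                  omega
            _ ≤ _ := Finset.card_le_card hsub
        have hfree' : IsEmpty (SimpleGraph.pathGraph 4 ↪g G.induce T) :=
          ⟨fun e => hfree.false ((Embedding.induce T).comp e)⟩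
        obtain ⟨u, v, huv, htw⟩ := IH _ hlt (G.induce T) rfl hge hfree'
        refine ⟨↑u, ↑v, fun h => huv (Subtype.ext h), fun w hwu hwv => ?_⟩
        by_cases hw : w = a
        · subst hw
          exact iff_of_false (hiso ↑u) (hiso ↑v)
        · exact htw ⟨w, hw⟩ (fun h => hwu (congrArg Subtype.val h))
            (fun h => hwv (congrArg Subtype.val h))
    rcases seinsche n G hcard h2 hfree with hd | hd
    · exact key G hfree hd
    · obtain ⟨u, v, huv, htw⟩ := key Gᶜ (free_compl hfree) hd
      refine ⟨u, v, huv, fun w hwu hwv => ?_⟩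
      have := htw w hwu hwv
      rw [compl_adj, compl_adj] at this
      simp only [hwu, hwv, ne_eq, not_false_eq_true, true_and] at this
      exact not_iff_not.mp this

/-- Every finite `P₄`-free graph on at least two vertices has a pair of twins. -/
theorem p4_free_has_twins
    {V : Type} [Fintype V] (H : SimpleGraph V)
    (hcard : 2 ≤ Fintype.card V)
    (hfree : IsEmpty (SimpleGraph.pathGraph 4 ↪g H)) :
    ∃ u v : V, u ≠ v ∧ ∀ w : V, w ≠ u → w ≠ v → (H.Adj w u ↔ H.Adj w v) := by
  exact twins_aux (Fintype.card V) H rfl hcard hfree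
end

section
/- Every finite simple graph with the 3-extension property contains an induced copy of the path P₄ on 4 vertices; moreover, the cycle C₄ on 4 vertices has the 2-extension property and contains no induced copy of P₄. (Hence the extension index of P₄ equals 3.) -/
set_option linter.unusedSectionVars false

namespace ExtAux

variable {V : Type} [DecidableEq V]

/-- no edges of `r` between `A` and `B` -/
def NoE (r : V → V → Prop) (A B : Finset V) : Prop := ∀ a ∈ A, ∀ b ∈ B, ¬ r a b

/-- `r` contains a P4 pattern -/
def HasP4 (r : V → V → Prop) : Prop :=
  ∃ a b c d : V, r a b ∧ r b c ∧ r c d ∧ ¬ r a c ∧ ¬ r a d ∧ ¬ r b d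

/-- complement relation -/
def rc (r : V → V → Prop) : V → V → Prop := fun a b => a ≠ b ∧ ¬ r a b

lemma rc_symm {r : V → V → Prop} (hs : Symmetric r) : Symmetric (rc r) :=
  fun _ _ h => ⟨h.1.symm, fun h' => h.2 (hs h')⟩

lemma hasP4_rc {r : V → V → Prop} (hs : Symmetric r) (h : HasP4 (rc r)) : HasP4 r := by
  obtain ⟨a, b, c, d, hab, hbc, hcd, hac, had, hbd⟩ := h
  have hne_ac : a ≠ c := by rintro rfl; exact had hcd
  have hac' : r a c := by by_contra h'; exact hac ⟨hne_ac, h'⟩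
  have hne_ad : a ≠ d := by rintro rfl; exact hcd.2 (hs hac')
  have had' : r a d := by by_contra h'; exact had ⟨hne_ad, h'⟩
  have hne_bd : b ≠ d := by rintro rfl; exact hab.2 had'
  have hbd' : r b d := by by_contra h'; exact hbd ⟨hne_bd, h'⟩
  exact ⟨b, d, a, c, hbd', hs had', hac',
    fun h => hab.2 (hs h), hbc.2, fun h => hcd.2 (hs h)⟩

lemma step (r : V → V → Prop) (hs : Symmetric r) (hP4 : ¬ HasP4 r)
    (v : V) (A B : Finset V) (hA : A.Nonempty) (hB : B.Nonempty)
    (hAB : Disjoint A B) (hv : v ∉ A ∪ B) (hNE : NoE r A B) :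
    ∃ A' B' : Finset V, A'.Nonempty ∧ B'.Nonempty ∧ Disjoint A' B' ∧
      A' ∪ B' = insert v (A ∪ B) ∧ (NoE r A' B' ∨ NoE (rc r) A' B') := by
  classical
  by_cases hAcase : ∀ a ∈ A, ¬ r v a
  · refine ⟨A, insert v B, hA, ⟨v, Finset.mem_insert_self _ _⟩, ?_, ?_, Or.inl ?_⟩
    · rw [Finset.disjoint_insert_right]
      exact ⟨fun hvA => hv (Finset.mem_union_left _ hvA), hAB⟩
    · rw [Finset.union_insert]
    · intro a ha b hb
      rcases Finset.mem_insert.mp hb with rfl | hb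
      · exact fun h => hAcase a ha (hs h)
      · exact hNE a ha b hb
  by_cases hBcase : ∀ b ∈ B, ¬ r v b
  · refine ⟨insert v A, B, ⟨v, Finset.mem_insert_self _ _⟩, hB, ?_, ?_, Or.inl ?_⟩
    · rw [Finset.disjoint_insert_left]
      exact ⟨fun hvB => hv (Finset.mem_union_right _ hvB), hAB⟩
    · rw [Finset.insert_union]
    · intro a ha b hb
      rcases Finset.mem_insert.mp ha with rfl | ha
      · exact hBcase b hb
      · exact hNE a ha b hb
  push_neg at hAcase hBcase
  obtain ⟨a₀, ha₀, hva₀⟩ := hAcase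
  obtain ⟨b₀, hb₀, hvb₀⟩ := hBcase
  by_cases hall : ∀ x ∈ A ∪ B, r v x
  · refine ⟨{v}, A ∪ B, ⟨v, Finset.mem_singleton_self _⟩, ⟨a₀, Finset.mem_union_left _ ha₀⟩,
      Finset.disjoint_singleton_left.mpr hv, by ext x; simp, Or.inr ?_⟩
    intro a ha b hb
    rw [Finset.mem_singleton] at ha
    subst ha
    exact fun h => h.2 (hall b hb)
  push_neg at hall
  obtain ⟨x₀, hx₀, hvx₀⟩ := hall
  set M : Finset V := (A ∪ B).filter (fun x => ¬ r v x) with hM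
  set N : Finset V := (A ∪ B).filter (fun x => r v x) with hN
  have hvM : v ∉ M := fun h => hv (Finset.mem_filter.mp h).1
  refine ⟨M, insert v N, ⟨x₀, Finset.mem_filter.mpr ⟨hx₀, hvx₀⟩⟩,
    ⟨v, Finset.mem_insert_self _ _⟩, ?_, ?_, Or.inl ?_⟩
  · rw [Finset.disjoint_insert_right]
    refine ⟨hvM, Finset.disjoint_left.mpr fun x hx hx' => ?_⟩
    exact (Finset.mem_filter.mp hx).2 (Finset.mem_filter.mp hx').2
  · rw [Finset.union_insert]
    congr 1
    ext x
    simp only [hM, hN, Finset.mem_union, Finset.mem_filter]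
    tauto
  · intro x hx y hy
    have hxAB := (Finset.mem_filter.mp hx).1
    have hxv : ¬ r v x := (Finset.mem_filter.mp hx).2
    rcases Finset.mem_insert.mp hy with rfl | hy
    · exact fun h => hxv (hs h)
    · have hyAB := (Finset.mem_filter.mp hy).1
      have hyv : r v y := (Finset.mem_filter.mp hy).2
      intro hxy
      rcases Finset.mem_union.mp hxAB with hxA | hxB <;>
        rcases Finset.mem_union.mp hyAB with hyA | hyB
      · exact hP4 ⟨x, y, v, b₀, hxy, hs hyv, hvb₀, fun h => hxv (hs h),
          hNE x hxA b₀ hb₀, hNE y hyA b₀ hb₀⟩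
      · exact hNE x hxA y hyB hxy
      · exact hNE y hyA x hxB (hs hxy)
      · exact hP4 ⟨x, y, v, a₀, hxy, hs hyv, hva₀, fun h => hxv (hs h),
          fun h => hNE a₀ ha₀ x hxB (hs h), fun h => hNE a₀ ha₀ y hyB (hs h)⟩

lemma split (n : ℕ) : ∀ (r : V → V → Prop), Symmetric r → ¬ HasP4 r →
    ∀ s : Finset V, s.card = n → 2 ≤ n →
    ∃ A B : Finset V, A.Nonempty ∧ B.Nonempty ∧ Disjoint A B ∧ A ∪ B = s ∧
      (NoE r A B ∨ NoE (rc r) A B) := by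
  induction n with
  | zero => intro r _ _ s _ h2; omega
  | succ m ih =>
    intro r hs hP4 s hcard h2
    by_cases hm : 2 ≤ m
    · -- delete a vertex
      have hne : s.Nonempty := Finset.card_pos.mp (by omega)
      obtain ⟨v, hvs⟩ := hne
      have htcard : (s.erase v).card = m := by
        rw [Finset.card_erase_of_mem hvs, hcard]; omega
      obtain ⟨A, B, hA, hB, hAB, hunion, hcases⟩ := ih r hs hP4 (s.erase v) htcard hm
      have hv : v ∉ A ∪ B := by rw [hunion]; exact Finset.notMem_erase v s
      have hins : insert v (A ∪ B) = s := by
        rw [hunion, Finset.insert_erase hvs]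
      rcases hcases with hNE | hNErc
      · obtain ⟨A', B', h1, h2', h3, h4, h5⟩ := step r hs hP4 v A B hA hB hAB hv hNE
        exact ⟨A', B', h1, h2', h3, by rw [h4, hins], h5⟩
      · have hP4c : ¬ HasP4 (rc r) := fun h => hP4 (hasP4_rc hs h)
        obtain ⟨A', B', h1, h2', h3, h4, h5⟩ :=
          step (rc r) (rc_symm hs) hP4c v A B hA hB hAB hv hNErc
        refine ⟨A', B', h1, h2', h3, by rw [h4, hins], ?_⟩
        rcases h5 with h5 | h5
        · exact Or.inr h5
        · refine Or.inl fun a ha b hb hr => ?_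
          have hne : a ≠ b := fun h => (Finset.disjoint_left.mp h3 ha) (h ▸ hb)
          exact h5 a ha b hb ⟨hne, fun h => h.2 hr⟩
    · -- m = 1, s has exactly two elements
      have hm1 : m = 1 := by omega
      have hc2 : s.card = 2 := by omega
      obtain ⟨u, w, huw, hsuw⟩ := Finset.card_eq_two.mp hc2
      refine ⟨{u}, {w}, ⟨u, Finset.mem_singleton_self _⟩, ⟨w, Finset.mem_singleton_self _⟩,
        Finset.disjoint_singleton.mpr huw, hsuw.symm, ?_⟩
      by_cases hr : r u w
      · refine Or.inr fun a ha b hb => ?_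
        rw [Finset.mem_singleton] at ha hb
        subst ha; subst hb
        exact fun h => h.2 hr
      · refine Or.inl fun a ha b hb => ?_
        rw [Finset.mem_singleton] at ha hb
        subst ha; subst hb
        exact hr

theorem main {V : Type} [Fintype V] (G : SimpleGraph V) (h : HasExtensionProperty G 3) :
    HasP4 G.Adj := by
  classical
  by_contra hP4
  obtain ⟨z₀, -, -, -, -⟩ := h ∅ ∅ (Finset.disjoint_empty_left _) (by simp)
  obtain ⟨z₁, -, hz₁, -, -⟩ := h ∅ {z₀} (Finset.disjoint_empty_left _) (by simp)
  have hne : z₁ ≠ z₀ := by simpa using hz₁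
  have hcard : 2 ≤ (Finset.univ : Finset V).card :=
    Finset.one_lt_card.mpr ⟨z₁, Finset.mem_univ _, z₀, Finset.mem_univ _, hne⟩
  obtain ⟨A, B, hA, hB, hAB, hunion, hcases⟩ :=
    split (Finset.univ : Finset V).card G.Adj (fun _ _ h => G.adj_symm h) hP4 Finset.univ rfl hcard
  obtain ⟨a, ha⟩ := hA
  obtain ⟨b, hb⟩ := hB
  have hab : a ≠ b := fun h => (Finset.disjoint_left.mp hAB ha) (h ▸ hb)
  rcases hcases with hNE | hNErc
  · obtain ⟨z, hz1, -, hz3, -⟩ := h {a, b} ∅ (Finset.disjoint_empty_right _)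
      (by rw [Finset.card_insert_of_notMem (by simpa using hab), Finset.card_singleton]; simp)
    have hza : G.Adj z a := hz3 a (by simp)
    have hzb : G.Adj z b := hz3 b (by simp)
    have hzu : z ∈ A ∪ B := by rw [hunion]; exact Finset.mem_univ _
    rcases Finset.mem_union.mp hzu with hzA | hzB
    · exact hNE z hzA b hb hzb
    · exact hNE a ha z hzB (G.adj_symm hza)
  · obtain ⟨z, -, hz2, -, hz4⟩ := h ∅ {a, b} (Finset.disjoint_empty_left _)
      (by rw [Finset.card_insert_of_notMem (by simpa using hab), Finset.card_singleton]; simp)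
    have hza : ¬ G.Adj z a := hz4 a (by simp)
    have hzb : ¬ G.Adj z b := hz4 b (by simp)
    have hzab : z ≠ a ∧ z ≠ b := by simpa using hz2
    have hzu : z ∈ A ∪ B := by rw [hunion]; exact Finset.mem_univ _
    rcases Finset.mem_union.mp hzu with hzA | hzB
    · exact hNErc z hzA b hb ⟨hzab.2, hzb⟩
    · exact hNErc a ha z hzB ⟨fun h => hzab.1 h.symm, fun h => hza (G.adj_symm h)⟩

end ExtAux


set_option maxRecDepth 10000 in
/-- The extension index of `P₄` equals 3: every finite graph with the 3-extension
property contains an induced `P₄`, whereas `C₄` has the 2-extension property and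
contains no induced `P₄`. -/
theorem extension_index_p4_eq_three :
    (∀ (V : Type) [Fintype V] (G : SimpleGraph V),
      HasExtensionProperty G 3 → Nonempty (SimpleGraph.pathGraph 4 ↪g G)) ∧
    HasExtensionProperty (SimpleGraph.cycleGraph 4) 2 ∧
    IsEmpty (SimpleGraph.pathGraph 4 ↪g SimpleGraph.cycleGraph 4) := by
  refine ⟨?_, ?_, ?_⟩
  · intro V _ G hG
    obtain ⟨a, b, c, d, hab, hbc, hcd, hac, had, hbd⟩ := ExtAux.main G hG
    have hba := G.adj_symm hab
    have hcb := G.adj_symm hbc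
    have hdc := G.adj_symm hcd
    have hca : ¬ G.Adj c a := fun h => hac (G.adj_symm h)
    have hda : ¬ G.Adj d a := fun h => had (G.adj_symm h)
    have hdb : ¬ G.Adj d b := fun h => hbd (G.adj_symm h)
    have nab : a ≠ b := G.ne_of_adj hab
    have nbc : b ≠ c := G.ne_of_adj hbc
    have ncd : c ≠ d := G.ne_of_adj hcd
    have nac : a ≠ c := fun h => had (h ▸ hcd)
    have nad : a ≠ d := fun h => hac (G.adj_symm (h ▸ hcd))
    have nbd : b ≠ d := fun h => had (h ▸ hab)
    refine ⟨⟨⟨![a, b, c, d], ?_⟩, ?_⟩⟩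
    · intro i j hij
      fin_cases i <;> fin_cases j <;>
        simp_all [Matrix.cons_val_zero, Matrix.cons_val_one] <;> tauto
    · intro i j
      fin_cases i <;> fin_cases j <;>
        simp [SimpleGraph.pathGraph_adj, G.irrefl, hab, hbc, hcd, hac, had, hbd,
          hba, hcb, hdc, hca, hda, hdb] <;> assumption
  · unfold HasExtensionProperty; decide
  · constructor
    intro f
    have key : ∀ g : Fin 4 → Fin 4, ¬(Function.Injective g ∧
        (SimpleGraph.cycleGraph 4).Adj (g 0) (g 1) ∧ (SimpleGraph.cycleGraph 4).Adj (g 1) (g 2) ∧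
        (SimpleGraph.cycleGraph 4).Adj (g 2) (g 3) ∧ ¬(SimpleGraph.cycleGraph 4).Adj (g 0) (g 2)
        ∧ ¬(SimpleGraph.cycleGraph 4).Adj (g 0) (g 3)
        ∧ ¬(SimpleGraph.cycleGraph 4).Adj (g 1) (g 3)) := by decide
    have hadj : ∀ i j : Fin 4, (SimpleGraph.cycleGraph 4).Adj (f i) (f j) ↔
        (SimpleGraph.pathGraph 4).Adj i j := fun i j => f.map_adj_iff
    refine key f ⟨f.injective, ?_, ?_, ?_, ?_, ?_, ?_⟩ <;>
      rw [hadj] <;> simp [SimpleGraph.pathGraph_adj] <;> decide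
end
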